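/- arXiv:math/0607485 — 13 statements merged into one kernel-verified Lean document; each statement's English description precedes it below -/
import Mathlib

section
/- If (x, z, θ) is a solution of the system (P) on ℝ with x(0) = 0, θ(0) = 0 and z(0) = z₀, then for every s ∈ ℝ one has the first integral z(s)² = z₀² + (2/κ)(1 − cos θ(s)). In particular the function z is bounded. -/
/-- First integral of the system (P):
z(s)² = z₀² + (2/κ)(1 − cos θ(s)) for all s; in particular z is bounded. -/
theorem stmt_1 (κ : ℝ) (hκ : κ ≠ 0) (z₀ : ℝ) (x z θ : ℝ → ℝ)
    (hx : Differentiable ℝ x) (hz : Differentiable ℝ z) (hθ : Differentiable ℝ θ)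
    (hode : ∀ s : ℝ, deriv x s = Real.cos (θ s) ∧ deriv z s = Real.sin (θ s) ∧
      deriv θ s = κ * z s)
    (hx0 : x 0 = 0) (hθ0 : θ 0 = 0) (hz0 : z 0 = z₀) :
    (∀ s : ℝ, (z s) ^ 2 = z₀ ^ 2 + (2 / κ) * (1 - Real.cos (θ s))) ∧
    (∃ M : ℝ, ∀ s : ℝ, |z s| ≤ M) := by
  set F : ℝ → ℝ := fun s => (z s) ^ 2 + (2 / κ) * Real.cos (θ s) with hF
  have hFd : ∀ s, HasDerivAt F 0 s := by
    intro s
    have hzd := (hz s).hasDerivAt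
    have hθd := (hθ s).hasDerivAt
    have h1 : HasDerivAt (fun s => (z s) ^ 2) (2 * z s * deriv z s) s := by
      simpa [mul_comm] using (hzd.fun_pow 2)
    have h2 : HasDerivAt (fun s => Real.cos (θ s)) (-Real.sin (θ s) * deriv θ s) s :=
      (Real.hasDerivAt_cos (θ s)).comp s hθd
    have := h1.fun_add ((h2.const_mul (2 / κ)))
    refine this.congr_deriv ?_
    obtain ⟨_, h2', h3'⟩ := hode s
    rw [h2', h3']
    field_simp
    ring
  have hconst : ∀ s, F s = F 0 := by
    intro s
    have : ∀ t : ℝ, F t = F 0 := fun t => by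
      have := is_const_of_deriv_eq_zero (f := F)
        (fun u => (hFd u).differentiableAt) (fun u => (hFd u).deriv) t 0
      exact this
    exact this s
  have key : ∀ s : ℝ, (z s) ^ 2 = z₀ ^ 2 + (2 / κ) * (1 - Real.cos (θ s)) := by
    intro s
    have h := hconst s
    simp only [hF, hθ0, hz0, Real.cos_zero] at h
    have : (z s) ^ 2 = z₀ ^ 2 + 2 / κ - (2 / κ) * Real.cos (θ s) := by linarith
    rw [this]; ring
  refine ⟨key, Real.sqrt (z₀ ^ 2 + 4 / |κ|), fun s => ?_⟩
  have h1 : (z s) ^ 2 ≤ z₀ ^ 2 + 4 / |κ| := by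
    rw [key s]
    have hc : Real.cos (θ s) ∈ Set.Icc (-1 : ℝ) 1 := ⟨Real.neg_one_le_cos _, Real.cos_le_one _⟩
    have h2 : (2 / κ) * (1 - Real.cos (θ s)) ≤ |2 / κ| * 2 := by
      calc (2 / κ) * (1 - Real.cos (θ s)) ≤ |(2 / κ) * (1 - Real.cos (θ s))| := le_abs_self _
        _ = |2 / κ| * |1 - Real.cos (θ s)| := abs_mul _ _
        _ ≤ |2 / κ| * 2 := by
            apply mul_le_mul_of_nonneg_left _ (abs_nonneg _)
            rw [abs_le]; constructor <;> linarith [hc.1, hc.2]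
    have : |2 / κ| * 2 = 4 / |κ| := by rw [abs_div]; simp [abs_of_nonneg]; ring
    linarith
  calc |z s| = Real.sqrt ((z s) ^ 2) := (Real.sqrt_sq_eq_abs _).symm
    _ ≤ Real.sqrt (z₀ ^ 2 + 4 / |κ|) := Real.sqrt_le_sqrt h1
end

section
/- (Symmetry I) Let (x, z, θ) be a solution of the system (P) on ℝ and suppose θ(s₀) = m·π for some s₀ ∈ ℝ and some integer m (i.e. s₀ is an extremum of the height z). Then for every s ∈ ℝ: x(s₀ + s) = 2 x(s₀) − x(s₀ − s), z(s₀ + s) = z(s₀ − s), and θ(s₀ + s) = 2mπ − θ(s₀ − s). In other words, the directrix curve α = (x, z) is symmetric with respect to the vertical line x = x(s₀). -/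
/-- Symmetry I: if θ(s₀) = mπ for some integer m, then the directrix
α = (x, z) is symmetric with respect to the vertical line x = x(s₀). -/
theorem stmt_2 (κ : ℝ) (hκ : κ ≠ 0) (z₀ : ℝ) (x z θ : ℝ → ℝ)
    (hx : Differentiable ℝ x) (hz : Differentiable ℝ z) (hθ : Differentiable ℝ θ)
    (hode : ∀ s : ℝ, deriv x s = Real.cos (θ s) ∧ deriv z s = Real.sin (θ s) ∧
      deriv θ s = κ * z s)
    (hx0 : x 0 = 0) (hθ0 : θ 0 = 0) (hz0 : z 0 = z₀)
    (s₀ : ℝ) (m : ℤ) (hs₀ : θ s₀ = (m : ℝ) * Real.pi) :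
    ∀ s : ℝ,
      x (s₀ + s) = 2 * x s₀ - x (s₀ - s) ∧
      z (s₀ + s) = z (s₀ - s) ∧
      θ (s₀ + s) = 2 * (m : ℝ) * Real.pi - θ (s₀ - s) := by
  -- derivative facts
  have hz' : ∀ t, HasDerivAt z (Real.sin (θ t)) t := fun t => by
    have := (hz t).hasDerivAt; rwa [(hode t).2.1] at this
  have hθ' : ∀ t, HasDerivAt θ (κ * z t) t := fun t => by
    have := (hθ t).hasDerivAt; rwa [(hode t).2.2] at this
  have hx' : ∀ t, HasDerivAt x (Real.cos (θ t)) t := fun t => by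
    have := (hx t).hasDerivAt; rwa [(hode t).1] at this
  -- the vector field
  set v : ℝ → ℝ × ℝ → ℝ × ℝ := fun _ p => (Real.sin p.2, κ * p.1) with hv_def
  have hv : ∀ t, LipschitzWith (max 1 (‖κ‖₊ * 1)) (v t) := by
    intro t
    have hsinlip : LipschitzWith 1 Real.sin := by
      apply lipschitzWith_of_nnnorm_deriv_le Real.differentiable_sin
      intro t
      rw [Real.deriv_sin, ← NNReal.coe_le_coe, coe_nnnorm, Real.norm_eq_abs]
      simpa using Real.abs_cos_le_one t
    have h1 : LipschitzWith 1 (fun p : ℝ × ℝ => Real.sin p.2) := by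
      simpa [Function.comp_def] using hsinlip.comp (LipschitzWith.prod_snd (α := ℝ) (β := ℝ))
    have h2 : LipschitzWith (‖κ‖₊ * 1) (fun p : ℝ × ℝ => κ * p.1) := by
      have := (lipschitzWith_smul (β := ℝ) κ).comp
        (LipschitzWith.prod_fst (α := ℝ) (β := ℝ))
      simpa [Function.comp_def, smul_eq_mul] using this
    exact h1.prodMk h2
  -- the two solutions
  set f : ℝ → ℝ × ℝ := fun s => (z (s₀ + s), θ (s₀ + s)) with hf_def
  set g : ℝ → ℝ × ℝ := fun s => (z (s₀ - s), 2 * (m : ℝ) * Real.pi - θ (s₀ - s)) with hg_def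
  have hadd : ∀ s : ℝ, HasDerivAt (fun t : ℝ => s₀ + t) 1 s := fun s =>
    (hasDerivAt_id s).const_add s₀
  have hsub : ∀ s : ℝ, HasDerivAt (fun t : ℝ => s₀ - t) (-1) s := fun s => by
    simpa using (hasDerivAt_id s).const_sub s₀
  have hf' : ∀ s : ℝ, HasDerivAt f (v s (f s)) s := by
    intro s
    have h1 : HasDerivAt (fun t => z (s₀ + t)) (Real.sin (θ (s₀ + s)) * 1) s :=
      (hz' (s₀ + s)).comp s (hadd s)
    have h2 : HasDerivAt (fun t => θ (s₀ + t)) (κ * z (s₀ + s) * 1) s :=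
      (hθ' (s₀ + s)).comp s (hadd s)
    simpa [hf_def, hv_def] using h1.prodMk h2
  have hsin2 : ∀ a : ℝ, Real.sin (2 * (m : ℝ) * Real.pi - a) = -Real.sin a := by
    intro a
    have e0 : 2 * (m : ℝ) * Real.pi = ((2 * m : ℤ) : ℝ) * Real.pi := by push_cast; ring
    have e1 : 2 * (m : ℝ) * Real.pi = (m : ℝ) * (2 * Real.pi) := by ring
    have h0 : Real.sin (2 * (m : ℝ) * Real.pi) = 0 := by
      rw [e0, Real.sin_int_mul_pi]
    have h1 : Real.cos (2 * (m : ℝ) * Real.pi) = 1 := by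
      rw [e1, Real.cos_int_mul_two_pi]
    rw [Real.sin_sub, h0, h1]; ring
  have hcos2 : ∀ a : ℝ, Real.cos (2 * (m : ℝ) * Real.pi - a) = Real.cos a := by
    intro a
    have e0 : 2 * (m : ℝ) * Real.pi = ((2 * m : ℤ) : ℝ) * Real.pi := by push_cast; ring
    have e1 : 2 * (m : ℝ) * Real.pi = (m : ℝ) * (2 * Real.pi) := by ring
    have h0 : Real.sin (2 * (m : ℝ) * Real.pi) = 0 := by
      rw [e0, Real.sin_int_mul_pi]
    have h1 : Real.cos (2 * (m : ℝ) * Real.pi) = 1 := by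
      rw [e1, Real.cos_int_mul_two_pi]
    rw [Real.cos_sub, h0, h1]; ring
  have hg' : ∀ s : ℝ, HasDerivAt g (v s (g s)) s := by
    intro s
    have h1 : HasDerivAt (fun t => z (s₀ - t)) (Real.sin (θ (s₀ - s)) * (-1)) s :=
      (hz' (s₀ - s)).comp s (hsub s)
    have h2 : HasDerivAt (fun t => 2 * (m : ℝ) * Real.pi - θ (s₀ - t))
        (-(κ * z (s₀ - s) * (-1))) s :=
      ((hθ' (s₀ - s)).comp s (hsub s)).const_sub _
    have := h1.prodMk h2
    simp only [hg_def, hv_def]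
    convert this using 2
    · rw [hsin2]; ring
    · ring
  -- initial condition match at s = 0
  have heq0 : f 0 = g 0 := by
    simp only [hf_def, hg_def, add_zero, sub_zero, hs₀]
    norm_num
    ring
  -- uniqueness gives f = g on all of ℝ
  have key : ∀ s : ℝ, f s = g s := by
    intro s
    rcases le_total 0 s with h | h
    · have := ODE_solution_unique (f := f) (g := g) (a := 0) (b := s) hv
        (fun t _ => (hf' t).continuousAt.continuousWithinAt)
        (fun t _ => (hf' t).hasDerivWithinAt)
        (fun t _ => (hg' t).continuousAt.continuousWithinAt)
        (fun t _ => (hg' t).hasDerivWithinAt) heq0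
      exact this ⟨h, le_rfl⟩
    · have heq0' : f s = g s → f s = g s := id
      have := ODE_solution_unique_of_mem_Icc_left
        (fun t _ => (hv t).lipschitzOnWith (s := Set.univ))
        (f := f) (g := g) (a := s) (b := 0)
        (fun t _ => (hf' t).continuousAt.continuousWithinAt)
        (fun t _ => (hf' t).hasDerivWithinAt)
        (fun t _ => trivial)
        (fun t _ => (hg' t).continuousAt.continuousWithinAt)
        (fun t _ => (hg' t).hasDerivWithinAt)
        (fun t _ => trivial) heq0
      exact this ⟨le_rfl, h⟩
  have hzeq : ∀ s : ℝ, z (s₀ + s) = z (s₀ - s) := fun s =>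
    congrArg Prod.fst (key s)
  have hθeq : ∀ s : ℝ, θ (s₀ + s) = 2 * (m : ℝ) * Real.pi - θ (s₀ - s) := fun s =>
    congrArg Prod.snd (key s)
  -- now the x equation
  have hxsum : ∀ s : ℝ, x (s₀ + s) + x (s₀ - s) = 2 * x s₀ := by
    have hdiff : Differentiable ℝ (fun s => x (s₀ + s) + x (s₀ - s)) := by
      intro s
      exact (((hx' (s₀ + s)).comp s (hadd s)).add
        ((hx' (s₀ - s)).comp s (hsub s))).differentiableAt
    have hderiv : ∀ s : ℝ, deriv (fun s => x (s₀ + s) + x (s₀ - s)) s = 0 := by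
      intro s
      have ha : HasDerivAt (fun t => x (s₀ + t)) (Real.cos (θ (s₀ + s)) * 1) s := by
        simpa [Function.comp_def] using (hx' (s₀ + s)).comp s (hadd s)
      have hb : HasDerivAt (fun t => x (s₀ - t)) (Real.cos (θ (s₀ - s)) * (-1)) s := by
        simpa [Function.comp_def] using (hx' (s₀ - s)).comp s (hsub s)
      rw [HasDerivAt.deriv (f := fun t => x (s₀ + t) + x (s₀ - t)) (ha.add hb), hθeq s, hcos2]
      ring
    intro s
    have := is_const_of_deriv_eq_zero hdiff hderiv s 0
    simpa using this.trans (by ring_nf)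
  intro s
  refine ⟨by have := hxsum s; linarith, hzeq s, hθeq s⟩
end

section
/- (Symmetry II) Let (x, z, θ) be a solution of the system (P) on ℝ and suppose z(s₀) = 0 for some s₀ ∈ ℝ. Then for every s ∈ ℝ: x(s₀ + s) = 2 x(s₀) − x(s₀ − s), z(s₀ + s) = − z(s₀ − s), and θ(s₀ + s) = θ(s₀ − s). In other words, the directrix curve α = (x, z) is symmetric with respect to the point α(s₀) on the x-axis. -/
open Set

/-- Symmetry II: if z(s₀) = 0, then the directrix α = (x, z)
is symmetric with respect to the point α(s₀) on the x-axis. -/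
theorem stmt_3 (κ : ℝ) (hκ : κ ≠ 0) (z₀ : ℝ) (x z θ : ℝ → ℝ)
    (hx : Differentiable ℝ x) (hz : Differentiable ℝ z) (hθ : Differentiable ℝ θ)
    (hode : ∀ s : ℝ, deriv x s = Real.cos (θ s) ∧ deriv z s = Real.sin (θ s) ∧
      deriv θ s = κ * z s)
    (hx0 : x 0 = 0) (hθ0 : θ 0 = 0) (hz0 : z 0 = z₀)
    (s₀ : ℝ) (hs₀ : z s₀ = 0) :
    ∀ s : ℝ,
      x (s₀ + s) = 2 * x s₀ - x (s₀ - s) ∧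
      z (s₀ + s) = - z (s₀ - s) ∧
      θ (s₀ + s) = θ (s₀ - s) := by
  -- derivative facts
  have hz' : ∀ s, HasDerivAt z (Real.sin (θ s)) s := fun s => by
    have := (hz s).hasDerivAt
    rwa [(hode s).2.1] at this
  have hθ' : ∀ s, HasDerivAt θ (κ * z s) s := fun s => by
    have := (hθ s).hasDerivAt
    rwa [(hode s).2.2] at this
  have hx' : ∀ s, HasDerivAt x (Real.cos (θ s)) s := fun s => by
    have := (hx s).hasDerivAt
    rwa [(hode s).1] at this
  -- the vector field
  set v : ℝ → ℝ × ℝ → ℝ × ℝ := fun _ p => (Real.sin p.2, κ * p.1) with hv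
  have hlip : ∀ t : ℝ, LipschitzWith (1 + ‖κ‖₊) (v t) := by
    intro t
    have hsin : LipschitzWith 1 Real.sin := by
      apply lipschitzWith_of_nnnorm_deriv_le Real.differentiable_sin
      intro t
      rw [Real.deriv_sin]
      simp only [← NNReal.coe_le_coe, coe_nnnorm, Real.norm_eq_abs, NNReal.coe_one]
      exact Real.abs_cos_le_one t
    have h1 : LipschitzWith 1 (fun p : ℝ × ℝ => Real.sin p.2) := by
      simpa [Function.comp_def] using hsin.comp (LipschitzWith.prod_snd : LipschitzWith 1 (Prod.snd : ℝ × ℝ → ℝ))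
    have h2 : LipschitzWith ‖κ‖₊ (fun p : ℝ × ℝ => κ * p.1) := by
      apply LipschitzWith.of_dist_le_mul
      intro p q
      simp only [Real.dist_eq, ← mul_sub, abs_mul, coe_nnnorm, Real.norm_eq_abs]
      exact mul_le_mul_of_nonneg_left (le_max_left _ _ |>.trans_eq (Prod.dist_eq (x := p) (y := q)).symm) (abs_nonneg κ)
    have := h1.prodMk h2
    exact this.weaken (by
      refine max_le ?_ ?_
      · exact le_add_of_nonneg_right zero_le
      · exact le_add_of_nonneg_left zero_le)
  -- the two solutions
  set f : ℝ → ℝ × ℝ := fun s => (z (s₀ + s), θ (s₀ + s)) with hf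
  set g : ℝ → ℝ × ℝ := fun s => (-z (s₀ - s), θ (s₀ - s)) with hg
  have hf' : ∀ t : ℝ, HasDerivAt f (v t (f t)) t := by
    intro t
    have h1 : HasDerivAt (fun s => z (s₀ + s)) (Real.sin (θ (s₀ + t))) t := by
      simpa [Function.comp_def] using (hz' (s₀ + t)).comp t ((hasDerivAt_id t).const_add s₀)
    have h2 : HasDerivAt (fun s => θ (s₀ + s)) (κ * z (s₀ + t)) t := by
      simpa [Function.comp_def] using (hθ' (s₀ + t)).comp t ((hasDerivAt_id t).const_add s₀)
    exact h1.prodMk h2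
  have hg' : ∀ t : ℝ, HasDerivAt g (v t (g t)) t := by
    intro t
    have hid : HasDerivAt (fun s : ℝ => s₀ - s) (-1) t := by
      exact ((hasDerivAt_id t).const_sub s₀)
    have h1 : HasDerivAt (fun s => -z (s₀ - s)) (Real.sin (θ (s₀ - t))) t := by
      have := ((hz' (s₀ - t)).comp t hid).neg
      rw [show -(Real.sin (θ (s₀ - t)) * -1) = Real.sin (θ (s₀ - t)) by ring] at this
      exact this
    have h2 : HasDerivAt (fun s => θ (s₀ - s)) (κ * -z (s₀ - t)) t := by
      have := (hθ' (s₀ - t)).comp t hid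
      simpa [mul_comm, Function.comp_def] using this
    exact h1.prodMk h2
  have h0 : f 0 = g 0 := by simp [hf, hg, hs₀]
  -- equality for nonnegative s
  have key : ∀ s : ℝ, 0 ≤ s → f s = g s := by
    intro s hs
    have := ODE_solution_unique hlip
      (fun t _ => (hf' t).continuousAt.continuousWithinAt)
      (fun t _ => (hf' t).hasDerivWithinAt)
      (fun t _ => (hg' t).continuousAt.continuousWithinAt)
      (fun t _ => (hg' t).hasDerivWithinAt)
      h0 (a := 0) (b := s)
    exact this ⟨hs, le_rfl⟩
  have keyall : ∀ s : ℝ, f s = g s := by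
    intro s
    rcases le_or_gt 0 s with h | h
    · exact key s h
    · have := key (-s) (by linarith)
      have h1 := congrArg Prod.fst this
      have h2 := congrArg Prod.snd this
      simp only [hf, hg] at h1 h2 ⊢
      have e1 : s₀ + -s = s₀ - s := by ring
      have e2 : s₀ - -s = s₀ + s := by ring
      rw [e1, e2] at h1 h2
      rw [Prod.mk.injEq]
      exact ⟨by linarith, h2.symm⟩
  have hzeq : ∀ s : ℝ, z (s₀ + s) = -z (s₀ - s) := fun s => congrArg Prod.fst (keyall s)
  have hθeq : ∀ s : ℝ, θ (s₀ + s) = θ (s₀ - s) := fun s => congrArg Prod.snd (keyall s)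
  -- the x part
  have hxeq : ∀ s : ℝ, x (s₀ + s) + x (s₀ - s) = 2 * x s₀ := by
    have hconst : ∀ s : ℝ, x (s₀ + s) + x (s₀ - s) = x (s₀ + 0) + x (s₀ - 0) := by
      intro s
      have hder : ∀ t : ℝ, HasDerivAt (fun u => x (s₀ + u) + x (s₀ - u)) 0 t := by
        intro t
        have h1 : HasDerivAt (fun u => x (s₀ + u)) (Real.cos (θ (s₀ + t))) t := by
          simpa [Function.comp_def] using (hx' (s₀ + t)).comp t ((hasDerivAt_id t).const_add s₀)
        have h2 : HasDerivAt (fun u => x (s₀ - u)) (-Real.cos (θ (s₀ - t))) t := by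
          have hid : HasDerivAt (fun u : ℝ => s₀ - u) (-1) t := by
            exact ((hasDerivAt_id t).const_sub s₀)
          simpa [Function.comp_def] using (hx' (s₀ - t)).comp t hid
        have := h1.add h2
        rw [hθeq t, add_neg_cancel] at this; exact this
      have hdiff : Differentiable ℝ (fun u => x (s₀ + u) + x (s₀ - u)) :=
        fun t => (hder t).differentiableAt
      exact is_const_of_deriv_eq_zero hdiff (fun t => (hder t).deriv) s 0
    intro s
    have := hconst s
    simp only [add_zero, sub_zero] at this
    linarith
  intro s
  exact ⟨by linarith [hxeq s], hzeq s, hθeq s⟩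
end

section
/- (Sessile case) Let κ > 0 and let (x, z, θ) be the solution of the system (P) on ℝ with x(0) = 0, θ(0) = 0 and z(0) = z₀ > 0. Then there exists T > 0 with θ(T) = 2π such that for every s ∈ ℝ: x(s + T) = x(s) + x(T), z(s + T) = z(s), and θ(s + T) = θ(s) + 2π. In particular z is a periodic function and the surface is invariant under the group of translations by integer multiples of the horizontal vector (x(T), 0, 0). -/
open Set

/-- Sessile case: for κ > 0 and z₀ > 0 there exists T > 0 with
θ(T) = 2π such that the solution is invariant under the horizontal translation by
(x(T), 0): x(s+T) = x(s) + x(T), z(s+T) = z(s), θ(s+T) = θ(s) + 2π. -/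
theorem stmt_4 (κ : ℝ) (hκ : 0 < κ) (z₀ : ℝ) (hz₀ : 0 < z₀) (x z θ : ℝ → ℝ)
    (hx : Differentiable ℝ x) (hz : Differentiable ℝ z) (hθ : Differentiable ℝ θ)
    (hode : ∀ s : ℝ, deriv x s = Real.cos (θ s) ∧ deriv z s = Real.sin (θ s) ∧
      deriv θ s = κ * z s)
    (hx0 : x 0 = 0) (hθ0 : θ 0 = 0) (hz0 : z 0 = z₀) :
    ∃ T : ℝ, 0 < T ∧ θ T = 2 * Real.pi ∧
      ∀ s : ℝ,
        x (s + T) = x s + x T ∧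
        z (s + T) = z s ∧
        θ (s + T) = θ s + 2 * Real.pi := by
  -- derivative facts as HasDerivAt
  have hxD : ∀ s, HasDerivAt x (Real.cos (θ s)) s := fun s => by
    have := (hx s).hasDerivAt; rwa [(hode s).1] at this
  have hzD : ∀ s, HasDerivAt z (Real.sin (θ s)) s := fun s => by
    have := (hz s).hasDerivAt; rwa [(hode s).2.1] at this
  have hθD : ∀ s, HasDerivAt θ (κ * z s) s := fun s => by
    have := (hθ s).hasDerivAt; rwa [(hode s).2.2] at this
  -- energy conservation: κ z² + 2 cos θ is constant
  have hF : ∀ s, HasDerivAt (fun s => κ * (z s)^2 + 2 * Real.cos (θ s)) 0 s := by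
    intro s
    have h1 : HasDerivAt (fun s => κ * (z s)^2)
        (κ * (2 * z s * Real.sin (θ s))) s :=
      (((hzD s).pow 2).const_mul κ).congr_deriv (by ring)
    have h2 : HasDerivAt (fun s => 2 * Real.cos (θ s))
        (2 * (-Real.sin (θ s) * (κ * z s))) s :=
      ((Real.hasDerivAt_cos (θ s)).comp s (hθD s)).const_mul 2
    exact (h1.add h2).congr_deriv (by ring)
  have energy : ∀ s, κ * (z s)^2 + 2 * Real.cos (θ s) = κ * z₀^2 + 2 := by
    intro s
    have hconst := is_const_of_deriv_eq_zero
      (f := fun s => κ * (z s)^2 + 2 * Real.cos (θ s))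
      (fun t => (hF t).differentiableAt) (fun t => (hF t).deriv) s 0
    simp only [hz0, hθ0, Real.cos_zero] at hconst
    linarith
  -- z is everywhere nonzero, hence positive
  have hzne : ∀ s, z s ≠ 0 := by
    intro s hzero
    have he := energy s
    rw [hzero] at he
    have hc : Real.cos (θ s) ≤ 1 := Real.cos_le_one _
    nlinarith [mul_pos hκ (pow_pos hz₀ 2)]
  have hzpos : ∀ s, 0 < z s := by
    intro s
    by_contra hle
    push_neg at hle
    have hlt : z s < 0 := lt_of_le_of_ne hle (hzne s)
    have hmem : (0:ℝ) ∈ z '' uIcc 0 s := by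
      apply intermediate_value_uIcc hz.continuous.continuousOn
      rw [mem_uIcc]; right
      exact ⟨hlt.le, by rw [hz0]; linarith⟩
    obtain ⟨c, _, hc⟩ := hmem
    exact hzne c hc
  -- z ≥ z₀ everywhere
  have hzge : ∀ s, z₀ ≤ z s := by
    intro s
    have he := energy s
    have hc : Real.cos (θ s) ≤ 1 := Real.cos_le_one _
    by_contra hcon
    push_neg at hcon
    have h1 : 0 < (z₀ - z s) * (z₀ + z s) :=
      mul_pos (by linarith) (by nlinarith [hzpos s])
    nlinarith
  -- θ grows at least linearly
  have hθgrow : ∀ a b : ℝ, a ≤ b → θ a + κ * z₀ * (b - a) ≤ θ b := by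
    intro a b hab
    have hmono : MonotoneOn (fun s => θ s - κ * z₀ * s) (Icc a b) := by
      apply monotoneOn_of_deriv_nonneg (convex_Icc a b)
      · exact (hθ.sub (differentiable_id.const_mul (κ * z₀))).continuous.continuousOn
      · exact (hθ.sub (differentiable_id.const_mul (κ * z₀))).differentiableOn
      · intro t _
        have hd : HasDerivAt (fun s => θ s - κ * z₀ * s) (κ * z t - κ * z₀) t :=
          ((hθD t).sub (((hasDerivAt_id t).const_mul (κ * z₀)).congr_deriv (by ring)))
        rw [hd.deriv]
        nlinarith [hzge t]
    have := hmono (left_mem_Icc.mpr hab) (right_mem_Icc.mpr hab) hab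
    simp only at this
    nlinarith
  -- find T with θ T = 2π
  have hκz : 0 < κ * z₀ := mul_pos hκ hz₀
  set S : ℝ := (2 * Real.pi + 1) / (κ * z₀) with hS
  have hSpos : 0 < S := div_pos (by positivity) hκz
  have hθS : 2 * Real.pi < θ S := by
    have hgrow := hθgrow 0 S hSpos.le
    have hval : κ * z₀ * (S - 0) = 2 * Real.pi + 1 := by
      rw [hS]; field_simp; ring
    rw [hθ0, hval] at hgrow
    linarith
  obtain ⟨T, hTmem, hTval⟩ : ∃ T ∈ Icc (0:ℝ) S, θ T = 2 * Real.pi := by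
    have hmem : (2 * Real.pi) ∈ θ '' Icc 0 S := by
      apply intermediate_value_Icc hSpos.le hθ.continuous.continuousOn
      exact ⟨by rw [hθ0]; positivity, hθS.le⟩
    obtain ⟨T, hT1, hT2⟩ := hmem
    exact ⟨T, hT1, hT2⟩
  have hTpos : 0 < T := by
    rcases lt_or_eq_of_le hTmem.1 with h | h
    · exact h
    · exfalso; rw [← h, hθ0] at hTval; nlinarith [Real.pi_pos]
  -- z T = z₀
  have hzT : z T = z₀ := by
    have he := energy T
    rw [hTval, Real.cos_two_pi] at he
    have hsq : (z T - z₀) * (z T + z₀) = 0 := by nlinarith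
    rcases mul_eq_zero.mp hsq with h | h
    · linarith
    · nlinarith [hzpos T]
  refine ⟨T, hTpos, hTval, ?_⟩
  -- uniqueness of ODE solutions: compare (z(·+T), θ(·+T)-2π) with (z, θ)
  set v : ℝ → ℝ × ℝ → ℝ × ℝ := fun _ p => (Real.sin p.2, κ * p.1) with hv
  set K : NNReal := 1 + κ.toNNReal with hK
  have hlip : ∀ t : ℝ, LipschitzWith K (v t) := by
    intro t
    have hsin : LipschitzWith 1 Real.sin := by
      apply lipschitzWith_of_nnnorm_deriv_le Real.differentiable_sin
      intro y
      rw [Real.deriv_sin]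
      have h1 : ‖Real.cos y‖ ≤ (1:ℝ) := by
        rw [Real.norm_eq_abs]; exact Real.abs_cos_le_one y
      exact_mod_cast h1
    have h1 : LipschitzWith 1 (fun p : ℝ × ℝ => Real.sin p.2) := by
      simpa [Function.comp_def] using hsin.comp (LipschitzWith.prod_snd : LipschitzWith 1 (Prod.snd : ℝ × ℝ → ℝ))
    have h2 : LipschitzWith κ.toNNReal (fun p : ℝ × ℝ => κ * p.1) := by
      have hmul : LipschitzWith κ.toNNReal (fun y : ℝ => κ * y) := by
        apply LipschitzWith.of_dist_le_mul
        intro a b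
        simp only [Real.dist_eq]
        rw [← mul_sub, abs_mul, abs_of_pos hκ, Real.coe_toNNReal _ hκ.le]
      simpa [Function.comp_def] using hmul.comp (LipschitzWith.prod_fst : LipschitzWith 1 (Prod.fst : ℝ × ℝ → ℝ))
    apply (h1.prodMk h2).weaken
    rw [hK]
    exact max_le (le_add_of_nonneg_right zero_le) (le_add_of_nonneg_left zero_le)
  set f : ℝ → ℝ × ℝ := fun s => (z (s + T), θ (s + T) - 2 * Real.pi) with hf
  set g : ℝ → ℝ × ℝ := fun s => (z s, θ s) with hg
  have hshift : ∀ t : ℝ, HasDerivAt (fun s : ℝ => s + T) 1 t := fun t => by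
    simpa using (hasDerivAt_id t).add_const T
  have hfD : ∀ t : ℝ, HasDerivAt f (v t (f t)) t := by
    intro t
    have hz' : HasDerivAt (fun s => z (s + T)) (Real.sin (θ (t + T))) t := by
      have := (hzD (t + T)).comp t (hshift t)
      simpa [Function.comp_def] using this
    have hθ' : HasDerivAt (fun s => θ (s + T) - 2 * Real.pi) (κ * z (t + T)) t := by
      have := ((hθD (t + T)).comp t (hshift t)).sub_const (2 * Real.pi)
      simpa using this
    have hval : v t (f t) = (Real.sin (θ (t + T)), κ * z (t + T)) := by
      simp only [hv, hf, Real.sin_sub_two_pi]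
    rw [hval]
    exact hz'.prodMk hθ'
  have hgD : ∀ t : ℝ, HasDerivAt g (v t (g t)) t := by
    intro t
    exact (hzD t).prodMk (hθD t)
  have heq0 : f 0 = g 0 := by
    simp only [hf, hg, zero_add, hzT, hz0, hθ0, hTval]
    norm_num
  have hunique : ∀ s : ℝ, f s = g s := by
    intro s
    have hs : s ∈ Icc (-(|s| + 1)) (|s| + 1) :=
      ⟨by nlinarith [abs_nonneg s, neg_abs_le s], by nlinarith [le_abs_self s]⟩
    have h0 : (0:ℝ) ∈ Ioo (-(|s| + 1)) (|s| + 1) :=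
      ⟨by nlinarith [abs_nonneg s], by nlinarith [abs_nonneg s]⟩
    exact ODE_solution_unique_of_mem_Icc (s := fun _ => univ)
      (fun t _ => (hlip t).lipschitzOnWith) h0
      (fun t _ => (hfD t).continuousAt.continuousWithinAt)
      (fun t _ => hfD t) (fun _ _ => trivial)
      (fun t _ => (hgD t).continuousAt.continuousWithinAt)
      (fun t _ => hgD t) (fun _ _ => trivial) heq0 hs
  have hzper : ∀ s : ℝ, z (s + T) = z s := fun s => congrArg Prod.fst (hunique s)
  have hθper : ∀ s : ℝ, θ (s + T) = θ s + 2 * Real.pi := by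
    intro s
    have := congrArg Prod.snd (hunique s)
    simp only [hf, hg] at this
    linarith
  -- x part
  have hxper : ∀ s : ℝ, x (s + T) = x s + x T := by
    have hu : ∀ t : ℝ, HasDerivAt (fun s => x (s + T) - x s) 0 t := by
      intro t
      have h1 : HasDerivAt (fun s => x (s + T)) (Real.cos (θ (t + T))) t := by
        have := (hxD (t + T)).comp t (hshift t)
        simpa [Function.comp_def] using this
      have := h1.sub (hxD t)
      rw [hθper t, Real.cos_add_two_pi] at this
      rw [sub_self (Real.cos (θ t))] at this; exact this
    intro s
    have hconst := is_const_of_deriv_eq_zero (f := fun s => x (s + T) - x s)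
      (fun t => (hu t).differentiableAt) (fun t => (hu t).deriv) s 0
    simp only [zero_add, hx0, sub_zero] at hconst
    linarith
  exact fun s => ⟨hxper s, hzper s, hθper s⟩
end

section
/- Let κ > 0 and let (x, z, θ) be the solution of the system (P) on ℝ with x(0) = 0, θ(0) = 0 and z(0) = z₀ > 0. Then the height function z satisfies z₀ ≤ z(s) ≤ √(4/κ + z₀²) for all s ∈ ℝ, and both bounds are achieved, i.e. there exist s₁, s₂ ∈ ℝ with z(s₁) = z₀ and z(s₂) = √(4/κ + z₀²). -/
/-- for κ > 0 and z₀ > 0, the height satisfies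
z₀ ≤ z(s) ≤ √(4/κ + z₀²) for all s, and both bounds are achieved. -/
theorem stmt_5 (κ : ℝ) (hκ : 0 < κ) (z₀ : ℝ) (hz₀ : 0 < z₀) (x z θ : ℝ → ℝ)
    (hx : Differentiable ℝ x) (hz : Differentiable ℝ z) (hθ : Differentiable ℝ θ)
    (hode : ∀ s : ℝ, deriv x s = Real.cos (θ s) ∧ deriv z s = Real.sin (θ s) ∧
      deriv θ s = κ * z s)
    (hx0 : x 0 = 0) (hθ0 : θ 0 = 0) (hz0 : z 0 = z₀) :
    (∀ s : ℝ, z₀ ≤ z s ∧ z s ≤ Real.sqrt (4 / κ + z₀ ^ 2)) ∧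
    (∃ s₁ : ℝ, z s₁ = z₀) ∧
    (∃ s₂ : ℝ, z s₂ = Real.sqrt (4 / κ + z₀ ^ 2)) := by
  set E : ℝ → ℝ := fun s => Real.cos (θ s) + κ / 2 * z s ^ 2 with hE
  have hEd : ∀ s : ℝ, HasDerivAt E 0 s := by
    intro s
    have h1 : HasDerivAt (fun t => Real.cos (θ t)) (-Real.sin (θ s) * deriv θ s) s :=
      (Real.hasDerivAt_cos (θ s)).comp s (hθ s).hasDerivAt
    have h2 : HasDerivAt (fun t => κ / 2 * z t ^ 2)
        (κ / 2 * ((2 : ℕ) * z s ^ 1 * deriv z s)) s :=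
      ((hz s).hasDerivAt.pow 2).const_mul (κ / 2)
    have := h1.add h2
    have key : -Real.sin (θ s) * deriv θ s + κ / 2 * ((2 : ℕ) * z s ^ 1 * deriv z s) = 0 := by
      obtain ⟨_, hz', hθ'⟩ := hode s
      rw [hz', hθ']; push_cast; ring
    rwa [key] at this
  have hEconst : ∀ s : ℝ, E s = 1 + κ / 2 * z₀ ^ 2 := by
    intro s
    have := is_const_of_deriv_eq_zero (f := E) (fun t => (hEd t).differentiableAt)
      (fun t => (hEd t).deriv) s 0
    rw [this]
    simp [hE, hθ0, hz0]
  have hsq_lb : ∀ s : ℝ, z₀ ^ 2 ≤ z s ^ 2 := by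
    intro s
    have h := hEconst s
    simp only [hE] at h
    have hc : Real.cos (θ s) ≤ 1 := Real.cos_le_one _
    nlinarith [hκ]
  have hsq_ub : ∀ s : ℝ, z s ^ 2 ≤ 4 / κ + z₀ ^ 2 := by
    intro s
    have h := hEconst s
    simp only [hE] at h
    have hc : -1 ≤ Real.cos (θ s) := Real.neg_one_le_cos _
    have h4 : 4 / κ * κ = 4 := div_mul_cancel₀ 4 hκ.ne'
    nlinarith [hκ, mul_pos hκ hκ]
  -- z is positive everywhere
  have hzpos : ∀ s : ℝ, 0 < z s := by
    intro s
    by_contra hle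
    push_neg at hle
    have hcont : Continuous z := hz.continuous
    -- z 0 = z₀ > 0, z s ≤ 0, so some t with z t = 0
    have : ∃ t, z t = 0 := by
      rcases le_total s 0 with hs | hs
      · have := intermediate_value_Icc hs hcont.continuousOn
        have hmem : (0:ℝ) ∈ Set.Icc (z s) (z 0) := ⟨hle, by rw [hz0]; exact hz₀.le⟩
        obtain ⟨t, _, ht⟩ := this hmem
        exact ⟨t, ht⟩
      · have := intermediate_value_Icc' hs hcont.continuousOn
        have hmem : (0:ℝ) ∈ Set.Icc (z s) (z 0) := ⟨hle, by rw [hz0]; exact hz₀.le⟩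
        obtain ⟨t, _, ht⟩ := this hmem
        exact ⟨t, ht⟩
    obtain ⟨t, ht⟩ := this
    have := hsq_lb t
    rw [ht] at this
    nlinarith
  have hbounds : ∀ s : ℝ, z₀ ≤ z s ∧ z s ≤ Real.sqrt (4 / κ + z₀ ^ 2) := by
    intro s
    constructor
    · nlinarith [hsq_lb s, hzpos s]
    · rw [show z s = Real.sqrt (z s ^ 2) by
        rw [Real.sqrt_sq (hzpos s).le]]
      exact Real.sqrt_le_sqrt (hsq_ub s)
  refine ⟨hbounds, ⟨0, hz0⟩, ?_⟩
  -- θ is increasing with θ' ≥ κ z₀ > 0; find s with θ s = π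
  have hg : ∀ a b : ℝ, a ≤ b → θ a + κ * z₀ * (b - a) ≤ θ b := by
    intro a b hab
    set g : ℝ → ℝ := fun t => θ t - κ * z₀ * t with hgdef
    have hgd : Differentiable ℝ g := hθ.sub ((differentiable_const _).mul differentiable_id)
    have hmono : Monotone g := by
      apply monotone_of_deriv_nonneg hgd
      intro t
      have h2 : HasDerivAt (fun t : ℝ => κ * z₀ * t) (κ * z₀) t := by
        simpa using (hasDerivAt_id t).const_mul (κ * z₀)
      have hdg : HasDerivAt g (deriv θ t - κ * z₀) t := (hθ t).hasDerivAt.sub h2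
      rw [hdg.deriv, (hode t).2.2]
      have := (hbounds t).1
      nlinarith
    have := hmono hab
    simp only [hgdef] at this
    linarith
  obtain ⟨s₂, hs₂mem, hs₂⟩ : ∃ s₂ ∈ Set.Icc (0:ℝ) ((Real.pi + 1) / (κ * z₀)), θ s₂ = Real.pi := by
    have hkz : 0 < κ * z₀ := mul_pos hκ hz₀
    have hT : (0:ℝ) ≤ (Real.pi + 1) / (κ * z₀) := by positivity
    have hθT : Real.pi ≤ θ ((Real.pi + 1) / (κ * z₀)) := by
      have := hg 0 ((Real.pi + 1) / (κ * z₀)) hT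
      rw [hθ0] at this
      have : κ * z₀ * ((Real.pi + 1) / (κ * z₀)) = Real.pi + 1 := by
        field_simp
      linarith [hg 0 ((Real.pi + 1) / (κ * z₀)) hT, this, hθ0]
    have hmem : Real.pi ∈ Set.Icc (θ 0) (θ ((Real.pi + 1) / (κ * z₀))) := by
      rw [hθ0]; exact ⟨Real.pi_pos.le, hθT⟩
    exact intermediate_value_Icc hT hθ.continuous.continuousOn hmem
  refine ⟨s₂, ?_⟩
  have hE2 := hEconst s₂
  simp only [hE, hs₂, Real.cos_pi] at hE2
  have hzsq : z s₂ ^ 2 = 4 / κ + z₀ ^ 2 := by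
    field_simp at hE2 ⊢
    nlinarith [hκ]
  rw [← hzsq, Real.sqrt_sq (hzpos s₂).le]
end

section
/- (Pendent case, deep initial height) Let κ < 0 and let (x, z, θ) be the solution of the system (P) on ℝ with x(0) = 0, θ(0) = 0 and z(0) = z₀ < −2/√(−κ). Then z(s) < 0 for all s, the bounds z₀ ≤ z(s) ≤ −√(z₀² + 4/κ) hold and are both achieved, and there exists T > 0 such that for all s ∈ ℝ: x(s + T) = x(s) + x(T), z(s + T) = z(s), and θ(s + T) = θ(s) + 2π. In particular z is periodic and the surface is invariant under a group of horizontal translations. -/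
lemma sin_lip (a b : ℝ) : |Real.sin a - Real.sin b| ≤ |a - b| := by
  rw [Real.sin_sub_sin]
  calc |2 * Real.sin ((a - b) / 2) * Real.cos ((a + b) / 2)|
      = 2 * |Real.sin ((a - b) / 2)| * |Real.cos ((a + b) / 2)| := by
        rw [abs_mul, abs_mul]; norm_num
    _ ≤ 2 * |(a - b) / 2| * 1 := by
        apply mul_le_mul _ (Real.abs_cos_le_one _) (abs_nonneg _) (by positivity)
        have := Real.abs_sin_le_abs (x := (a - b) / 2)
        linarith
    _ = |a - b| := by rw [abs_div]; norm_num; rw [mul_div_cancel₀]; norm_num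

set_option maxHeartbeats 1600000 in
/-- Pendent case, deep initial height: for κ < 0 and
z₀ < −2/√(−κ), one has z < 0 everywhere, the bounds
z₀ ≤ z(s) ≤ −√(z₀² + 4/κ) hold and are achieved, and the solution is
invariant under a horizontal translation: there is T > 0 with
x(s+T) = x(s) + x(T), z(s+T) = z(s), θ(s+T) = θ(s) + 2π. -/
theorem stmt_6 (κ : ℝ) (hκ : κ < 0) (z₀ : ℝ)
    (hz₀ : z₀ < -2 / Real.sqrt (-κ)) (x z θ : ℝ → ℝ)
    (hx : Differentiable ℝ x) (hz : Differentiable ℝ z) (hθ : Differentiable ℝ θ)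
    (hode : ∀ s : ℝ, deriv x s = Real.cos (θ s) ∧ deriv z s = Real.sin (θ s) ∧
      deriv θ s = κ * z s)
    (hx0 : x 0 = 0) (hθ0 : θ 0 = 0) (hz0 : z 0 = z₀) :
    (∀ s : ℝ, z s < 0) ∧
    (∀ s : ℝ, z₀ ≤ z s ∧ z s ≤ -Real.sqrt (z₀ ^ 2 + 4 / κ)) ∧
    (∃ s₁ : ℝ, z s₁ = z₀) ∧
    (∃ s₂ : ℝ, z s₂ = -Real.sqrt (z₀ ^ 2 + 4 / κ)) ∧
    (∃ T : ℝ, 0 < T ∧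
      ∀ s : ℝ,
        x (s + T) = x s + x T ∧
        z (s + T) = z s ∧
        θ (s + T) = θ s + 2 * Real.pi) := by
  have hne : κ ≠ 0 := hκ.ne
  -- derivative facts as HasDerivAt
  have hx' : ∀ s, HasDerivAt x (Real.cos (θ s)) s := fun s => by
    rw [← (hode s).1]; exact (hx s).hasDerivAt
  have hz' : ∀ s, HasDerivAt z (Real.sin (θ s)) s := fun s => by
    rw [← (hode s).2.1]; exact (hz s).hasDerivAt
  have hθ' : ∀ s, HasDerivAt θ (κ * z s) s := fun s => by
    rw [← (hode s).2.2]; exact (hθ s).hasDerivAt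
  -- z₀ is negative and z₀^2 + 4/κ > 0
  have hsκ : 0 < Real.sqrt (-κ) := Real.sqrt_pos.2 (by linarith)
  have hz₀neg : z₀ < 0 := by
    have h2 : -2 / Real.sqrt (-κ) < 0 := div_neg_of_neg_of_pos (by norm_num) hsκ
    linarith
  have hz₀sq : 4 / (-κ) < z₀ ^ 2 := by
    have h1 : 2 / Real.sqrt (-κ) < -z₀ := by
      have : -2 / Real.sqrt (-κ) = -(2 / Real.sqrt (-κ)) := by ring
      rw [this] at hz₀; linarith
    have h2 : (2 / Real.sqrt (-κ)) ^ 2 < (-z₀) ^ 2 :=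
      pow_lt_pow_left₀ h1 (by positivity) (by norm_num)
    have h3 : (2 / Real.sqrt (-κ)) ^ 2 = 4 / (-κ) := by
      rw [div_pow, Real.sq_sqrt (by linarith)]; norm_num
    rw [h3] at h2; nlinarith
  have hmsq_pos : 0 < z₀ ^ 2 + 4 / κ := by
    have h4 : (4 : ℝ) / (-κ) = -(4 / κ) := by rw [div_neg]
    rw [h4] at hz₀sq; linarith
  set m := Real.sqrt (z₀ ^ 2 + 4 / κ) with hm
  have hm2 : m ^ 2 = z₀ ^ 2 + 4 / κ := Real.sq_sqrt hmsq_pos.le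
  have hmpos : 0 < m := Real.sqrt_pos.2 hmsq_pos
  -- energy conservation
  have hF : ∀ s, HasDerivAt (fun s => κ * z s ^ 2 + 2 * Real.cos (θ s))
      (κ * (2 * z s ^ 1 * Real.sin (θ s)) + 2 * (-Real.sin (θ s) * (κ * z s))) s :=
    fun s => (((hz' s).pow 2).const_mul κ).add (((hθ' s).cos).const_mul 2)
  have hcons : ∀ s, κ * z s ^ 2 + 2 * Real.cos (θ s) = κ * z₀ ^ 2 + 2 := by
    have hconst := is_const_of_deriv_eq_zero
      (f := fun s => κ * z s ^ 2 + 2 * Real.cos (θ s))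
      (fun s => (hF s).differentiableAt)
      (fun s => by rw [(hF s).deriv]; ring)
    intro s
    have h := hconst s 0
    simp only [hz0, hθ0, Real.cos_zero] at h
    linarith
  -- squared bounds
  have hsqle : ∀ s, z s ^ 2 ≤ z₀ ^ 2 := by
    intro s
    have h := hcons s
    nlinarith [Real.cos_le_one (θ s)]
  have hsqge : ∀ s, z₀ ^ 2 + 4 / κ ≤ z s ^ 2 := by
    intro s
    have h := hcons s
    have hc := Real.neg_one_le_cos (θ s)
    have h5 : 4 / κ ≤ z s ^ 2 - z₀ ^ 2 := by
      rw [div_le_iff_of_neg hκ]; nlinarith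
    linarith
  -- z never vanishes, hence z < 0 everywhere
  have hzne : ∀ s, z s ≠ 0 := by
    intro s h
    have := hsqge s
    rw [h] at this; nlinarith
  have hzneg : ∀ s, z s < 0 := by
    intro s
    rcases lt_or_gt_of_ne (hzne s) with h | h
    · exact h
    · exfalso
      have hczs : ContinuousOn z (Set.uIcc 0 s) := hz.continuous.continuousOn
      have hmem : (0 : ℝ) ∈ Set.uIcc (z 0) (z s) := by
        rw [Set.mem_uIcc]; left
        constructor
        · rw [hz0]; linarith
        · linarith
      obtain ⟨t, _, ht⟩ := intermediate_value_uIcc hczs hmem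
      exact hzne t ht
  -- pointwise bounds
  have hlow : ∀ s, z₀ ≤ z s := fun s => by nlinarith [hsqle s, hzneg s]
  have hupp : ∀ s, z s ≤ -m := fun s => by nlinarith [hsqge s, hzneg s, hm2]
  -- θ' bounded below by c > 0
  set c := -κ * m with hcdef
  have hcpos : 0 < c := mul_pos (neg_pos.2 hκ) hmpos
  have hθder_ge : ∀ s, c ≤ κ * z s := fun s => by nlinarith [hupp s]
  -- θ grows linearly
  have hθgrow : ∀ S : ℝ, 0 ≤ S → c * S ≤ θ S := by
    intro S hS
    have hmono : Monotone (fun s => θ s - c * s) := by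
      apply monotone_of_deriv_nonneg
      · exact hθ.sub (differentiable_id.const_mul c)
      · intro s
        have hd : HasDerivAt (fun s => θ s - c * s) (κ * z s - c) s :=
          (hθ' s).sub (((hasDerivAt_id s).const_mul c).congr_deriv (by ring))
        rw [hd.deriv]; linarith [hθder_ge s]
    have := hmono hS
    simp only [hθ0] at this
    linarith
  have hπ : 0 < Real.pi := Real.pi_pos
  -- find s₂ with θ s₂ = π and T with θ T = 2π
  have hIVT : ∀ y : ℝ, 0 ≤ y → y ≤ 2 * Real.pi → ∃ t ∈ Set.uIcc 0 (2 * Real.pi / c), θ t = y := by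
    intro y hy1 hy2
    apply intermediate_value_uIcc (hθ.continuous.continuousOn)
    rw [Set.mem_uIcc]; left
    constructor
    · rw [hθ0]; exact hy1
    · have := hθgrow (2 * Real.pi / c) (by positivity)
      rw [mul_div_cancel₀ _ hcpos.ne'] at this
      linarith
  obtain ⟨s₂, hs₂mem, hs₂⟩ := hIVT Real.pi hπ.le (by linarith)
  obtain ⟨T, hTmem, hT⟩ := hIVT (2 * Real.pi) (by linarith) le_rfl
  have hTpos : 0 < T := by
    have hub : 0 ≤ 2 * Real.pi / c := by positivity
    rw [Set.uIcc_of_le hub] at hTmem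
    rcases lt_or_eq_of_le hTmem.1 with h | h
    · exact h
    · exfalso; rw [← h, hθ0] at hT; linarith
  -- z s₂ = -m
  have hzs₂ : z s₂ = -m := by
    have h := hcons s₂
    rw [hs₂, Real.cos_pi] at h
    have hsq : z s₂ ^ 2 = m ^ 2 := by
      rw [hm2]
      have h4 : κ * (4 / κ) = 4 := by field_simp
      apply mul_left_cancel₀ hne
      rw [mul_add, h4]; linarith
    have h0 : (z s₂ - (-m)) * (z s₂ + (-m)) = 0 := by nlinarith [hsq]
    rcases mul_eq_zero.1 h0 with h | h
    · linarith
    · exfalso; have := hzneg s₂; linarith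
  -- z T = z 0
  have hzT : z T = z 0 := by
    have h := hcons T
    rw [hT, Real.cos_two_pi] at h
    have hsq : z T ^ 2 = z₀ ^ 2 := by
      apply mul_left_cancel₀ hne; linarith
    have h0 : (z T - z₀) * (z T + z₀) = 0 := by nlinarith [hsq]
    rw [hz0]
    rcases mul_eq_zero.1 h0 with h | h
    · linarith
    · exfalso; have := hzneg T; linarith
  -- Gronwall: periodicity of (z, θ - linear part)
  have key : ∀ s, z (s + T) = z s ∧ θ (s + T) = θ s + 2 * Real.pi := by
    set u : ℝ → ℝ := fun t => z (t + T) - z t with hu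
    set v : ℝ → ℝ := fun t => θ (t + T) - θ t - 2 * Real.pi with hv
    set E : ℝ → ℝ := fun t => u t ^ 2 + v t ^ 2 with hE
    set C : ℝ := 1 - κ with hC
    set D : ℝ → ℝ := fun t =>
      2 * u t * (Real.sin (θ (t + T)) - Real.sin (θ t)) + 2 * v t * (κ * u t) with hD
    have hCpos : 0 < C := by rw [hC]; linarith
    have hu' : ∀ t, HasDerivAt u (Real.sin (θ (t + T)) - Real.sin (θ t)) t := by
      intro t
      simp only [hu]
      have h1 : HasDerivAt (fun t => z (t + T)) (Real.sin (θ (t + T))) t := by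
        have := (hz' (t + T)).comp t ((hasDerivAt_id t).add_const T)
        simpa [Function.comp_def] using this
      exact h1.sub (hz' t)
    have hv' : ∀ t, HasDerivAt v (κ * u t) t := by
      intro t
      simp only [hv, hu]
      have h1 : HasDerivAt (fun t => θ (t + T)) (κ * z (t + T)) t := by
        have := (hθ' (t + T)).comp t ((hasDerivAt_id t).add_const T)
        simpa [Function.comp_def] using this
      exact ((h1.sub (hθ' t)).sub_const _).congr_deriv (by ring)
    have hE' : ∀ t, HasDerivAt E (D t) t := by
      intro t
      have := (((hu' t).pow 2).add ((hv' t).pow 2))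
      exact this.congr_deriv (by simp only [hD]; push_cast; ring)
    have hsinb : ∀ t, |Real.sin (θ (t + T)) - Real.sin (θ t)| ≤ |v t| := by
      intro t
      have h := sin_lip (θ (t + T)) (θ t + 2 * Real.pi)
      rw [Real.sin_add_two_pi] at h
      have h2 : θ (t + T) - (θ t + 2 * Real.pi) = v t := by simp only [hv]; ring
      rwa [h2] at h
    have hprod1 : ∀ t, |u t * (Real.sin (θ (t + T)) - Real.sin (θ t))| ≤ |u t| * |v t| := by
      intro t
      rw [abs_mul]
      exact mul_le_mul_of_nonneg_left (hsinb t) (abs_nonneg _)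
    have hDle : ∀ t, D t ≤ C * E t := by
      intro t
      have h1 := (abs_le.1 (hprod1 t)).2
      have h2 : v t * (κ * u t) ≤ |v t| * (-κ * |u t|) := by
        have := le_abs_self (v t * (κ * u t))
        rw [abs_mul, abs_mul, abs_of_neg hκ] at this
        linarith
      have h3 : 0 ≤ C * (|u t| - |v t|) ^ 2 := mul_nonneg hCpos.le (sq_nonneg _)
      simp only [hD, hE, hC] at *
      nlinarith [sq_abs (u t), sq_abs (v t), abs_nonneg (u t), abs_nonneg (v t)]
    have hDge : ∀ t, -(C * E t) ≤ D t := by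
      intro t
      have h1 := (abs_le.1 (hprod1 t)).1
      have h2 : -(|v t| * (-κ * |u t|)) ≤ v t * (κ * u t) := by
        have := neg_abs_le (v t * (κ * u t))
        rw [abs_mul, abs_mul, abs_of_neg hκ] at this
        linarith
      have h3 : 0 ≤ C * (|u t| - |v t|) ^ 2 := mul_nonneg hCpos.le (sq_nonneg _)
      simp only [hD, hE, hC] at *
      nlinarith [sq_abs (u t), sq_abs (v t), abs_nonneg (u t), abs_nonneg (v t)]
    have hEnonneg : ∀ t, 0 ≤ E t := by
      intro t; simp only [hE]; positivity
    have hE0 : E 0 = 0 := by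
      simp only [hE, hu, hv, zero_add, hzT, hT, hθ0]
      ring
    have hEzero : ∀ s, E s = 0 := by
      intro s
      rcases le_total 0 s with hs | hs
      · have hG' : ∀ t, HasDerivAt (fun t => E t * Real.exp (-(C * t)))
            (D t * Real.exp (-(C * t)) + E t * (Real.exp (-(C * t)) * (-C))) t := by
          intro t
          have h1 : HasDerivAt (fun t : ℝ => -(C * t)) (-C) t :=
            (((hasDerivAt_id t).const_mul C).neg).congr_deriv (by ring)
          exact (hE' t).mul h1.exp
        have hanti : Antitone (fun t => E t * Real.exp (-(C * t))) := by
          apply antitone_of_deriv_nonpos (fun t => (hG' t).differentiableAt)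
          intro t
          rw [(hG' t).deriv]
          have h2 : (0:ℝ) < Real.exp (-(C * t)) := Real.exp_pos _
          nlinarith [hDle t, mul_nonpos_of_nonpos_of_nonneg
            (by linarith [hDle t] : D t - C * E t ≤ 0) h2.le]
        have h := hanti hs
        simp only [mul_zero, neg_zero, Real.exp_zero, mul_one, hE0] at h
        exact le_antisymm (by nlinarith [Real.exp_pos (-(C * s))]) (hEnonneg s)
      · have hG' : ∀ t, HasDerivAt (fun t => E t * Real.exp (C * t))
            (D t * Real.exp (C * t) + E t * (Real.exp (C * t) * C)) t := by
          intro t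
          have h1 : HasDerivAt (fun t : ℝ => C * t) C t :=
            ((hasDerivAt_id t).const_mul C).congr_deriv (by ring)
          exact (hE' t).mul h1.exp
        have hmono : Monotone (fun t => E t * Real.exp (C * t)) := by
          apply monotone_of_deriv_nonneg (fun t => (hG' t).differentiableAt)
          intro t
          rw [(hG' t).deriv]
          have h2 : (0:ℝ) < Real.exp (C * t) := Real.exp_pos _
          nlinarith [hDge t, mul_nonneg
            (by linarith [hDge t] : 0 ≤ D t + C * E t) h2.le]
        have h := hmono hs
        simp only [mul_zero, Real.exp_zero, mul_one, hE0] at h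
        exact le_antisymm (by nlinarith [Real.exp_pos (C * s)]) (hEnonneg s)
    intro s
    have h := hEzero s
    simp only [hE] at h
    have hu0 : u s = 0 := by
      have h1 : u s ^ 2 = 0 := by nlinarith [sq_nonneg (u s), sq_nonneg (v s)]
      exact pow_eq_zero_iff (two_ne_zero) |>.1 h1
    have hv0 : v s = 0 := by
      have h1 : v s ^ 2 = 0 := by nlinarith [sq_nonneg (u s), sq_nonneg (v s)]
      exact pow_eq_zero_iff (two_ne_zero) |>.1 h1
    simp only [hu] at hu0
    simp only [hv] at hv0
    constructor <;> linarith
  refine ⟨hzneg, fun s => ⟨hlow s, hupp s⟩, ⟨0, hz0⟩, ⟨s₂, hzs₂⟩, T, hTpos, fun s => ?_⟩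
  refine ⟨?_, (key s).1, (key s).2⟩
  -- x part
  have hxder : ∀ s, HasDerivAt (fun s => x (s + T) - x s - x T)
      (Real.cos (θ (s + T)) - Real.cos (θ s)) s := by
    intro s
    have h1 : HasDerivAt (fun s => x (s + T)) (Real.cos (θ (s + T))) s := by
      have := (hx' (s + T)).comp s ((hasDerivAt_id s).add_const T)
      simpa [Function.comp_def] using this
    exact (h1.sub (hx' s)).sub_const (x T)
  have hconst := is_const_of_deriv_eq_zero (f := fun s => x (s + T) - x s - x T)
    (fun s => (hxder s).differentiableAt)
    (fun s => by rw [(hxder s).deriv, (key s).2, Real.cos_add_two_pi, sub_self])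
  have h := hconst s 0
  simp only [zero_add, hx0, sub_zero] at h
  linarith
end

section
/- (Pendent case, critical initial height) Let κ < 0 and let (x, z, θ) be the solution of the system (P) on ℝ with x(0) = 0, θ(0) = 0 and z(0) = z₀ = −2/√(−κ). Then z₀ ≤ z(s) < 0 for all s ∈ ℝ, the function z is strictly increasing on [0, ∞), and lim_{s→∞} z(s) = 0. -/
open Real Set Filter

/-- Pendent case, critical initial height: for κ < 0 and
z₀ = −2/√(−κ), one has z₀ ≤ z(s) < 0 for all s, z is strictly increasing
on [0, ∞), and z(s) → 0 as s → ∞. -/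
theorem stmt_7 (κ : ℝ) (hκ : κ < 0) (z₀ : ℝ)
    (hz₀ : z₀ = -2 / Real.sqrt (-κ)) (x z θ : ℝ → ℝ)
    (hx : Differentiable ℝ x) (hz : Differentiable ℝ z) (hθ : Differentiable ℝ θ)
    (hode : ∀ s : ℝ, deriv x s = Real.cos (θ s) ∧ deriv z s = Real.sin (θ s) ∧
      deriv θ s = κ * z s)
    (hx0 : x 0 = 0) (hθ0 : θ 0 = 0) (hz0 : z 0 = z₀) :
    (∀ s : ℝ, z₀ ≤ z s ∧ z s < 0) ∧
    StrictMonoOn z (Set.Ici (0 : ℝ)) ∧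
    Filter.Tendsto z Filter.atTop (nhds 0) := by
  have hc : (0:ℝ) < -κ := by linarith
  set r := Real.sqrt (-κ) with hrdef
  have hrpos : 0 < r := Real.sqrt_pos.mpr hc
  have hr2 : r ^ 2 = -κ := Real.sq_sqrt hc.le
  have hκr : κ = -(r ^ 2) := by linarith
  have hz₀neg : z₀ < 0 := by
    rw [hz₀]; exact div_neg_of_neg_of_pos (by norm_num) hrpos
  -- auxiliary facts about tanh / cosh
  have habs : ∀ t : ℝ, |Real.tanh t| < 1 := fun t => by
    rw [Real.tanh_eq_sinh_div_cosh, abs_div, abs_of_pos (Real.cosh_pos t),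
      div_lt_one (Real.cosh_pos t)]
    nlinarith [Real.sinh_sq t, Real.cosh_pos t, sq_abs (Real.sinh t), abs_nonneg (Real.sinh t)]
  have hkey : ∀ t : ℝ, 1 - Real.tanh t ^ 2 = (Real.cosh t ^ 2)⁻¹ := fun t => by
    have h := Real.cosh_sq_sub_sinh_sq t
    have hp := Real.cosh_pos t
    rw [Real.tanh_eq_sinh_div_cosh, div_pow]
    field_simp
    linarith
  have htanh' : ∀ t : ℝ, HasDerivAt Real.tanh ((Real.cosh t ^ 2)⁻¹) t := fun t => by
    have h := (Real.hasDerivAt_sinh t).div (Real.hasDerivAt_cosh t) (Real.cosh_pos t).ne'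
    rw [show Real.tanh = fun x => Real.sinh x / Real.cosh x from
      funext Real.tanh_eq_sinh_div_cosh]
    refine h.congr_deriv (Eq.symm ?_)
    have h2 := Real.cosh_sq_sub_sinh_sq t
    have hp := (Real.cosh_pos t).ne'
    field_simp
    nlinarith
  set Z : ℝ → ℝ := fun s => z₀ * (Real.cosh (r * s))⁻¹ with hZdef
  set Θ : ℝ → ℝ := fun s => 2 * Real.arcsin (Real.tanh (r * s)) with hΘdef
  have hmul : ∀ s : ℝ, HasDerivAt (fun t : ℝ => r * t) r s := fun s => by
    simpa using (hasDerivAt_id s).const_mul r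
  have hsqrt : ∀ s : ℝ, Real.sqrt (1 - Real.tanh (r * s) ^ 2) = (Real.cosh (r * s))⁻¹ :=
    fun s => by
      rw [hkey, Real.sqrt_inv, Real.sqrt_sq (Real.cosh_pos _).le]
  have hZ' : ∀ s : ℝ, HasDerivAt Z (Real.sin (Θ s)) s := fun s => by
    have h1 : HasDerivAt (fun t : ℝ => Real.cosh (r * t)) (Real.sinh (r * s) * r) s :=
      (Real.hasDerivAt_cosh (r * s)).comp s (hmul s)
    have h2 := (h1.inv (Real.cosh_pos (r * s)).ne').const_mul z₀
    refine h2.congr_deriv (Eq.symm ?_)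
    simp only [hΘdef]
    have hu := habs (r * s); rw [abs_lt] at hu
    rw [Real.sin_two_mul, Real.sin_arcsin hu.1.le hu.2.le, Real.cos_arcsin, hsqrt s,
      hz₀, Real.tanh_eq_sinh_div_cosh]
    have hcp := (Real.cosh_pos (r * s)).ne'
    have hrne := hrpos.ne'
    field_simp
  have hΘ' : ∀ s : ℝ, HasDerivAt Θ (κ * Z s) s := fun s => by
    have hu := habs (r * s); rw [abs_lt] at hu
    have h1 : HasDerivAt (fun t : ℝ => Real.tanh (r * t)) ((Real.cosh (r * s) ^ 2)⁻¹ * r) s :=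
      (htanh' (r * s)).comp s (hmul s)
    have h2 := ((Real.hasDerivAt_arcsin hu.1.ne' hu.2.ne).comp s h1).const_mul 2
    refine h2.congr_deriv (Eq.symm ?_)
    rw [hsqrt s]
    simp only [hZdef]
    rw [hκr, hz₀]
    have hcp := (Real.cosh_pos (r * s)).ne'
    have hrne := hrpos.ne'
    field_simp
  -- Lipschitz vector field
  have hsinlip : LipschitzWith 1 Real.sin := by
    apply lipschitzWith_of_nnnorm_deriv_le Real.differentiable_sin
    intro t
    have h : ‖deriv Real.sin t‖ ≤ (1:ℝ) := by
      rw [Real.deriv_sin, Real.norm_eq_abs]; exact Real.abs_cos_le_one t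
    exact_mod_cast h
  have hmullip : LipschitzWith ‖κ‖₊ (fun a : ℝ => κ * a) := by
    apply LipschitzWith.of_dist_le_mul
    intro a b
    rw [Real.dist_eq, Real.dist_eq, ← mul_sub, abs_mul, coe_nnnorm, Real.norm_eq_abs]
  have hlipv : ∀ t : ℝ, LipschitzWith (max (1*1) (‖κ‖₊*1))
      (fun p : ℝ × ℝ => (Real.sin p.2, κ * p.1)) := fun t =>
    (hsinlip.comp LipschitzWith.prod_snd).prodMk (hmullip.comp LipschitzWith.prod_fst)
  -- uniqueness: identify (z, θ) with (Z, Θ)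
  have heq : ∀ s : ℝ, z s = Z s ∧ θ s = Θ s := by
    intro s
    have h0 : (fun t : ℝ => (z t, θ t)) 0 = (fun t : ℝ => (Z t, Θ t)) 0 := by
      simp [hz0, hθ0, hZdef, hΘdef]
    have habs0 : (0:ℝ) ∈ Ioo (-(|s|+1)) (|s|+1) := by
      constructor <;> [nlinarith [abs_nonneg s]; nlinarith [abs_nonneg s]]
    have habss : s ∈ Ioo (-(|s|+1)) (|s|+1) := by
      constructor <;> [nlinarith [neg_abs_le s]; nlinarith [le_abs_self s]]
    have huniq := ODE_solution_unique_of_mem_Ioo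
      (v := fun _ (p : ℝ × ℝ) => (Real.sin p.2, κ * p.1))
      (s := fun _ => (Set.univ : Set (ℝ × ℝ))) (K := max (1*1) (‖κ‖₊*1))
      (fun t _ => (hlipv t).lipschitzOnWith)
      (t₀ := 0) (a := -(|s|+1)) (b := |s|+1) habs0
      (f := fun t => (z t, θ t)) (g := fun t => (Z t, Θ t))
      (fun t _ => by
        refine ⟨?_, trivial⟩
        have h1 : HasDerivAt z (Real.sin (θ t)) t := (hode t).2.1 ▸ (hz t).hasDerivAt
        have h2 : HasDerivAt θ (κ * z t) t := (hode t).2.2 ▸ (hθ t).hasDerivAt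
        exact h1.prodMk h2)
      (fun t _ => ⟨(hZ' t).prodMk (hΘ' t), trivial⟩)
      h0
    have := huniq habss
    simpa [Prod.ext_iff] using this
  have hzZ : ∀ s : ℝ, z s = Z s := fun s => (heq s).1
  refine ⟨?_, ?_, ?_⟩
  · intro s
    rw [hzZ s]
    simp only [hZdef]
    have h1 := Real.one_le_cosh (r * s)
    have hp := Real.cosh_pos (r * s)
    have hinvpos : 0 < (Real.cosh (r * s))⁻¹ := inv_pos.mpr hp
    have hinvle : (Real.cosh (r * s))⁻¹ ≤ 1 := by
      rw [inv_le_one_iff₀]; right; exact h1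
    constructor
    · nlinarith
    · exact mul_neg_of_neg_of_pos hz₀neg hinvpos
  · intro a ha b hb hab
    rw [hzZ a, hzZ b]
    simp only [hZdef]
    have ha' : (0:ℝ) ≤ a := ha
    have hb' : (0:ℝ) ≤ b := hb
    have hcc : Real.cosh (r * a) < Real.cosh (r * b) := by
      rw [Real.cosh_lt_cosh, abs_of_nonneg (by positivity), abs_of_nonneg (by positivity)]
      exact mul_lt_mul_of_pos_left hab hrpos
    have hpa := Real.cosh_pos (r * a)
    have hpb := Real.cosh_pos (r * b)
    have hinv : (Real.cosh (r * b))⁻¹ < (Real.cosh (r * a))⁻¹ := by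
      exact inv_strictAnti₀ hpa hcc
    nlinarith
  · have hzfun : z = Z := funext hzZ
    rw [hzfun]
    simp only [hZdef]
    have h1 : Tendsto (fun s : ℝ => r * s) atTop atTop :=
      Tendsto.const_mul_atTop hrpos tendsto_id
    have h2 : Tendsto Real.cosh atTop atTop := by
      apply tendsto_atTop_mono (fun t => ?_)
        (Real.tendsto_exp_atTop.atTop_div_const (by norm_num : (0:ℝ) < 2))
      rw [Real.cosh_eq]
      have := Real.exp_pos (-t)
      linarith
    have h3 := (h2.comp h1).inv_tendsto_atTop
    have h4 := h3.const_mul z₀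
    simpa [Function.comp] using h4
end

section
/- (Pendent case, shallow initial height) Let κ < 0 and let (x, z, θ) be the solution of the system (P) on ℝ with x(0) = 0, θ(0) = 0 and z(0) = z₀ satisfying −2/√(−κ) < z₀ < 0. Then z vanishes at some point, z₀ ≤ z(s) ≤ −z₀ for all s with both extrema achieved, and the solution is periodic in the sense that there exists T > 0 with x(s + T) = x(s) + x(T), z(s + T) = z(s), and θ(s + T) = θ(s) for all s ∈ ℝ. -/
open Real Set

private lemma sin_lip_s8 : LipschitzWith 1 Real.sin := by
  apply lipschitzWith_of_nnnorm_deriv_le Real.differentiable_sin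
  intro x
  rw [Real.deriv_sin, ← NNReal.coe_le_coe, coe_nnnorm, Real.norm_eq_abs]
  exact Real.abs_cos_le_one x

private lemma mul_lip (κ : ℝ) : LipschitzWith ‖κ‖₊ (fun t : ℝ => κ * t) :=
  LipschitzWith.of_dist_le_mul fun a b => by
    rw [Real.dist_eq, Real.dist_eq, ← mul_sub, abs_mul, coe_nnnorm, Real.norm_eq_abs]

private lemma fwd_unique {V : ℝ × ℝ → ℝ × ℝ} {K : NNReal} (hV : LipschitzWith K V)
    {F G : ℝ → ℝ × ℝ} (hF : ∀ t, HasDerivAt F (V (F t)) t)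
    (hG : ∀ t, HasDerivAt G (V (G t)) t) {a : ℝ} (ha : F a = G a)
    {t : ℝ} (hta : a ≤ t) : F t = G t :=
  ODE_solution_unique (v := fun _ p => V p) (fun _ => hV)
    (fun s _ => (hF s).continuousAt.continuousWithinAt)
    (fun s _ => (hF s).hasDerivWithinAt)
    (fun s _ => (hG s).continuousAt.continuousWithinAt)
    (fun s _ => (hG s).hasDerivWithinAt)
    ha ⟨hta, le_rfl⟩

set_option maxHeartbeats 1600000 in
/-- Pendent case, shallow initial height: for κ < 0 and
−2/√(−κ) < z₀ < 0, the height z vanishes somewhere, z₀ ≤ z(s) ≤ −z₀ with both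
extrema achieved, and the solution is periodic: there is T > 0 with
x(s+T) = x(s) + x(T), z(s+T) = z(s), θ(s+T) = θ(s). -/
theorem stmt_8 (κ : ℝ) (hκ : κ < 0) (z₀ : ℝ)
    (hz₀l : -2 / Real.sqrt (-κ) < z₀) (hz₀u : z₀ < 0) (x z θ : ℝ → ℝ)
    (hx : Differentiable ℝ x) (hz : Differentiable ℝ z) (hθ : Differentiable ℝ θ)
    (hode : ∀ s : ℝ, deriv x s = Real.cos (θ s) ∧ deriv z s = Real.sin (θ s) ∧
      deriv θ s = κ * z s)
    (hx0 : x 0 = 0) (hθ0 : θ 0 = 0) (hz0 : z 0 = z₀) :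
    (∃ s : ℝ, z s = 0) ∧
    (∀ s : ℝ, z₀ ≤ z s ∧ z s ≤ -z₀) ∧
    (∃ s₁ : ℝ, z s₁ = z₀) ∧
    (∃ s₂ : ℝ, z s₂ = -z₀) ∧
    (∃ T : ℝ, 0 < T ∧
      ∀ s : ℝ,
        x (s + T) = x s + x T ∧
        z (s + T) = z s ∧
        θ (s + T) = θ s) := by
  have hμ : (0:ℝ) < -κ := by linarith
  have hzD : ∀ s, HasDerivAt z (Real.sin (θ s)) s := by
    intro s; have h := (hz s).hasDerivAt; rwa [(hode s).2.1] at h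
  have hθD : ∀ s, HasDerivAt θ (κ * z s) s := by
    intro s; have h := (hθ s).hasDerivAt; rwa [(hode s).2.2] at h
  have hxD : ∀ s, HasDerivAt x (Real.cos (θ s)) s := by
    intro s; have h := (hx s).hasDerivAt; rwa [(hode s).1] at h
  obtain ⟨c, hc_def⟩ : ∃ c : ℝ, c = 1 + κ * (z₀ * z₀) / 2 := ⟨_, rfl⟩
  -- conservation law
  have hED : ∀ s, HasDerivAt (fun s => Real.cos (θ s) + κ * (z s * z s) / 2) 0 s := by
    intro s
    have h1 : HasDerivAt (fun s => Real.cos (θ s)) (-Real.sin (θ s) * (κ * z s)) s :=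
      (Real.hasDerivAt_cos (θ s)).comp s (hθD s)
    have h2 : HasDerivAt (fun s => κ * (z s * z s) / 2)
        (κ * (Real.sin (θ s) * z s + z s * Real.sin (θ s)) / 2) s :=
      (((hzD s).mul (hzD s)).const_mul κ).div_const 2
    refine (h1.add h2).congr_deriv ?_
    ring
  have hE : ∀ s, Real.cos (θ s) + κ * (z s * z s) / 2 = c := by
    intro s
    have h0 : Real.cos (θ s) + κ * (z s * z s) / 2 = Real.cos (θ 0) + κ * (z 0 * z 0) / 2 :=
      is_const_of_deriv_eq_zero (fun t => (hED t).differentiableAt)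
        (fun t => (hED t).deriv) s 0
    rw [h0, hθ0, hz0, Real.cos_zero, hc_def]
  -- bounds on z
  have hzsq : ∀ s, z s ^ 2 ≤ z₀ ^ 2 := by
    intro s
    have h1 := hE s
    rw [hc_def] at h1
    have h2 := Real.cos_le_one (θ s)
    nlinarith
  have hbound : ∀ s, z₀ ≤ z s ∧ z s ≤ -z₀ := by
    intro s
    have h := hzsq s
    constructor <;> nlinarith [sq_nonneg (z s - z₀), sq_nonneg (z s + z₀)]
  -- c > -1
  have hsqrt : 0 < Real.sqrt (-κ) := Real.sqrt_pos.2 hμ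
  have hsq : Real.sqrt (-κ) * Real.sqrt (-κ) = -κ := Real.mul_self_sqrt hμ.le
  have h1' : -z₀ * Real.sqrt (-κ) < 2 := by
    rw [neg_div] at hz₀l
    have : -z₀ < 2 / Real.sqrt (-κ) := by linarith
    calc -z₀ * Real.sqrt (-κ) < 2 / Real.sqrt (-κ) * Real.sqrt (-κ) := by
          exact mul_lt_mul_of_pos_right this hsqrt
      _ = 2 := by field_simp
  have h2' : 0 ≤ -z₀ * Real.sqrt (-κ) := mul_nonneg (by linarith) hsqrt.le
  have hcgt : -1 < c := by rw [hc_def]; nlinarith [h1', h2', hsq]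
  have hclt : c < 1 := by
    rw [hc_def]
    have h : 0 < z₀ * z₀ := mul_pos_of_neg_of_neg hz₀u hz₀u
    nlinarith
  have hcos_ge : ∀ s, c ≤ Real.cos (θ s) := by
    intro s
    have h := hE s
    nlinarith [mul_nonneg hμ.le (mul_self_nonneg (z s))]
  have hcosgt : ∀ s, -1 < Real.cos (θ s) := fun s => lt_of_lt_of_le hcgt (hcos_ge s)
  have hθc : Continuous θ := hθ.continuous
  -- θ stays in (-π, π)
  have hθlt : ∀ s, θ s < π := by
    intro s
    by_contra hcon
    push_neg at hcon
    have hmem : π ∈ uIcc (θ 0) (θ s) := by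
      rw [hθ0]
      exact mem_uIcc.2 (Or.inl ⟨Real.pi_pos.le, hcon⟩)
    obtain ⟨t, -, ht⟩ := intermediate_value_uIcc hθc.continuousOn hmem
    have := hcosgt t
    rw [ht, Real.cos_pi] at this
    linarith
  have hθgt : ∀ s, -π < θ s := by
    intro s
    by_contra hcon
    push_neg at hcon
    have hmem : -π ∈ uIcc (θ 0) (θ s) := by
      rw [hθ0]
      exact mem_uIcc.2 (Or.inr ⟨hcon, by linarith [Real.pi_pos]⟩)
    obtain ⟨t, -, ht⟩ := intermediate_value_uIcc hθc.continuousOn hmem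
    have := hcosgt t
    rw [ht, Real.cos_neg, Real.cos_pi] at this
    linarith
  -- z reaches 0 at a positive time
  have hexpos : ∃ S, 0 < S ∧ 0 ≤ z S := by
    by_contra hcon
    push_neg at hcon
    have hmono : StrictMonoOn θ (Ici 0) := by
      apply strictMonoOn_of_deriv_pos (convex_Ici 0) hθc.continuousOn
      intro t ht
      rw [interior_Ici] at ht
      rw [(hode t).2.2]
      exact mul_pos_of_neg_of_neg hκ (hcon t ht)
    have hθ1pos : 0 < θ 1 := by
      have h := hmono (Set.self_mem_Ici (a := (0:ℝ)))
        (show (1:ℝ) ∈ Ici 0 by norm_num) zero_lt_one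
      rwa [hθ0] at h
    obtain ⟨m, hm⟩ : ∃ m : ℝ, m = max |c| |Real.cos (θ 1)| := ⟨_, rfl⟩
    have hm0 : 0 ≤ m := hm ▸ le_trans (abs_nonneg c) (le_max_left _ _)
    have hm1 : m < 1 := by
      rw [hm]
      apply max_lt
      · rw [abs_lt]; exact ⟨hcgt, hclt⟩
      · rw [abs_lt]
        constructor
        · exact hcosgt 1
        · have h := Real.cos_lt_cos_of_nonneg_of_le_pi (le_refl (0:ℝ))
            (hθlt 1).le hθ1pos
          rwa [Real.cos_zero] at h
    obtain ⟨δ, hδ⟩ : ∃ d : ℝ, d = Real.sqrt (1 - m ^ 2) := ⟨_, rfl⟩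
    have hδpos : 0 < δ := hδ ▸ Real.sqrt_pos.2 (by nlinarith)
    have hsin_lb : ∀ s, 1 ≤ s → δ ≤ Real.sin (θ s) := by
      intro s hs
      have hθs_ge : θ 1 ≤ θ s :=
        hmono.monotoneOn (show (1:ℝ) ∈ Ici 0 by norm_num)
          (show s ∈ Ici 0 by simp; linarith) hs
      have h0θ : 0 ≤ θ s := le_trans hθ1pos.le hθs_ge
      have hπ : θ s ≤ π := (hθlt s).le
      have hcos_ub : Real.cos (θ s) ≤ Real.cos (θ 1) :=
        Real.cos_le_cos_of_nonneg_of_le_pi hθ1pos.le hπ hθs_ge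
      have habs : |Real.cos (θ s)| ≤ m := by
        rw [hm, abs_le]
        constructor
        · calc -(max |c| |Real.cos (θ 1)|) ≤ -|c| := neg_le_neg (le_max_left _ _)
            _ ≤ c := neg_abs_le c
            _ ≤ _ := hcos_ge s
        · calc Real.cos (θ s) ≤ Real.cos (θ 1) := hcos_ub
            _ ≤ |Real.cos (θ 1)| := le_abs_self _
            _ ≤ max |c| |Real.cos (θ 1)| := le_max_right _ _
      have hsineq : Real.sin (θ s) = Real.sqrt (1 - Real.cos (θ s) ^ 2) :=
        Real.sin_eq_sqrt_one_sub_cos_sq h0θ hπ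
      rw [hsineq, hδ]
      apply Real.sqrt_le_sqrt
      rw [hm] at habs
      nlinarith [abs_nonneg (Real.cos (θ s)), sq_abs (Real.cos (θ s))]
    obtain ⟨S, hS⟩ : ∃ S : ℝ, S = 1 + (1 - z₀) / δ := ⟨_, rfl⟩
    have hS1 : 1 < S := by
      rw [hS]
      have : 0 < (1 - z₀) / δ := div_pos (by linarith) hδpos
      linarith
    have hwmono : MonotoneOn (fun s => z s - δ * s) (Ici 1) := by
      have hwD : ∀ t, HasDerivAt (fun s => z s - δ * s) (Real.sin (θ t) - δ) t := by
        intro t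
        have h2 : HasDerivAt (fun s : ℝ => δ * s) δ t := by
          simpa using (hasDerivAt_id t).const_mul δ
        exact (hzD t).sub h2
      apply monotoneOn_of_deriv_nonneg (convex_Ici 1)
        (fun t _ => (hwD t).continuousAt.continuousWithinAt)
        (fun t ht => ((hwD t).differentiableAt).differentiableWithinAt)
      intro t ht
      rw [interior_Ici] at ht
      rw [(hwD t).deriv]
      have := hsin_lb t ht.le
      linarith
    have hw := hwmono (Set.self_mem_Ici (a := (1:ℝ)))
      (show S ∈ Ici 1 from hS1.le) hS1.le
    simp only [] at hw
    have hδS : δ * (S - 1) = 1 - z₀ := by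
      rw [hS]
      field_simp
      ring
    have hz1 : z₀ ≤ z 1 := (hbound 1).1
    have hzSpos : 0 < z S := by nlinarith
    exact absurd hzSpos (not_lt.2 (hcon S (by linarith)).le)
  obtain ⟨S, hSpos, hzS⟩ := hexpos
  have hivt : ∃ s₀ ∈ Icc (0:ℝ) S, z s₀ = 0 := by
    have h0 : (0:ℝ) ∈ Icc (z 0) (z S) := by rw [hz0]; exact ⟨hz₀u.le, hzS⟩
    obtain ⟨t, ht, hzt⟩ := intermediate_value_Icc hSpos.le hz.continuous.continuousOn h0
    exact ⟨t, ht, hzt⟩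
  obtain ⟨s₀, hs₀mem, hzs₀⟩ := hivt
  have hs₀pos : 0 < s₀ := by
    rcases eq_or_lt_of_le hs₀mem.1 with h | h
    · exfalso
      rw [← h, hz0] at hzs₀
      linarith
    · exact h
  -- symmetry via ODE uniqueness
  have hVlip : LipschitzWith ((1 * 1) ⊔ (‖κ‖₊ * 1))
      (fun p : ℝ × ℝ => (Real.sin p.2, κ * p.1)) :=
    (sin_lip_s8.comp LipschitzWith.prod_snd).prodMk ((mul_lip κ).comp LipschitzWith.prod_fst)
  have hFode : ∀ t, HasDerivAt (fun s => (z s, θ s)) (Real.sin (θ t), κ * z t) t :=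
    fun t => (hzD t).prodMk (hθD t)
  have hsym1 : ∀ t, 0 ≤ t → z t = z (-t) ∧ θ t = -θ (-t) := by
    intro t ht
    have hGode : ∀ u, HasDerivAt (fun s => (z (-s), -θ (-s)))
        (Real.sin (-θ (-u)), κ * z (-u)) u := by
      intro u
      have h1 : HasDerivAt (fun s : ℝ => z (-s)) (Real.sin (-θ (-u))) u := by
        rw [Real.sin_neg]
        simpa [Function.comp_def] using (hzD (-u)).comp u (hasDerivAt_neg u)
      have h2 : HasDerivAt (fun s : ℝ => -θ (-s)) (κ * z (-u)) u := by
        have h := ((hθD (-u)).comp u (hasDerivAt_neg u)).neg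
        simpa [Function.comp_def, Pi.neg_def] using h
      exact h1.prodMk h2
    have heq : (z t, θ t) = (z (-t), -θ (-t)) :=
      fwd_unique hVlip hFode hGode (a := 0) (by simp [hθ0]) ht
    exact ⟨congrArg Prod.fst heq, congrArg Prod.snd heq⟩
  have hze : ∀ t, z (-t) = z t := by
    intro t
    rcases le_total 0 t with h | h
    · exact ((hsym1 t h).1).symm
    · have h' := (hsym1 (-t) (by linarith)).1
      rw [neg_neg] at h'
      exact h'
  have hθo : ∀ t, θ (-t) = -θ t := by
    intro t
    rcases le_total 0 t with h | h
    · have h' := (hsym1 t h).2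
      linarith
    · have h' := (hsym1 (-t) (by linarith)).2
      rw [neg_neg] at h'
      linarith
  have hsym2 : ∀ t, s₀ ≤ t → z t = -z (2 * s₀ - t) ∧ θ t = θ (2 * s₀ - t) := by
    intro t ht
    have hHode : ∀ u, HasDerivAt (fun s => (-z (2 * s₀ - s), θ (2 * s₀ - s)))
        (Real.sin (θ (2 * s₀ - u)), κ * -z (2 * s₀ - u)) u := by
      intro u
      have hlin : HasDerivAt (fun s : ℝ => 2 * s₀ - s) (-1) u := by
        simpa using (hasDerivAt_id u).const_sub (2 * s₀)
      have h1 : HasDerivAt (fun s : ℝ => -z (2 * s₀ - s)) (Real.sin (θ (2 * s₀ - u))) u := by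
        have h := ((hzD (2 * s₀ - u)).comp u hlin).neg
        simpa [Function.comp_def, Pi.neg_def] using h
      have h2 : HasDerivAt (fun s : ℝ => θ (2 * s₀ - s)) (κ * -z (2 * s₀ - u)) u := by
        have h := (hθD (2 * s₀ - u)).comp u hlin
        refine h.congr_deriv ?_
        ring
      exact h1.prodMk h2
    have heq : (z t, θ t) = (-z (2 * s₀ - t), θ (2 * s₀ - t)) :=
      fwd_unique hVlip hFode hHode (a := s₀)
        (by rw [show 2 * s₀ - s₀ = s₀ by ring]; rw [hzs₀]; norm_num) ht
    exact ⟨congrArg Prod.fst heq, congrArg Prod.snd heq⟩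
  have hzr : ∀ t, z (2 * s₀ - t) = -z t := by
    intro t
    rcases le_total s₀ t with h | h
    · have := (hsym2 t h).1; linarith
    · have h' := (hsym2 (2 * s₀ - t) (by linarith)).1
      rw [show 2 * s₀ - (2 * s₀ - t) = t by ring] at h'
      linarith
  have hθr : ∀ t, θ (2 * s₀ - t) = θ t := by
    intro t
    rcases le_total s₀ t with h | h
    · exact ((hsym2 t h).2).symm
    · have h' := (hsym2 (2 * s₀ - t) (by linarith)).2
      rw [show 2 * s₀ - (2 * s₀ - t) = t by ring] at h'
      exact h'
  have hzshift : ∀ t, z (t + 2 * s₀) = -z t := by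
    intro t
    have h := hzr (-t)
    rw [hze] at h
    rw [show t + 2 * s₀ = 2 * s₀ - -t by ring]
    exact h
  have hθshift : ∀ t, θ (t + 2 * s₀) = -θ t := by
    intro t
    have h := hθr (-t)
    rw [hθo] at h
    rw [show t + 2 * s₀ = 2 * s₀ - -t by ring]
    exact h
  have hzper : ∀ s, z (s + 4 * s₀) = z s := by
    intro s
    have h1 := hzshift (s + 2 * s₀)
    rw [show s + 2 * s₀ + 2 * s₀ = s + 4 * s₀ by ring, hzshift s] at h1
    linarith
  have hθper : ∀ s, θ (s + 4 * s₀) = θ s := by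
    intro s
    have h1 := hθshift (s + 2 * s₀)
    rw [show s + 2 * s₀ + 2 * s₀ = s + 4 * s₀ by ring, hθshift s] at h1
    linarith
  have hxper : ∀ s, x (s + 4 * s₀) = x s + x (4 * s₀) := by
    intro s
    have hD : ∀ u, HasDerivAt (fun s => x (s + 4 * s₀) - x s) 0 u := by
      intro u
      have h1 : HasDerivAt (fun s : ℝ => x (s + 4 * s₀)) (Real.cos (θ (u + 4 * s₀))) u := by
        simpa [Function.comp_def] using (hxD (u + 4 * s₀)).comp u ((hasDerivAt_id u).add_const (4 * s₀))
      have h := h1.sub (hxD u)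
      rw [hθper u, sub_self] at h
      exact h
    have hconst : x (s + 4 * s₀) - x s = x (0 + 4 * s₀) - x 0 :=
      is_const_of_deriv_eq_zero (fun u => (hD u).differentiableAt)
        (fun u => (hD u).deriv) s 0
    rw [zero_add, hx0, sub_zero] at hconst
    linarith
  have h2s₀ : z (2 * s₀) = -z₀ := by
    have h := hzshift 0
    rw [zero_add, hz0] at h
    exact h
  exact ⟨⟨s₀, hzs₀⟩, hbound, ⟨0, hz0⟩, ⟨2 * s₀, h2s₀⟩,
    ⟨4 * s₀, by linarith, fun s => ⟨hxper s, hzper s, hθper s⟩⟩⟩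
end

section
/- Let u be a solution of the capillary equation on [0, a] with u(0) = u₀ > 0, u'(0) = 0, and suppose the contact angle condition sin ψ(a) = cos γ holds for some γ ∈ [0, π/2]. Then the rise height q := u(a) − u(0) is given exactly by q = ((2/κ)(1 − sin γ)) / (u₀ + √(u₀² + (2/κ)(1 − sin γ))), and consequently q < √((2/κ)(1 − sin γ)). -/
set_option maxHeartbeats 1000000 in
/-- exact formula for the rise height q = u(a) − u(0):
q = (2/κ)(1 − sin γ) / (u₀ + √(u₀² + (2/κ)(1 − sin γ))), and
q < √((2/κ)(1 − sin γ)). -/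
theorem stmt_9 (κ a u₀ γ : ℝ) (hκ : 0 < κ) (ha : 0 < a) (u : ℝ → ℝ)
    (hu : Differentiable ℝ u) (hu' : Differentiable ℝ (deriv u))
    (hode : ∀ r ∈ Set.Icc (0 : ℝ) a,
      deriv (deriv u) r = κ * u r * (1 + (deriv u r) ^ 2) ^ ((3 : ℝ) / 2))
    (hu0 : u 0 = u₀) (hu₀pos : 0 < u₀) (hdu0 : deriv u 0 = 0)
    (hγ0 : 0 ≤ γ) (hγ1 : γ ≤ Real.pi / 2)
    (hangle : deriv u a / Real.sqrt (1 + (deriv u a) ^ 2) = Real.cos γ) :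
    u a - u 0 =
      (2 / κ) * (1 - Real.sin γ) /
        (u₀ + Real.sqrt (u₀ ^ 2 + (2 / κ) * (1 - Real.sin γ))) ∧
    u a - u 0 < Real.sqrt ((2 / κ) * (1 - Real.sin γ)) := by
  set v := deriv u with hvdef
  set E : ℝ → ℝ := fun r => κ * u r ^ 2 / 2 + (1 + v r ^ 2) ^ (-(1:ℝ)/2) with hEdef
  have hbase : ∀ r : ℝ, (0:ℝ) < 1 + v r ^ 2 := fun r => by positivity
  -- E has derivative 0 at every point of [0,a]
  have hE0 : ∀ r ∈ Set.Icc (0:ℝ) a, HasDerivAt E 0 r := by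
    intro r hr
    have hdv : HasDerivAt v (κ * u r * (1 + v r ^ 2) ^ ((3:ℝ)/2)) r := by
      have := (hu' r).hasDerivAt
      rwa [hode r hr] at this
    have h2 : HasDerivAt (fun x => 1 + v x ^ 2)
        (2 * v r * (κ * u r * (1 + v r ^ 2) ^ ((3:ℝ)/2))) r := by
      have := (hdv.pow 2).const_add (1:ℝ)
      refine this.congr_deriv (Eq.symm ?_)
      push_cast
      ring
    have h3 : HasDerivAt (fun x => (1 + v x ^ 2) ^ (-(1:ℝ)/2))
        ((2 * v r * (κ * u r * (1 + v r ^ 2) ^ ((3:ℝ)/2))) * (-(1:ℝ)/2)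
          * (1 + v r ^ 2) ^ (-(1:ℝ)/2 - 1)) r :=
      h2.rpow_const (Or.inl (hbase r).ne')
    have h1 : HasDerivAt (fun x => κ * u x ^ 2 / 2) (κ * (2 * u r * v r) / 2) r := by
      have := (((hu r).hasDerivAt.pow 2).const_mul κ).div_const 2
      refine this.congr_deriv (Eq.symm ?_)
      push_cast
      ring
    have hsum := h1.add h3
    refine hsum.congr_deriv (Eq.symm ?_)
    have key : (1 + v r ^ 2) ^ ((3:ℝ)/2) * (1 + v r ^ 2) ^ (-(1:ℝ)/2 - 1) = 1 := by
      rw [← Real.rpow_add (hbase r)]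
      norm_num
    linear_combination (κ * u r * v r) * key
  -- E is constant on [0,a]
  have hEconst : ∀ r ∈ Set.Icc (0:ℝ) a, E r = E 0 :=
    constant_of_has_deriv_right_zero
      (fun r hr => (hE0 r hr).continuousAt.continuousWithinAt)
      (fun r hr => (hE0 r (Set.mem_Icc_of_Ico hr)).hasDerivWithinAt)
  have hEzero : E 0 = κ * u₀ ^ 2 / 2 + 1 := by
    simp only [hEdef, hu0]
    rw [hdu0]
    norm_num
  have hEval : ∀ r ∈ Set.Icc (0:ℝ) a,
      κ * u r ^ 2 / 2 + (1 + v r ^ 2) ^ (-(1:ℝ)/2) = κ * u₀ ^ 2 / 2 + 1 := by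
    intro r hr
    have := hEconst r hr
    rw [hEzero] at this
    exact this
  -- u r ^ 2 ≥ u₀ ^ 2 on [0,a]
  have hsq : ∀ r ∈ Set.Icc (0:ℝ) a, u₀ ^ 2 ≤ u r ^ 2 := by
    intro r hr
    have h1 := hEval r hr
    have h2 : (1 + v r ^ 2) ^ (-(1:ℝ)/2) ≤ 1 :=
      Real.rpow_le_one_of_one_le_of_nonpos (by nlinarith [sq_nonneg (v r)]) (by norm_num)
    nlinarith
  -- u ≥ u₀ on [0,a]
  have hupos : ∀ r ∈ Set.Icc (0:ℝ) a, u₀ ≤ u r := by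
    intro r hr
    by_contra h
    push_neg at h
    have h2 : u r ≤ -u₀ := by nlinarith [hsq r hr]
    have hcont : ContinuousOn u (Set.Icc 0 r) := hu.continuous.continuousOn
    have hmem : (0:ℝ) ∈ Set.Icc (u r) (u 0) := ⟨by linarith, by rw [hu0]; linarith⟩
    obtain ⟨c, hc, hc0⟩ := intermediate_value_Icc' hr.1 hcont hmem
    have hcIcc : c ∈ Set.Icc (0:ℝ) a := ⟨hc.1, hc.2.trans hr.2⟩
    have := hsq c hcIcc
    rw [hc0] at this
    nlinarith
  -- v a > 0
  have hvpos : 0 < v a := by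
    have hmono : StrictMonoOn v (Set.Icc (0:ℝ) a) := by
      apply strictMonoOn_of_deriv_pos (convex_Icc 0 a) (hu'.continuous.continuousOn)
      intro x hx
      rw [interior_Icc] at hx
      have hx' : x ∈ Set.Icc (0:ℝ) a := Set.Ioo_subset_Icc_self hx
      rw [hode x hx']
      have hux : 0 < u x := lt_of_lt_of_le hu₀pos (hupos x hx')
      have := Real.rpow_pos_of_pos (hbase x) ((3:ℝ)/2)
      positivity
    have := hmono (Set.left_mem_Icc.mpr ha.le) (Set.right_mem_Icc.mpr ha.le) ha
    rwa [hdu0] at this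
  -- sin γ = (√(1 + v a ^ 2))⁻¹
  have hγπ : γ ≤ Real.pi := hγ1.trans (by linarith [Real.pi_pos])
  have hsin : Real.sin γ = (Real.sqrt (1 + v a ^ 2))⁻¹ := by
    rw [Real.sin_eq_sqrt_one_sub_cos_sq hγ0 hγπ, ← hangle, div_pow,
      Real.sq_sqrt (hbase a).le]
    have h1 : 1 - v a ^ 2 / (1 + v a ^ 2) = (1 + v a ^ 2)⁻¹ := by
      field_simp
      ring
    rw [h1, Real.sqrt_inv]
  have hsinlt : Real.sin γ < 1 := by
    have h1 : (1:ℝ) < Real.sqrt (1 + v a ^ 2) := by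
      have h2 := Real.sqrt_lt_sqrt zero_le_one (show (1:ℝ) < 1 + v a ^ 2 by nlinarith)
      rwa [Real.sqrt_one] at h2
    rw [hsin]
    exact inv_lt_one_of_one_lt₀ h1
  -- rpow at a equals sin γ
  have hrs : (1 + v a ^ 2) ^ (-(1:ℝ)/2) = Real.sin γ := by
    rw [hsin, Real.sqrt_eq_rpow, ← Real.rpow_neg (hbase a).le]
    norm_num
  set Q := (2/κ) * (1 - Real.sin γ) with hQdef
  have hQpos : 0 < Q := mul_pos (div_pos two_pos hκ) (by linarith)
  have hEq_a := hEval a ⟨ha.le, le_refl a⟩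
  rw [hrs] at hEq_a
  have hua2 : u a ^ 2 = u₀ ^ 2 + Q := by
    rw [hQdef]
    field_simp
    nlinarith [hEq_a]
  have huapos : 0 < u a := lt_of_lt_of_le hu₀pos (hupos a ⟨ha.le, le_refl a⟩)
  have hua : u a = Real.sqrt (u₀ ^ 2 + Q) := by
    rw [← hua2, Real.sqrt_sq huapos.le]
  set S := Real.sqrt (u₀ ^ 2 + Q) with hSdef
  have hS2 : S ^ 2 = u₀ ^ 2 + Q := Real.sq_sqrt (by positivity)
  have hSpos : 0 < S := Real.sqrt_pos.mpr (by positivity)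
  have hSgeQ : Real.sqrt Q ≤ S := Real.sqrt_le_sqrt (by nlinarith [sq_nonneg u₀])
  have hmain : u a - u 0 = Q / (u₀ + S) := by
    rw [hu0, hua, eq_div_iff (by positivity)]
    nlinarith [hS2]
  refine ⟨hmain, ?_⟩
  rw [hmain, show Real.sqrt Q = Q / Real.sqrt Q from Real.div_sqrt.symm]
  exact div_lt_div_of_pos_left hQpos (Real.sqrt_pos.mpr hQpos)
    (by linarith [Real.sqrt_pos.mpr hQpos])
end

section
/- (Comparison with circular arcs) Let u be a solution of the capillary equation on [0, a] with u(0) = u₀ > 0, u'(0) = 0 and contact angle condition sin ψ(a) = cos γ for some γ ∈ [0, π/2). Define the lower circular arc u⁽¹⁾(r) = u₀ + R₁ − √(R₁² − r²) with R₁ = 1/(κ u₀), and u⁽²⁾(r) = u₀ + R₂ − √(R₂² − r²) with R₂ = a/cos γ. Then u⁽¹⁾(r) < u(r) < u⁽²⁾(r) for every r ∈ (0, a]. (Here κ a u₀ < cos γ ≤ 1, so that R₁ > a and both arcs are defined on [0, a].) -/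
lemma aux_sin_hasDerivAt {f : ℝ → ℝ} {f' x : ℝ} (hf : HasDerivAt f f' x) :
    HasDerivAt (fun t => f t / Real.sqrt (1 + f t ^ 2))
      (f' / (1 + f x ^ 2) ^ ((3 : ℝ) / 2)) x := by
  have hq : (0:ℝ) < 1 + f x ^ 2 := by positivity
  set w := Real.sqrt (1 + f x ^ 2) with hw
  have hwpos : 0 < w := Real.sqrt_pos.2 hq
  have hw2 : w ^ 2 = 1 + f x ^ 2 := Real.sq_sqrt hq.le
  have h1 : HasDerivAt (fun t => 1 + f t ^ 2) (2 * f x * f') x := by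
    simpa [mul_comm, mul_assoc] using ((hf.pow 2).const_add 1)
  have h2 : HasDerivAt (fun t => Real.sqrt (1 + f t ^ 2)) (2 * f x * f' / (2 * w)) x :=
    h1.sqrt hq.ne'
  have h3 := hf.div h2 hwpos.ne'
  refine h3.congr_deriv (Eq.symm ?_)
  have hq32 : (1 + f x ^ 2) ^ ((3:ℝ)/2) = (1 + f x ^ 2) * w := by
    rw [show (3:ℝ)/2 = 1 + 1/2 by norm_num, Real.rpow_add hq, Real.rpow_one, hw,
      Real.sqrt_eq_rpow]
  rw [hq32]
  field_simp
  linear_combination (-(f' * f x ^ 2)) * Real.sq_sqrt hq.le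

lemma aux_psi_strictMono : StrictMono (fun x : ℝ => x / Real.sqrt (1 + x ^ 2)) := by
  apply strictMono_of_deriv_pos
  intro x
  have h := aux_sin_hasDerivAt (hasDerivAt_id x)
  simp only [id] at h
  rw [h.deriv]
  positivity

lemma aux_psi_arc {r R : ℝ} (hr : 0 ≤ r) (hR : 0 < R) (hlt : r < R) :
    (r / Real.sqrt (R ^ 2 - r ^ 2)) /
      Real.sqrt (1 + (r / Real.sqrt (R ^ 2 - r ^ 2)) ^ 2) = r / R := by
  have hq : (0:ℝ) < R ^ 2 - r ^ 2 := by nlinarith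
  set w := Real.sqrt (R ^ 2 - r ^ 2) with hw
  have hwpos : 0 < w := Real.sqrt_pos.2 hq
  have hw2 : w ^ 2 = R ^ 2 - r ^ 2 := Real.sq_sqrt hq.le
  have h1 : 1 + (r / w) ^ 2 = (R / w) ^ 2 := by
    field_simp
    linarith [hw2]
  rw [h1, Real.sqrt_sq (by positivity)]
  field_simp

lemma aux_arc_hasDerivAt (c R r : ℝ) (h : 0 < R ^ 2 - r ^ 2) :
    HasDerivAt (fun t => c + R - Real.sqrt (R ^ 2 - t ^ 2))
      (r / Real.sqrt (R ^ 2 - r ^ 2)) r := by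
  have h1 : HasDerivAt (fun t : ℝ => R ^ 2 - t ^ 2) (-(2 * r)) r := by
    simpa using (hasDerivAt_pow 2 r).const_sub (R ^ 2)
  have h2 := (h1.sqrt h.ne').const_sub (c + R)
  refine h2.congr_deriv (Eq.symm ?_)
  have hwpos : 0 < Real.sqrt (R ^ 2 - r ^ 2) := Real.sqrt_pos.2 h
  field_simp

/-- Comparison with circular arcs: with R₁ = 1/(κu₀) and
R₂ = a/cos γ, the circular arcs u⁽¹⁾(r) = u₀ + R₁ − √(R₁² − r²) and
u⁽²⁾(r) = u₀ + R₂ − √(R₂² − r²) satisfy u⁽¹⁾(r) < u(r) < u⁽²⁾(r) on (0, a];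
moreover κ a u₀ < cos γ ≤ 1 (so that both arcs are defined on [0, a]). -/
theorem stmt_11 (κ a u₀ γ : ℝ) (hκ : 0 < κ) (ha : 0 < a) (u : ℝ → ℝ)
    (hu : Differentiable ℝ u) (hu' : Differentiable ℝ (deriv u))
    (hode : ∀ r ∈ Set.Icc (0 : ℝ) a,
      deriv (deriv u) r = κ * u r * (1 + (deriv u r) ^ 2) ^ ((3 : ℝ) / 2))
    (hu0 : u 0 = u₀) (hu₀pos : 0 < u₀) (hdu0 : deriv u 0 = 0)
    (hγ0 : 0 ≤ γ) (hγ1 : γ < Real.pi / 2)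
    (hangle : deriv u a / Real.sqrt (1 + (deriv u a) ^ 2) = Real.cos γ) :
    κ * a * u₀ < Real.cos γ ∧ Real.cos γ ≤ 1 ∧
    ∀ r ∈ Set.Ioc (0 : ℝ) a,
      u₀ + 1 / (κ * u₀) - Real.sqrt ((1 / (κ * u₀)) ^ 2 - r ^ 2) < u r ∧
      u r < u₀ + a / Real.cos γ - Real.sqrt ((a / Real.cos γ) ^ 2 - r ^ 2) := by
  set s : ℝ → ℝ := fun r => deriv u r / Real.sqrt (1 + deriv u r ^ 2) with hs_def
  -- derivative of s
  have hsD : ∀ r, HasDerivAt s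
      (deriv (deriv u) r / (1 + deriv u r ^ 2) ^ ((3 : ℝ) / 2)) r :=
    fun r => aux_sin_hasDerivAt ((hu' r).hasDerivAt)
  have hsOde : ∀ r ∈ Set.Icc (0 : ℝ) a, HasDerivAt s (κ * u r) r := by
    intro r hr
    have h := hsD r
    rw [hode r hr] at h
    have hpos : (0:ℝ) < (1 + deriv u r ^ 2) ^ ((3 : ℝ) / 2) := by positivity
    rwa [mul_div_assoc, div_self hpos.ne', mul_one] at h
  have hsderiv : ∀ r ∈ Set.Icc (0 : ℝ) a, deriv s r = κ * u r :=
    fun r hr => (hsOde r hr).deriv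
  have hscont : Continuous s := by
    have : Differentiable ℝ s := fun r => (hsD r).differentiableAt
    exact this.continuous
  have hs0 : s 0 = 0 := by simp [hs_def, hdu0]
  have hden : ∀ r, (0:ℝ) < Real.sqrt (1 + deriv u r ^ 2) := fun r => by positivity
  -- u is positive on [0,a]
  have hupos : ∀ r ∈ Set.Icc (0 : ℝ) a, 0 < u r := by
    by_contra hcon
    push_neg at hcon
    obtain ⟨r₀, hr₀, hur₀⟩ := hcon
    set B : Set ℝ := {r | r ∈ Set.Icc (0:ℝ) a ∧ u r ≤ 0} with hB
    have hBclosed : IsClosed B := by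
      have : B = Set.Icc (0:ℝ) a ∩ u ⁻¹' Set.Iic 0 := rfl
      rw [this]
      exact isClosed_Icc.inter (isClosed_Iic.preimage hu.continuous)
    have hBne : B.Nonempty := ⟨r₀, hr₀, hur₀⟩
    have hBbd : BddBelow B := ⟨0, fun x hx => hx.1.1⟩
    set c := sInf B with hc_def
    have hcB : c ∈ B := hBclosed.csInf_mem hBne hBbd
    have hc0 : 0 < c := by
      rcases hcB.1.1.lt_or_eq with h | h
      · exact h
      · exfalso
        have h2 : u c ≤ 0 := hcB.2
        rw [← h, hu0] at h2
        linarith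
    have hca : c ≤ a := hcB.1.2
    have hltc : ∀ t ∈ Set.Ico (0:ℝ) c, 0 < u t := by
      intro t ht
      by_contra h
      push_neg at h
      have : t ∈ B := ⟨⟨ht.1, le_trans ht.2.le hca⟩, h⟩
      exact absurd (csInf_le hBbd this) (not_le.2 ht.2)
    -- s monotone on [0,c]
    have hmono_s : MonotoneOn s (Set.Icc 0 c) := by
      apply monotoneOn_of_deriv_nonneg (convex_Icc _ _) hscont.continuousOn
      · exact fun t _ => ((hsD t).differentiableAt).differentiableWithinAt
      · intro t ht
        rw [interior_Icc] at ht
        rw [hsderiv t ⟨ht.1.le, le_trans ht.2.le hca⟩]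
        exact le_of_lt (mul_pos hκ (hltc t ⟨ht.1.le, ht.2⟩))
    have hsnn : ∀ t ∈ Set.Icc (0:ℝ) c, 0 ≤ deriv u t := by
      intro t ht
      have h1 : 0 ≤ s t := by
        have := hmono_s (Set.left_mem_Icc.2 hc0.le) ht ht.1
        rwa [hs0] at this
      by_contra h
      push_neg at h
      have : s t < 0 := div_neg_of_neg_of_pos h (hden t)
      linarith
    have hmono_u : MonotoneOn u (Set.Icc 0 c) := by
      apply monotoneOn_of_deriv_nonneg (convex_Icc _ _) hu.continuous.continuousOn
      · exact fun t _ => (hu t).differentiableWithinAt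
      · intro t ht
        rw [interior_Icc] at ht
        exact hsnn t ⟨ht.1.le, ht.2.le⟩
    have := hmono_u (Set.left_mem_Icc.2 hc0.le) (Set.right_mem_Icc.2 hc0.le) hc0.le
    rw [hu0] at this
    linarith [hcB.2]
  -- strict monotonicity of s on [0,a]
  have hIcc : ∀ {t : ℝ}, t ∈ Set.Ioo (0:ℝ) a → t ∈ Set.Icc (0:ℝ) a :=
    fun ht => ⟨ht.1.le, ht.2.le⟩
  have hmono_sa : StrictMonoOn s (Set.Icc 0 a) := by
    apply strictMonoOn_of_deriv_pos (convex_Icc _ _) hscont.continuousOn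
    intro t ht
    rw [interior_Icc] at ht
    rw [hsderiv t (hIcc ht)]
    exact mul_pos hκ (hupos t (hIcc ht))
  have hspos : ∀ r ∈ Set.Ioc (0:ℝ) a, 0 < s r := by
    intro r hr
    have := hmono_sa (Set.left_mem_Icc.2 ha.le) ⟨hr.1.le, hr.2⟩ hr.1
    rwa [hs0] at this
  have hdpos : ∀ r ∈ Set.Ioc (0:ℝ) a, 0 < deriv u r := by
    intro r hr
    by_contra h
    push_neg at h
    have : s r ≤ 0 := div_nonpos_of_nonpos_of_nonneg h (hden r).le
    linarith [hspos r hr]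
  have humono : StrictMonoOn u (Set.Icc 0 a) := by
    apply strictMonoOn_of_deriv_pos (convex_Icc _ _) hu.continuous.continuousOn
    intro t ht
    rw [interior_Icc] at ht
    exact hdpos t ⟨ht.1, ht.2.le⟩
  have hugt : ∀ r ∈ Set.Ioc (0:ℝ) a, u₀ < u r := by
    intro r hr
    have := humono (Set.left_mem_Icc.2 ha.le) ⟨hr.1.le, hr.2⟩ hr.1
    rwa [hu0] at this
  -- lower bound for s : s r > κ u₀ r on (0,a]
  have hslow : ∀ r ∈ Set.Ioc (0:ℝ) a, κ * u₀ * r < s r := by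
    have hg : StrictMonoOn (fun r => s r - κ * u₀ * r) (Set.Icc 0 a) := by
      apply strictMonoOn_of_deriv_pos (convex_Icc _ _)
      · exact (hscont.sub (continuous_const.mul continuous_id)).continuousOn
      · intro t ht
        rw [interior_Icc] at ht
        have hD : HasDerivAt (fun r => s r - κ * u₀ * r) (κ * u t - κ * u₀) t := by
          have h2 : HasDerivAt (fun r : ℝ => κ * u₀ * r) (κ * u₀) t := by
            simpa using (hasDerivAt_id t).const_mul (κ * u₀)
          exact (hsOde t (hIcc ht)).sub h2
        rw [hD.deriv]
        have := hugt t ⟨ht.1, ht.2.le⟩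
        nlinarith
    intro r hr
    have := hg (Set.left_mem_Icc.2 ha.le) ⟨hr.1.le, hr.2⟩ hr.1
    simp only [hs0] at this
    linarith
  have hsa : s a = Real.cos γ := hangle
  have h1 : κ * a * u₀ < Real.cos γ := by
    have := hslow a (Set.right_mem_Ioc.2 ha)
    rw [hsa] at this
    nlinarith
  have hcos1 : Real.cos γ ≤ 1 := Real.cos_le_one γ
  have hcospos : 0 < Real.cos γ := Real.cos_pos_of_mem_Ioo
    ⟨lt_of_lt_of_le (neg_neg_of_pos (by positivity)) hγ0, hγ1⟩
  have hcoslt1 : Real.cos γ < 1 := by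
    rw [← hsa, hs_def]
    have h2 : deriv u a ≤ |deriv u a| := le_abs_self _
    have h3 : |deriv u a| = Real.sqrt (deriv u a ^ 2) := (Real.sqrt_sq_eq_abs _).symm
    have h4 : Real.sqrt (deriv u a ^ 2) < Real.sqrt (1 + deriv u a ^ 2) :=
      Real.sqrt_lt_sqrt (sq_nonneg _) (by linarith)
    rw [div_lt_one (hden a)]
    linarith
  -- radii
  set R₁ := 1 / (κ * u₀) with hR₁def
  set R₂ := a / Real.cos γ with hR₂def
  have hR₁pos : 0 < R₁ := by rw [hR₁def]; positivity
  have hR₂pos : 0 < R₂ := div_pos ha hcospos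
  have haR₁ : a < R₁ := by
    rw [hR₁def, lt_div_iff₀ (mul_pos hκ hu₀pos)]
    nlinarith
  have haR₂ : a < R₂ := by
    rw [hR₂def, lt_div_iff₀ hcospos]
    nlinarith
  -- strict convexity of s and upper bound
  have hconv : StrictConvexOn ℝ (Set.Icc 0 a) s := by
    apply StrictMonoOn.strictConvexOn_of_deriv (convex_Icc _ _) hscont.continuousOn
    rw [interior_Icc]
    intro x hx y hy hxy
    rw [hsderiv x (hIcc hx), hsderiv y (hIcc hy)]
    exact mul_lt_mul_of_pos_left (humono (hIcc hx) (hIcc hy) hxy) hκ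
  have hsup : ∀ r ∈ Set.Ioo (0:ℝ) a, s r < Real.cos γ / a * r := by
    intro r hr
    have hb1 : (0:ℝ) < 1 - r / a := by
      rw [sub_pos, div_lt_one ha]; exact hr.2
    have hb2 : (0:ℝ) < r / a := div_pos hr.1 ha
    have hcomb := hconv.2 (Set.left_mem_Icc.2 ha.le) (Set.right_mem_Icc.2 ha.le)
      (ne_of_lt ha) hb1 hb2 (by ring)
    simp only [smul_eq_mul, mul_zero, zero_add, hs0, hsa] at hcomb
    have hra : r / a * a = r := div_mul_cancel₀ r ha.ne'
    rw [hra] at hcomb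
    calc s r < r / a * Real.cos γ := by linarith [hcomb]
    _ = Real.cos γ / a * r := by ring
  -- derivative comparison
  have hlow' : ∀ r ∈ Set.Ioc (0:ℝ) a,
      r / Real.sqrt (R₁ ^ 2 - r ^ 2) < deriv u r := by
    intro r hr
    have hq : 0 < R₁ ^ 2 - r ^ 2 := by nlinarith [hr.1, hr.2, haR₁]
    apply aux_psi_strictMono.lt_iff_lt.mp
    show _ / Real.sqrt (1 + _ ^ 2) < _ / Real.sqrt (1 + _ ^ 2)
    rw [aux_psi_arc hr.1.le hR₁pos (lt_of_le_of_lt hr.2 haR₁)]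
    have : r / R₁ = κ * u₀ * r := by
      rw [hR₁def]
      field_simp
    rw [this]
    exact hslow r hr
  have hhigh' : ∀ r ∈ Set.Ioo (0:ℝ) a,
      deriv u r < r / Real.sqrt (R₂ ^ 2 - r ^ 2) := by
    intro r hr
    have hq : 0 < R₂ ^ 2 - r ^ 2 := by nlinarith [hr.1, hr.2, haR₂]
    apply aux_psi_strictMono.lt_iff_lt.mp
    show _ / Real.sqrt (1 + _ ^ 2) < _ / Real.sqrt (1 + _ ^ 2)
    rw [aux_psi_arc hr.1.le hR₂pos (lt_trans hr.2 haR₂)]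
    have : r / R₂ = Real.cos γ / a * r := by
      rw [hR₂def, div_div_eq_mul_div]; ring
    rw [this]
    exact hsup r hr
  refine ⟨h1, hcos1, fun r hr => ?_⟩
  have hq₁ : ∀ t ∈ Set.Icc (0:ℝ) a, 0 < R₁ ^ 2 - t ^ 2 := by
    intro t ht; nlinarith [ht.1, ht.2, haR₁]
  have hq₂ : ∀ t ∈ Set.Icc (0:ℝ) a, 0 < R₂ ^ 2 - t ^ 2 := by
    intro t ht; nlinarith [ht.1, ht.2, haR₂]
  constructor
  · -- lower arc < u
    have hF : StrictMonoOn (fun t => u t - (u₀ + R₁ - Real.sqrt (R₁ ^ 2 - t ^ 2)))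
        (Set.Icc 0 a) := by
      apply strictMonoOn_of_deriv_pos (convex_Icc _ _)
      · apply ContinuousOn.sub hu.continuous.continuousOn
        apply ContinuousOn.sub continuousOn_const
        exact (Real.continuous_sqrt.comp (continuous_const.sub (continuous_pow 2))).continuousOn
      · intro t ht
        rw [interior_Icc] at ht
        have hD : HasDerivAt (fun t => u t - (u₀ + R₁ - Real.sqrt (R₁ ^ 2 - t ^ 2)))
            (deriv u t - t / Real.sqrt (R₁ ^ 2 - t ^ 2)) t :=
          ((hu t).hasDerivAt).sub (aux_arc_hasDerivAt u₀ R₁ t (hq₁ t (hIcc ht)))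
        rw [hD.deriv]
        have := hlow' t ⟨ht.1, ht.2.le⟩
        linarith
    have := hF (Set.left_mem_Icc.2 ha.le) ⟨hr.1.le, hr.2⟩ hr.1
    simp only [hu0] at this
    rw [show R₁ ^ 2 - 0 ^ 2 = R₁ ^ 2 by ring, Real.sqrt_sq hR₁pos.le] at this
    simp only [hR₁def] at this ⊢
    linarith
  · -- u < upper arc
    have hG : StrictMonoOn (fun t => (u₀ + R₂ - Real.sqrt (R₂ ^ 2 - t ^ 2)) - u t)
        (Set.Icc 0 a) := by
      apply strictMonoOn_of_deriv_pos (convex_Icc _ _)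
      · apply ContinuousOn.sub _ hu.continuous.continuousOn
        apply ContinuousOn.sub continuousOn_const
        exact (Real.continuous_sqrt.comp (continuous_const.sub (continuous_pow 2))).continuousOn
      · intro t ht
        rw [interior_Icc] at ht
        have hD : HasDerivAt (fun t => (u₀ + R₂ - Real.sqrt (R₂ ^ 2 - t ^ 2)) - u t)
            (t / Real.sqrt (R₂ ^ 2 - t ^ 2) - deriv u t) t :=
          (aux_arc_hasDerivAt u₀ R₂ t (hq₂ t (hIcc ht))).sub ((hu t).hasDerivAt)
        rw [hD.deriv]
        have := hhigh' t ht
        linarith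
    have := hG (Set.left_mem_Icc.2 ha.le) ⟨hr.1.le, hr.2⟩ hr.1
    simp only [hu0] at this
    rw [show R₂ ^ 2 - 0 ^ 2 = R₂ ^ 2 by ring, Real.sqrt_sq hR₂pos.le] at this
    simp only [hR₂def] at this ⊢
    linarith
end

section
/- Let u be a solution of the capillary equation on [0, a] with u(0) = u₀ > 0, u'(0) = 0 and contact angle condition sin ψ(a) = cos γ for some γ ∈ [0, π/2). Then the rise height q = u(a) − u(0) satisfies both (1/(κ u₀))(1 − √(1 − a² κ² u₀²)) < q < (a/cos γ)(1 − sin γ) and q > 2a(1 − sin γ)/(1 + √(1 + 2κ a²(1 − sin γ))). -/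
set_option maxHeartbeats 1600000 in
/-- bounds for the rise height q = u(a) − u(0):
(1/(κu₀))(1 − √(1 − a²κ²u₀²)) < q < (a/cos γ)(1 − sin γ) and
q > 2a(1 − sin γ)/(1 + √(1 + 2κa²(1 − sin γ))). -/
theorem stmt_12 (κ a u₀ γ : ℝ) (hκ : 0 < κ) (ha : 0 < a) (u : ℝ → ℝ)
    (hu : Differentiable ℝ u) (hu' : Differentiable ℝ (deriv u))
    (hode : ∀ r ∈ Set.Icc (0 : ℝ) a,
      deriv (deriv u) r = κ * u r * (1 + (deriv u r) ^ 2) ^ ((3 : ℝ) / 2))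
    (hu0 : u 0 = u₀) (hu₀pos : 0 < u₀) (hdu0 : deriv u 0 = 0)
    (hγ0 : 0 ≤ γ) (hγ1 : γ < Real.pi / 2)
    (hangle : deriv u a / Real.sqrt (1 + (deriv u a) ^ 2) = Real.cos γ) :
    (1 / (κ * u₀)) * (1 - Real.sqrt (1 - a ^ 2 * κ ^ 2 * u₀ ^ 2)) < u a - u 0 ∧
    u a - u 0 < (a / Real.cos γ) * (1 - Real.sin γ) ∧
    u a - u 0 >
      2 * a * (1 - Real.sin γ) /
        (1 + Real.sqrt (1 + 2 * κ * a ^ 2 * (1 - Real.sin γ))) := by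
  have h0a : (0:ℝ) ∈ Set.Icc (0:ℝ) a := ⟨le_refl 0, ha.le⟩
  have haa : a ∈ Set.Icc (0:ℝ) a := ⟨ha.le, le_refl a⟩
  have hSpos : ∀ r : ℝ, (0:ℝ) < 1 + deriv u r ^ 2 := fun r => by positivity
  have hsqpos : ∀ r : ℝ, 0 < Real.sqrt (1 + deriv u r ^ 2) :=
    fun r => Real.sqrt_pos.2 (hSpos r)
  have hsqsq : ∀ r : ℝ, Real.sqrt (1 + deriv u r ^ 2) ^ 2 = 1 + deriv u r ^ 2 :=
    fun r => Real.sq_sqrt (hSpos r).le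
  have hrpow : ∀ r : ℝ, (1 + deriv u r ^ 2) ^ ((3:ℝ)/2)
      = Real.sqrt (1 + deriv u r ^ 2) * (1 + deriv u r ^ 2) := by
    intro r
    rw [show (3:ℝ)/2 = 1/2 + 1 by ring, Real.rpow_add (hSpos r), Real.rpow_one,
      ← Real.sqrt_eq_rpow]
  -- derivative of r ↦ 1 + (u')²
  have hSder : ∀ x : ℝ, HasDerivAt (fun r => 1 + deriv u r ^ 2)
      (2 * deriv u x * deriv (deriv u) x) x := by
    intro x
    have h := ((hu' x).hasDerivAt).pow 2
    have h2 := h.const_add (1:ℝ)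
    refine h2.congr_deriv ?_
    push_cast
    ring
  -- derivative of r ↦ √(1 + (u')²)
  have hsqder : ∀ x : ℝ, HasDerivAt (fun r => Real.sqrt (1 + deriv u r ^ 2))
      (deriv u x * deriv (deriv u) x / Real.sqrt (1 + deriv u x ^ 2)) x := by
    intro x
    have h := (hSder x).sqrt (ne_of_gt (hSpos x))
    convert h using 1
    have := hsqpos x
    field_simp
  -- energy function is constant on [0,a]
  have hEderiv : ∀ x : ℝ, HasDerivAt
      (fun r => (Real.sqrt (1 + deriv u r ^ 2))⁻¹ + κ * u r ^ 2 / 2)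
      (-(deriv u x * deriv (deriv u) x / Real.sqrt (1 + deriv u x ^ 2)) /
          Real.sqrt (1 + deriv u x ^ 2) ^ 2 + κ * u x * deriv u x) x := by
    intro x
    have h1 := (hsqder x).inv (ne_of_gt (hsqpos x))
    have h2 : HasDerivAt (fun r => κ * u r ^ 2 / 2) (κ * u x * deriv u x) x := by
      have h3 := (((hu x).hasDerivAt).pow 2).const_mul κ
      have h4 := h3.div_const 2
      refine h4.congr_deriv ?_
      push_cast
      ring
    exact h1.add h2
  have hEzero : ∀ x ∈ Set.Icc (0:ℝ) a, HasDerivAt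
      (fun r => (Real.sqrt (1 + deriv u r ^ 2))⁻¹ + κ * u r ^ 2 / 2) 0 x := by
    intro x hx
    have h := hEderiv x
    convert h using 1
    rw [hode x hx, hrpow x]
    have hs := hsqsq x
    have hp := hsqpos x
    field_simp
    linear_combination (-(deriv u x * κ * u x)) * hs
  have hEcont : ContinuousOn
      (fun r => (Real.sqrt (1 + deriv u r ^ 2))⁻¹ + κ * u r ^ 2 / 2)
      (Set.Icc (0:ℝ) a) :=
    fun x _ => ((hEderiv x).differentiableAt.continuousAt).continuousWithinAt
  have henergy : ∀ r ∈ Set.Icc (0:ℝ) a,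
      (Real.sqrt (1 + deriv u r ^ 2))⁻¹ + κ * u r ^ 2 / 2 = 1 + κ * u₀ ^ 2 / 2 := by
    have hconst := constant_of_has_deriv_right_zero hEcont
      (fun x hx => (hEzero x ⟨hx.1, hx.2.le⟩).hasDerivWithinAt)
    intro r hr
    have h := hconst r hr
    rw [h]
    simp [hdu0, hu0]
  -- u r ² ≥ u₀²
  have husq : ∀ r ∈ Set.Icc (0:ℝ) a, u₀ ^ 2 ≤ u r ^ 2 := by
    intro r hr
    have h := henergy r hr
    have h1 : (1:ℝ) ≤ Real.sqrt (1 + deriv u r ^ 2) := by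
      have := Real.sqrt_le_sqrt (show (1:ℝ) ≤ 1 + deriv u r ^ 2 by nlinarith [sq_nonneg (deriv u r)])
      rwa [Real.sqrt_one] at this
    have h2 : (Real.sqrt (1 + deriv u r ^ 2))⁻¹ ≤ 1 := by
      rw [inv_le_one_iff₀]
      right; exact h1
    have h3 : 0 < (Real.sqrt (1 + deriv u r ^ 2))⁻¹ := inv_pos.2 (hsqpos r)
    nlinarith
  -- u is positive on [0,a]
  have hupos : ∀ r ∈ Set.Icc (0:ℝ) a, 0 < u r := by
    intro r hr
    by_contra hneg
    push_neg at hneg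
    have hrle : u r ≤ -u₀ := by nlinarith [husq r hr]
    have hiv := intermediate_value_Icc' hr.1 (hu.continuous.continuousOn)
      (show (0:ℝ) ∈ Set.Icc (u r) (u 0) by
        constructor
        · linarith
        · rw [hu0]; exact hu₀pos.le)
    obtain ⟨t, ht, hut⟩ := hiv
    have := husq t ⟨ht.1, ht.2.trans hr.2⟩
    rw [hut] at this
    nlinarith
  have huge : ∀ r ∈ Set.Icc (0:ℝ) a, u₀ ≤ u r := by
    intro r hr
    nlinarith [husq r hr, hupos r hr]
  -- second derivative positive
  have hd2pos : ∀ x ∈ Set.Icc (0:ℝ) a, 0 < deriv (deriv u) x := by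
    intro x hx
    rw [hode x hx]
    have := Real.rpow_pos_of_pos (hSpos x) ((3:ℝ)/2)
    exact mul_pos (mul_pos hκ (hupos x hx)) this
  have hdmono : StrictMonoOn (deriv u) (Set.Icc (0:ℝ) a) := by
    apply strictMonoOn_of_deriv_pos (convex_Icc 0 a) (hu'.continuous.continuousOn)
    intro x hx
    rw [interior_Icc] at hx
    exact hd2pos x ⟨hx.1.le, hx.2.le⟩
  have hdpos : ∀ r : ℝ, 0 < r → r ≤ a → 0 < deriv u r := by
    intro r h1 h2
    have := hdmono h0a ⟨h1.le, h2⟩ h1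
    rwa [hdu0] at this
  have humono : StrictMonoOn u (Set.Icc (0:ℝ) a) := by
    apply strictMonoOn_of_deriv_pos (convex_Icc 0 a) (hu.continuous.continuousOn)
    intro x hx
    rw [interior_Icc] at hx
    exact hdpos x hx.1 hx.2.le
  have hugt : ∀ r : ℝ, 0 < r → r ≤ a → u₀ < u r := by
    intro r h1 h2
    have := humono h0a ⟨h1.le, h2⟩ h1
    rwa [hu0] at this
  -- derivative of φ = u'/√(1+u'²)
  have hφder : ∀ x : ℝ, HasDerivAt (fun r => deriv u r / Real.sqrt (1 + deriv u r ^ 2))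
      (deriv (deriv u) x / (Real.sqrt (1 + deriv u x ^ 2) * (1 + deriv u x ^ 2))) x := by
    intro x
    have h := ((hu' x).hasDerivAt).div (hsqder x) (ne_of_gt (hsqpos x))
    refine h.congr_deriv ?_
    have hs := hsqsq x
    have hp := hsqpos x
    field_simp
    linear_combination (deriv (deriv u) x * deriv u x ^ 2) * hs
  have hφode : ∀ x ∈ Set.Icc (0:ℝ) a,
      HasDerivAt (fun r => deriv u r / Real.sqrt (1 + deriv u r ^ 2)) (κ * u x) x := by
    intro x hx
    have h := hφder x
    rw [hode x hx, hrpow x] at h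
    have hp := hsqpos x
    have hS := hSpos x
    convert h using 1
    field_simp
  have hφcont : Continuous (fun r => deriv u r / Real.sqrt (1 + deriv u r ^ 2)) := by
    apply Continuous.div hu'.continuous
    · exact Real.continuous_sqrt.comp (continuous_const.add (hu'.continuous.pow 2))
    · exact fun x => (hsqpos x).ne'
  -- (i) κ u₀ a < cos γ
  have hA : StrictMonoOn
      (fun r => deriv u r / Real.sqrt (1 + deriv u r ^ 2) - κ * u₀ * r)
      (Set.Icc (0:ℝ) a) := by
    apply strictMonoOn_of_deriv_pos (convex_Icc 0 a)
    · exact (hφcont.sub ((continuous_const.mul continuous_id))).continuousOn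
    · intro x hx
      rw [interior_Icc] at hx
      have h : HasDerivAt
          (fun r => deriv u r / Real.sqrt (1 + deriv u r ^ 2) - κ * u₀ * r)
          (κ * u x - κ * u₀ * 1) x :=
        (hφode x ⟨hx.1.le, hx.2.le⟩).sub ((hasDerivAt_id x).const_mul (κ * u₀))
      rw [h.deriv]
      have := hugt x hx.1 hx.2.le
      nlinarith
  have hφ0 : deriv u 0 / Real.sqrt (1 + deriv u 0 ^ 2) = 0 := by
    rw [hdu0]; simp
  have hAineq : κ * u₀ * a < Real.cos γ := by
    have h := hA h0a haa ha
    simp only [hφ0, hangle] at h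
    simp at h
    linarith [h]
  have hcos1 : Real.cos γ < 1 := by
    rw [← hangle]
    rw [div_lt_one (hsqpos a)]
    nlinarith [hsqsq a, hsqpos a]
  have hcospos : 0 < Real.cos γ := by
    apply Real.cos_pos_of_mem_Ioo
    constructor
    · have := Real.pi_pos; linarith
    · exact hγ1
  have hsinnn : 0 ≤ Real.sin γ := Real.sin_nonneg_of_nonneg_of_le_pi hγ0
    (by have := Real.pi_pos; linarith)
  -- sin γ = 1/√(1+u'(a)²)
  have hsin : Real.sin γ = (Real.sqrt (1 + deriv u a ^ 2))⁻¹ := by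
    have hpyth := Real.sin_sq_add_cos_sq γ
    rw [← hangle] at hpyth
    have hs := hsqsq a
    have hp := hsqpos a
    have h2 : Real.sin γ ^ 2 = ((Real.sqrt (1 + deriv u a ^ 2))⁻¹) ^ 2 := by
      field_simp at hpyth ⊢
      nlinarith [hpyth, hs]
    calc Real.sin γ = Real.sqrt (Real.sin γ ^ 2) := (Real.sqrt_sq hsinnn).symm
      _ = Real.sqrt (((Real.sqrt (1 + deriv u a ^ 2))⁻¹) ^ 2) := by rw [h2]
      _ = (Real.sqrt (1 + deriv u a ^ 2))⁻¹ := Real.sqrt_sq (inv_pos.2 hp).le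
  have hsinlt1 : Real.sin γ < 1 := by
    nlinarith [Real.sin_sq_add_cos_sq γ, hcospos, hsinnn]
  -- energy at a : κ (u a² − u₀²) = 2 (1 − sin γ)
  have hkey : κ * (u a ^ 2 - u₀ ^ 2) = 2 * (1 - Real.sin γ) := by
    have h := henergy a haa
    rw [← hsin] at h
    linarith
  -- strict convexity of u and chord bound
  have hconv : StrictConvexOn ℝ (Set.Icc (0:ℝ) a) u := by
    apply strictConvexOn_of_deriv2_pos (convex_Icc 0 a) (hu.continuous.continuousOn)
    intro x hx
    rw [interior_Icc] at hx
    show 0 < deriv (deriv u) x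
    exact hd2pos x ⟨hx.1.le, hx.2.le⟩
  have hchord : ∀ x ∈ Set.Ioo (0:ℝ) a, u x < u₀ + (u a - u₀) * x / a := by
    intro x hx
    have h1 : 0 < 1 - x / a := by
      have : x / a < 1 := (div_lt_one ha).2 hx.2
      linarith
    have h2 : 0 < x / a := div_pos hx.1 ha
    have h := hconv.2 h0a haa (ne_of_lt ha) h1 h2 (by ring)
    simp only [smul_eq_mul, mul_zero, zero_add] at h
    have hxa : (x / a) * a = x := by field_simp
    rw [hxa] at h
    rw [hu0] at h
    have : (1 - x / a) * u₀ + x / a * u a = u₀ + (u a - u₀) * x / a := by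
      field_simp; ring
    linarith [h, this.symm.le]
  -- (ii) 2 cos γ < κ a (u₀ + u a)
  have hB : StrictAntiOn
      (fun r => deriv u r / Real.sqrt (1 + deriv u r ^ 2) -
        (κ * u₀ * r + κ * (u a - u₀) / (2 * a) * r ^ 2))
      (Set.Icc (0:ℝ) a) := by
    apply strictAntiOn_of_deriv_neg (convex_Icc 0 a)
    · exact (hφcont.sub (((continuous_const.mul continuous_id)).add
        (continuous_const.mul (continuous_pow 2)))).continuousOn
    · intro x hx
      rw [interior_Icc] at hx
      have hpoly : HasDerivAt
          (fun r : ℝ => κ * u₀ * r + κ * (u a - u₀) / (2 * a) * r ^ 2)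
          (κ * u₀ * 1 + κ * (u a - u₀) / (2 * a) * (2 * x)) x := by
        have h1 : HasDerivAt (fun r : ℝ => κ * u₀ * r) (κ * u₀ * 1) x :=
          (hasDerivAt_id x).const_mul (κ * u₀)
        have h2 : HasDerivAt (fun r : ℝ => κ * (u a - u₀) / (2 * a) * r ^ 2)
            (κ * (u a - u₀) / (2 * a) * (2 * x)) x := by
          have := (hasDerivAt_pow 2 x).const_mul (κ * (u a - u₀) / (2 * a))
          refine this.congr_deriv ?_
          push_cast
          ring
        exact h1.add h2
      have h : HasDerivAt
          (fun r => deriv u r / Real.sqrt (1 + deriv u r ^ 2) -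
            (κ * u₀ * r + κ * (u a - u₀) / (2 * a) * r ^ 2))
          (κ * u x - (κ * u₀ * 1 + κ * (u a - u₀) / (2 * a) * (2 * x))) x :=
        (hφode x ⟨hx.1.le, hx.2.le⟩).sub hpoly
      rw [h.deriv]
      have hc := hchord x hx
      have hane : a ≠ 0 := ha.ne'
      have hlt : κ * u x < κ * (u₀ + (u a - u₀) * x / a) :=
        (mul_lt_mul_iff_right₀ hκ).2 hc
      have hexp : κ * u₀ * 1 + κ * (u a - u₀) / (2 * a) * (2 * x)
          = κ * (u₀ + (u a - u₀) * x / a) := by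
        field_simp
      nlinarith [hlt, hexp]
  have hBineq : 2 * Real.cos γ < κ * a * (u₀ + u a) := by
    have h := hB h0a haa ha
    simp only [hφ0, hangle] at h
    simp at h
    have hane : a ≠ 0 := ha.ne'
    have hsimp : κ * u₀ * a + κ * (u a - u₀) / (2 * a) * a ^ 2
        = κ * a * (u₀ + u a) / 2 := by field_simp; ring
    nlinarith [h, hsimp]
  have hκu0a : κ * u₀ * a < 1 := lt_trans hAineq hcos1
  -- Bound 1 : comparison with circular arc
  have hApos : ∀ x : ℝ, 0 < x → x ≤ a →
      κ * u₀ * x < deriv u x / Real.sqrt (1 + deriv u x ^ 2) := by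
    intro x h1 h2
    have h := hA h0a ⟨h1.le, h2⟩ h1
    simp only [hφ0] at h
    simp at h
    linarith [h]
  have hC : StrictMonoOn
      (fun r => u r + Real.sqrt (1 - (κ * u₀ * r) ^ 2) / (κ * u₀))
      (Set.Icc (0:ℝ) a) := by
    apply strictMonoOn_of_deriv_pos (convex_Icc 0 a)
    · apply ContinuousOn.add (hu.continuous.continuousOn)
      apply ContinuousOn.div_const
      exact (Real.continuous_sqrt.comp (continuous_const.sub
        ((continuous_const.mul continuous_id).pow 2))).continuousOn
    · intro x hx
      rw [interior_Icc] at hx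
      have hm1 : κ * u₀ * x < 1 := by
        have : κ * u₀ * x < κ * u₀ * a := by
          have := mul_pos hκ hu₀pos
          nlinarith [hx.2]
        linarith
      have hmpos : 0 < κ * u₀ * x := by
        have := mul_pos hκ hu₀pos
        nlinarith [hx.1]
      have hgpos : 0 < 1 - (κ * u₀ * x) ^ 2 := by nlinarith
      have hgder : HasDerivAt (fun r => 1 - (κ * u₀ * r) ^ 2)
          (-(2 * (κ * u₀) ^ 2 * x)) x := by
        have h := (((hasDerivAt_id x).const_mul (κ * u₀)).pow 2).const_sub 1
        refine h.congr_deriv ?_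
        simp only [id_eq, pow_one, mul_one]
        ring
      have hsq := hgder.sqrt (ne_of_gt hgpos)
      have hder := ((hu x).hasDerivAt).add (hsq.div_const (κ * u₀))
      rw [HasDerivAt.deriv (f := fun r => u r + Real.sqrt (1 - (κ * u₀ * r) ^ 2) / (κ * u₀)) hder]
      have hgsq : Real.sqrt (1 - (κ * u₀ * x) ^ 2) ^ 2 = 1 - (κ * u₀ * x) ^ 2 :=
        Real.sq_sqrt hgpos.le
      have hgsqpos : 0 < Real.sqrt (1 - (κ * u₀ * x) ^ 2) := Real.sqrt_pos.2 hgpos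
      have hφx := hApos x hx.1 hx.2.le
      have hdx := hdpos x hx.1 hx.2.le
      have hsx := hsqpos x
      have hssx := hsqsq x
      -- u' x √g > κ u₀ x
      have hms : κ * u₀ * x * Real.sqrt (1 + deriv u x ^ 2) < deriv u x := by
        rw [lt_div_iff₀ hsx] at hφx
        linarith
      have hd2 : (κ * u₀ * x) ^ 2 * (1 + deriv u x ^ 2) < deriv u x ^ 2 := by
        have h1 : 0 < deriv u x - κ * u₀ * x * Real.sqrt (1 + deriv u x ^ 2) := by
          linarith
        have h2 : 0 < deriv u x + κ * u₀ * x * Real.sqrt (1 + deriv u x ^ 2) := by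
          have := mul_pos hmpos hsx
          linarith
        have hssx' : (κ * u₀ * x) ^ 2 * Real.sqrt (1 + deriv u x ^ 2) ^ 2
            = (κ * u₀ * x) ^ 2 * (1 + deriv u x ^ 2) := by rw [hssx]
        nlinarith [mul_pos h1 h2, hssx']
      have hmain : κ * u₀ * x < deriv u x * Real.sqrt (1 - (κ * u₀ * x) ^ 2) := by
        nlinarith [hd2, hgsq, hgsqpos, hdx, hmpos,
          mul_pos hdx hgsqpos, sq_nonneg (deriv u x * Real.sqrt (1 - (κ * u₀ * x) ^ 2) - κ * u₀ * x)]
      have hκu : 0 < κ * u₀ := mul_pos hκ hu₀pos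
      have : deriv u x + -(2 * (κ * u₀) ^ 2 * x) / (2 * Real.sqrt (1 - (κ * u₀ * x) ^ 2)) / (κ * u₀)
          = deriv u x - κ * u₀ * x / Real.sqrt (1 - (κ * u₀ * x) ^ 2) := by
        field_simp
        ring
      rw [this]
      rw [sub_pos, div_lt_iff₀ hgsqpos]
      linarith [hmain]
  refine ⟨?_, ?_, ?_⟩
  · -- first bound
    have h : u 0 + Real.sqrt (1 - (κ * u₀ * 0) ^ 2) / (κ * u₀) <
        u a + Real.sqrt (1 - (κ * u₀ * a) ^ 2) / (κ * u₀) := hC h0a haa ha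
    have h0 : (1:ℝ) - (κ * u₀ * 0) ^ 2 = 1 := by ring
    rw [h0, Real.sqrt_one] at h
    rw [show (1:ℝ) - a ^ 2 * κ ^ 2 * u₀ ^ 2 = 1 - (κ * u₀ * a) ^ 2 by ring]
    have hexp : 1 / (κ * u₀) * (1 - Real.sqrt (1 - (κ * u₀ * a) ^ 2))
        = 1 / (κ * u₀) - Real.sqrt (1 - (κ * u₀ * a) ^ 2) / (κ * u₀) := by
      ring
    rw [hexp]
    linarith [h]
  · -- second bound
    rw [hu0, div_mul_eq_mul_div, lt_div_iff₀ hcospos]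
    have hq : 0 < u a - u₀ := by linarith [hugt a ha le_rfl]
    have hkey3 : a * (κ * (u a ^ 2 - u₀ ^ 2)) = a * (2 * (1 - Real.sin γ)) := by
      rw [hkey]
    nlinarith [hkey3, hq, mul_lt_mul_of_pos_left hBineq hq]
  · -- third bound
    rw [gt_iff_lt, hu0]
    set s := Real.sin γ with hs_def
    have h1s : 0 < 1 - s := by linarith [hsinlt1]
    have hsarg : (0:ℝ) ≤ 1 + 2 * κ * a ^ 2 * (1 - s) := by
      nlinarith [mul_pos (mul_pos hκ (pow_pos ha 2)) h1s]
    set R := Real.sqrt (1 + 2 * κ * a ^ 2 * (1 - s)) with hR_def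
    have hR2 : R ^ 2 = 1 + 2 * κ * a ^ 2 * (1 - s) := Real.sq_sqrt hsarg
    have hRpos : 0 < R := Real.sqrt_pos.2
      (by nlinarith [mul_pos (mul_pos hκ (pow_pos ha 2)) h1s])
    have h1R : 0 < 1 + R := by linarith
    rw [div_lt_iff₀ h1R]
    have hq : 0 < u a - u₀ := by linarith [hugt a ha le_rfl]
    have hXpos : 0 < κ * a * (u a + u₀) := by
      have h1 := hugt a ha le_rfl
      have h2 : 0 < u a + u₀ := by linarith
      positivity
    have hkey2 : κ * a ^ 2 * (κ * (u a ^ 2 - u₀ ^ 2)) = κ * a ^ 2 * (2 * (1 - s)) := by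
      rw [hkey]
    have hpos2 : 0 < 2 - 2 * (κ * u₀ * a) := by linarith [hκu0a]
    have hstep : (κ * a * (u a + u₀) - 1) ^ 2 < R ^ 2 := by
      nlinarith [hR2, hkey2, mul_pos hXpos hpos2]
    have hfin : κ * a * (u a + u₀) < 1 + R := by nlinarith [hstep, hRpos, hXpos]
    have hkey3 : a * (κ * (u a ^ 2 - u₀ ^ 2)) = a * (2 * (1 - s)) := by rw [hkey]
    nlinarith [hkey3, mul_lt_mul_of_pos_left hfin hq]
end

section
/- (Laplace-type estimate of the center height) Let u be a solution of the capillary equation on [0, a] with u(0) = u₀ > 0, u'(0) = 0 and contact angle condition sin ψ(a) = cos γ for some γ ∈ [0, π/2). Then cos γ/(a κ) − a/cos γ + (a tan γ)/2 + (a/(2 cos² γ))(π/2 − γ) < u₀ < cos γ/(a κ). -/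
open Real Set intervalIntegral


lemma sqrt1add_pos (x : ℝ) : 0 < Real.sqrt (1 + x ^ 2) := Real.sqrt_pos.2 (by positivity)

lemma sq_sqrt1add (x : ℝ) : Real.sqrt (1 + x ^ 2) ^ 2 = 1 + x ^ 2 := Real.sq_sqrt (by positivity)

lemma q_lt_one (x : ℝ) : x / Real.sqrt (1 + x ^ 2) < 1 := by
  rw [div_lt_one (sqrt1add_pos x)]
  nlinarith [sq_sqrt1add x, sqrt1add_pos x, sq_nonneg (x - Real.sqrt (1 + x ^ 2)), sq_nonneg x]

lemma sqrt1sub_pos {m : ℝ} (hm0 : 0 ≤ m) (hm : m < 1) : 0 < Real.sqrt (1 - m ^ 2) :=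
  Real.sqrt_pos.2 (by nlinarith)

lemma sq_sqrt1sub {m : ℝ} (hm0 : 0 ≤ m) (hm : m < 1) : Real.sqrt (1 - m ^ 2) ^ 2 = 1 - m ^ 2 :=
  Real.sq_sqrt (by nlinarith)

lemma aux_le {x m : ℝ} (hx : 0 ≤ x) (hm : m < 1)
    (h : x / Real.sqrt (1 + x ^ 2) ≤ m) : x ≤ m / Real.sqrt (1 - m ^ 2) := by
  have hs := sqrt1add_pos x
  have hm0 : 0 ≤ m := le_trans (by positivity) h
  have h1 : x ≤ m * Real.sqrt (1 + x ^ 2) := (div_le_iff₀ hs).1 h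
  have h2 : x ^ 2 ≤ m ^ 2 * (1 + x ^ 2) := by nlinarith [sq_sqrt1add x]
  have ht := sqrt1sub_pos hm0 hm
  rw [le_div_iff₀ ht]
  nlinarith [sq_sqrt1sub hm0 hm, mul_nonneg hx ht.le]

lemma aux_lt {x m : ℝ} (hx : 0 ≤ x) (hm : m < 1)
    (h : x / Real.sqrt (1 + x ^ 2) < m) : x < m / Real.sqrt (1 - m ^ 2) := by
  have hs := sqrt1add_pos x
  have hm0 : 0 ≤ m := le_trans (by positivity) h.le
  have h1 : x < m * Real.sqrt (1 + x ^ 2) := (div_lt_iff₀ hs).1 h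
  have h2 : x ^ 2 < m ^ 2 * (1 + x ^ 2) := by nlinarith [sq_sqrt1add x]
  have ht := sqrt1sub_pos hm0 hm
  rw [lt_div_iff₀ ht]
  nlinarith [sq_sqrt1sub hm0 hm, mul_nonneg hx ht.le]

lemma aux_eq {x m : ℝ} (hx : 0 ≤ x) (hm : m < 1)
    (h : x / Real.sqrt (1 + x ^ 2) = m) : x = m / Real.sqrt (1 - m ^ 2) := by
  have hs := sqrt1add_pos x
  have hm0 : 0 ≤ m := h ▸ (by positivity)
  have h1 : x = m * Real.sqrt (1 + x ^ 2) := by field_simp at h; linarith [h]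
  have h2 : x ^ 2 = m ^ 2 * (1 + x ^ 2) := by nlinarith [sq_sqrt1add x]
  have ht := sqrt1sub_pos hm0 hm
  rw [eq_div_iff ht.ne']
  nlinarith [sq_sqrt1sub hm0 hm, mul_nonneg hx ht.le]

lemma hasDerivAt_q (x : ℝ) :
    HasDerivAt (fun y : ℝ => y / Real.sqrt (1 + y ^ 2)) (((1 + x ^ 2) ^ ((3:ℝ)/2))⁻¹) x := by
  have hs := sqrt1add_pos x
  have h1 : HasDerivAt (fun y : ℝ => 1 + y ^ 2) (2 * x) x := by
    simpa using ((hasDerivAt_pow 2 x).const_add 1)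
  have h2 : HasDerivAt (fun y : ℝ => Real.sqrt (1 + y ^ 2)) (2 * x / (2 * Real.sqrt (1 + x ^ 2))) x :=
    h1.sqrt (by positivity)
  have h3 := (hasDerivAt_id x).div h2 hs.ne'
  convert h3 using 1
  · rfl
  · rfl
  · rfl
  have hrw : (1 + x ^ 2) ^ ((3:ℝ)/2) = Real.sqrt (1 + x ^ 2) ^ 3 := by
    rw [show ((3:ℝ)/2) = (1/2) * (3:ℕ) by push_cast; ring, Real.rpow_mul (by positivity),
      Real.rpow_natCast, ← Real.rpow_natCast (_ ^ (1/2 : ℝ)), ← Real.rpow_natCast, Real.sqrt_eq_rpow]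
    norm_cast
  have h4 := sq_sqrt1add x
  rw [hrw]
  have hs' : Real.sqrt (1 + x ^ 2) ≠ 0 := hs.ne'
  simp only [id]
  field_simp
  ring_nf
  linear_combination (-1) * h4


lemma deriv_nonneg_on {κ a u₀ : ℝ} (hκ : 0 < κ) (ha : 0 < a) {u : ℝ → ℝ}
    (hu : Differentiable ℝ u) (hu' : Differentiable ℝ (deriv u))
    (hode : ∀ r ∈ Set.Icc (0:ℝ) a,
      deriv (deriv u) r = κ * u r * (1 + (deriv u r) ^ 2) ^ ((3:ℝ)/2))
    (hu0 : u 0 = u₀) (hu₀pos : 0 < u₀) (hdu0 : deriv u 0 = 0) :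
    ∀ r ∈ Set.Icc (0:ℝ) a, 0 ≤ deriv u r := by
  have hvc : Continuous (deriv u) := hu'.continuous
  have hexprc : Continuous fun r : ℝ => κ * u r * (1 + deriv u r ^ 2) ^ ((3:ℝ)/2) :=
    (continuous_const.mul hu.continuous).mul
      ((continuous_const.add (hvc.pow 2)).rpow_const fun x => Or.inr (by norm_num))
  have hwc : ContinuousOn (deriv (deriv u)) (Icc 0 a) :=
    hexprc.continuousOn.congr hode
  by_contra hcon
  push_neg at hcon
  obtain ⟨x₀, hx₀, hx₀v⟩ := hcon
  set B : Set ℝ := {r | r ∈ Icc (0:ℝ) a ∧ deriv u r < 0} with hBdef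
  have hBne : B.Nonempty := ⟨x₀, hx₀, hx₀v⟩
  have hBbd : BddBelow B := ⟨0, fun r hr => hr.1.1⟩
  set b := sInf B with hbdef
  have hbcl : b ∈ closure B := csInf_mem_closure hBne hBbd
  have hBsub : B ⊆ Icc (0:ℝ) a := fun r hr => hr.1
  have hbIcc : b ∈ Icc (0:ℝ) a :=
    (isClosed_Icc.closure_subset_iff.2 hBsub) hbcl
  have hvb_le : deriv u b ≤ 0 := by
    have h1 : closure B ⊆ {r | deriv u r ≤ 0} :=
      closure_minimal (fun r hr => hr.2.le) (isClosed_le hvc continuous_const)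
    exact h1 hbcl
  have hvlt : ∀ r ∈ Icc (0:ℝ) a, r < b → 0 ≤ deriv u r := by
    intro r hr hrb
    by_contra h
    exact absurd (csInf_le hBbd ⟨hr, lt_of_not_ge h⟩) (not_le.2 hrb)
  -- v b = 0
  have hvb : deriv u b = 0 := by
    rcases eq_or_lt_of_le hbIcc.1 with h0 | h0
    · rw [← h0]; exact hdu0
    · refine le_antisymm hvb_le ?_
      have htend : Filter.Tendsto (deriv u) (nhdsWithin b (Iio b)) (nhds (deriv u b)) :=
        (hvc.continuousAt).continuousWithinAt.tendsto
      refine ge_of_tendsto htend ?_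
      filter_upwards [Ioo_mem_nhdsLT h0] with r hr
      exact hvlt r ⟨hr.1.le, hr.2.le.trans hbIcc.2⟩ hr.2
  -- v ≥ 0 on [0, b], so u monotone there, u b ≥ u₀
  have hvnnb : ∀ r ∈ Icc (0:ℝ) b, 0 ≤ deriv u r := by
    intro r hr
    rcases eq_or_lt_of_le hr.2 with h | h
    · rw [h, hvb]
    · exact hvlt r ⟨hr.1, hr.2.trans hbIcc.2⟩ h
  have humono : MonotoneOn u (Icc (0:ℝ) b) :=
    monotoneOn_of_deriv_nonneg (convex_Icc 0 b) hu.continuous.continuousOn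
      hu.differentiableOn (fun x hx => by
        rw [interior_Icc] at hx; exact hvnnb x ⟨hx.1.le, hx.2.le⟩)
  have hub : u₀ ≤ u b := by
    rw [← hu0]
    exact humono ⟨le_rfl, hbIcc.1⟩ ⟨hbIcc.1, le_rfl⟩ hbIcc.1
  have hwb : 0 < deriv (deriv u) b := by
    rw [hode b hbIcc]
    have : (0:ℝ) < u b := lt_of_lt_of_le hu₀pos hub
    positivity
  -- b ∉ B (since v b = 0)
  have hbnB : b ∉ B := fun h => absurd hvb (ne_of_lt h.2)
  -- b < a
  have hba : b < a := by
    rcases eq_or_lt_of_le hbIcc.2 with h | h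
    · exfalso
      obtain ⟨x, hxB⟩ := hBne
      have hx1 : b ≤ x := csInf_le hBbd hxB
      have hx2 : x ≤ a := hxB.1.2
      have : x = b := le_antisymm (h ▸ hx2) hx1
      exact hbnB (this ▸ hxB)
    · exact h
  -- find δ > 0 with w > 0 on [b, b+δ] ∩ Icc 0 a
  have hwcb : ContinuousWithinAt (deriv (deriv u)) (Icc 0 a) b := hwc b hbIcc
  have hev : {r | 0 < deriv (deriv u) r} ∈ nhdsWithin b (Icc 0 a) :=
    hwcb (Ioi_mem_nhds hwb)
  rw [Metric.mem_nhdsWithin_iff] at hev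
  obtain ⟨ε, hε, hball⟩ := hev
  set δ := min (ε / 2) (a - b) with hδdef
  have hδpos : 0 < δ := lt_min (by linarith) (by linarith)
  have hsub : Icc b (b + δ) ⊆ Icc (0:ℝ) a := by
    intro r hr
    constructor
    · linarith [hbIcc.1, hr.1]
    · have : δ ≤ a - b := min_le_right _ _
      linarith [hr.2]
  have hwpos : ∀ r ∈ Icc b (b + δ), 0 < deriv (deriv u) r := by
    intro r hr
    apply hball
    constructor
    · rw [Metric.mem_ball, Real.dist_eq, abs_lt]
      have : δ ≤ ε / 2 := min_le_left _ _
      constructor <;> [linarith [hr.1]; linarith [hr.2]]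
    · exact hsub hr
  have hvsm : StrictMonoOn (deriv u) (Icc b (b + δ)) :=
    strictMonoOn_of_deriv_pos (convex_Icc _ _) hvc.continuousOn
      (fun x hx => by rw [interior_Icc] at hx; exact hwpos x ⟨hx.1.le, hx.2.le⟩)
  -- find x ∈ B with x < b + δ
  have : ∃ x ∈ B, x < b + δ := by
    by_contra h
    push_neg at h
    have : b + δ ≤ b := le_csInf hBne h
    linarith
  obtain ⟨x, hxB, hxδ⟩ := this
  have hbx : b < x := lt_of_le_of_ne (csInf_le hBbd hxB) (fun h => hbnB (h ▸ hxB))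
  have : deriv u b < deriv u x :=
    hvsm ⟨le_rfl, by linarith⟩ ⟨hbx.le, hxδ.le⟩ hbx
  rw [hvb] at this
  exact absurd hxB.2 (not_lt.2 this.le)


lemma hasDerivAt_Gfun {c a r : ℝ} (ha : 0 < a) (hc : 0 < c)
    (hm0 : 0 ≤ r * c / a) (hm1 : r * c / a < 1) :
    HasDerivAt (fun r : ℝ => a / c * (1 - Real.sqrt (1 - (r * c / a) ^ 2)))
      ((r * c / a) / Real.sqrt (1 - (r * c / a) ^ 2)) r := by
  have hin : (0:ℝ) < 1 - (r * c / a) ^ 2 := by nlinarith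
  have hlin : HasDerivAt (fun r : ℝ => r * c / a) (c / a) r := by
    simpa using ((hasDerivAt_id r).mul_const c).div_const a
  have h1 : HasDerivAt (fun r : ℝ => 1 - (r * c / a) ^ 2)
      (-(2 * (r * c / a) ^ 1 * (c / a))) r := by
    simpa using ((hlin.pow 2).const_sub 1)
  have h2 := h1.sqrt hin.ne'
  have h3 := (h2.const_sub 1).const_mul (a / c)
  convert h3 using 1
  · rfl
  · rfl
  have hspos : 0 < Real.sqrt (1 - (r * c / a) ^ 2) := Real.sqrt_pos.2 hin
  have hone : a / c * (c / a) = 1 := by field_simp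
  have hrw : a / c * -(-(2 * (r * c / a) ^ 1 * (c / a)) / (2 * Real.sqrt (1 - (r * c / a) ^ 2)))
      = (a / c * (c / a)) * ((r * c / a) / Real.sqrt (1 - (r * c / a) ^ 2)) := by ring
  rw [hrw, hone, one_mul]

lemma hasDerivAt_Ffun {t : ℝ} (h1 : -1 < t) (h2 : t < 1) :
    HasDerivAt (fun t : ℝ => (t * Real.sqrt (1 - t ^ 2) + Real.arcsin t) / 2)
      (Real.sqrt (1 - t ^ 2)) t := by
  have hin : (0:ℝ) < 1 - t ^ 2 := by nlinarith
  have ha1 : HasDerivAt (fun t : ℝ => 1 - t ^ 2) (-(2 * t ^ 1)) t := by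
    simpa using ((hasDerivAt_pow 2 t).const_sub 1)
  have ha2 := ha1.sqrt hin.ne'
  have ha3 := (hasDerivAt_id t).mul ha2
  have ha4 := Real.hasDerivAt_arcsin (by linarith : t ≠ -1) (ne_of_lt h2)
  have ha5 := (ha3.add ha4).div_const 2
  convert ha5 using 1
  · rfl
  · rfl
  · rfl
  have hsq : Real.sqrt (1 - t ^ 2) ^ 2 = 1 - t ^ 2 := Real.sq_sqrt hin.le
  have hspos : 0 < Real.sqrt (1 - t ^ 2) := Real.sqrt_pos.2 hin
  simp only [id]
  field_simp
  ring_nf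
  linear_combination hsq

lemma hasDerivAt_Psifun {c a r : ℝ} (ha : 0 < a) (hc : 0 < c)
    (hm0 : 0 ≤ r * c / a) (hm1 : r * c / a < 1) :
    HasDerivAt (fun r : ℝ => a / c * r -
        (a / c) ^ 2 * ((r * c / a * Real.sqrt (1 - (r * c / a) ^ 2)
          + Real.arcsin (r * c / a)) / 2))
      (a / c * (1 - Real.sqrt (1 - (r * c / a) ^ 2))) r := by
  have hlin : HasDerivAt (fun r : ℝ => r * c / a) (c / a) r := by
    simpa using ((hasDerivAt_id r).mul_const c).div_const a
  have hF := (hasDerivAt_Ffun (by linarith : -1 < r * c / a) hm1).comp r hlin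
  have h1 := ((hasDerivAt_id r).const_mul (a / c)).sub (hF.const_mul ((a / c) ^ 2))
  convert h1 using 1
  · rfl
  · rfl
  · rfl
  field_simp

set_option maxHeartbeats 1000000 in
/-- Laplace-type estimate of the center height:
cos γ/(aκ) − a/cos γ + (a tan γ)/2 + (a/(2cos²γ))(π/2 − γ) < u₀ < cos γ/(aκ). -/
theorem stmt_13 (κ a u₀ γ : ℝ) (hκ : 0 < κ) (ha : 0 < a) (u : ℝ → ℝ)
    (hu : Differentiable ℝ u) (hu' : Differentiable ℝ (deriv u))
    (hode : ∀ r ∈ Set.Icc (0 : ℝ) a,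
      deriv (deriv u) r = κ * u r * (1 + (deriv u r) ^ 2) ^ ((3 : ℝ) / 2))
    (hu0 : u 0 = u₀) (hu₀pos : 0 < u₀) (hdu0 : deriv u 0 = 0)
    (hγ0 : 0 ≤ γ) (hγ1 : γ < Real.pi / 2)
    (hangle : deriv u a / Real.sqrt (1 + (deriv u a) ^ 2) = Real.cos γ) :
    Real.cos γ / (a * κ) - a / Real.cos γ + a * Real.tan γ / 2 +
      (a / (2 * (Real.cos γ) ^ 2)) * (Real.pi / 2 - γ) < u₀ ∧
    u₀ < Real.cos γ / (a * κ) := by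
  have hπ := Real.pi_pos
  have hc0 : 0 < Real.cos γ := Real.cos_pos_of_mem_Ioo ⟨by linarith, hγ1⟩
  have hvc : Continuous (deriv u) := hu'.continuous
  have huc : Continuous u := hu.continuous
  have hvnn : ∀ r ∈ Icc (0:ℝ) a, 0 ≤ deriv u r :=
    deriv_nonneg_on hκ ha hu hu' hode hu0 hu₀pos hdu0
  have humono : MonotoneOn u (Icc (0:ℝ) a) :=
    monotoneOn_of_deriv_nonneg (convex_Icc 0 a) huc.continuousOn hu.differentiableOn
      (fun x hx => by rw [interior_Icc] at hx; exact hvnn x ⟨hx.1.le, hx.2.le⟩)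
  have huge : ∀ r ∈ Icc (0:ℝ) a, u₀ ≤ u r := fun r hr =>
    hu0 ▸ humono ⟨le_rfl, ha.le⟩ hr hr.1
  have hupos : ∀ r ∈ Icc (0:ℝ) a, 0 < u r := fun r hr => lt_of_lt_of_le hu₀pos (huge r hr)
  have hwpos : ∀ r ∈ Icc (0:ℝ) a, 0 < deriv (deriv u) r := by
    intro r hr; rw [hode r hr]; have := hupos r hr; positivity
  have hvsm : StrictMonoOn (deriv u) (Icc (0:ℝ) a) :=
    strictMonoOn_of_deriv_pos (convex_Icc _ _) hvc.continuousOn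
      (fun x hx => by rw [interior_Icc] at hx; exact hwpos x ⟨hx.1.le, hx.2.le⟩)
  have hvpos : ∀ r ∈ Ioc (0:ℝ) a, 0 < deriv u r := by
    intro r hr
    have := hvsm ⟨le_rfl, ha.le⟩ ⟨hr.1.le, hr.2⟩ hr.1
    rwa [hdu0] at this
  have husm : StrictMonoOn u (Icc (0:ℝ) a) :=
    strictMonoOn_of_deriv_pos (convex_Icc _ _) huc.continuousOn
      (fun x hx => by rw [interior_Icc] at hx; exact hvpos x ⟨hx.1, hx.2.le⟩)
  have hugt : ∀ r ∈ Ioc (0:ℝ) a, u₀ < u r := fun r hr =>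
    hu0 ▸ husm ⟨le_rfl, ha.le⟩ ⟨hr.1.le, hr.2⟩ hr.1
  -- f = sin ψ
  set f : ℝ → ℝ := fun r => deriv u r / Real.sqrt (1 + deriv u r ^ 2) with hfdef
  have hfder : ∀ r ∈ Icc (0:ℝ) a, HasDerivAt f (κ * u r) r := by
    intro r hr
    have h1 : HasDerivAt (deriv u) (deriv (deriv u) r) r := (hu' r).hasDerivAt
    have h2 := (hasDerivAt_q (deriv u r)).comp r h1
    have h3 : (((1 + deriv u r ^ 2) ^ ((3:ℝ)/2))⁻¹) * deriv (deriv u) r = κ * u r := by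
      rw [hode r hr]
      have hpos : (0:ℝ) < (1 + deriv u r ^ 2) ^ ((3:ℝ)/2) :=
        Real.rpow_pos_of_pos (by positivity) _
      field_simp
    rw [← h3]
    exact h2
  have hfint : ∀ s ∈ Icc (0:ℝ) a, f s = κ * ∫ r in (0:ℝ)..s, u r := by
    intro s hs
    have h1 : ∫ r in (0:ℝ)..s, κ * u r = f s - f 0 :=
      integral_eq_sub_of_hasDerivAt
        (fun x hx => hfder x (by rw [uIcc_of_le hs.1] at hx; exact ⟨hx.1, hx.2.trans hs.2⟩))
        ((continuous_const.mul huc).intervalIntegrable _ _)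
    have hf0 : f 0 = 0 := by simp [hfdef, hdu0]
    rw [hf0, sub_zero] at h1
    rw [← h1, intervalIntegral.integral_const_mul]
  have hfa : f a = Real.cos γ := hangle
  have hkey : Real.cos γ = κ * ∫ r in (0:ℝ)..a, u r := by
    rw [← hfa]; exact hfint a ⟨ha.le, le_rfl⟩
  -- upper bound
  have hintlt : a * u₀ < ∫ r in (0:ℝ)..a, u r := by
    have h := integral_lt_integral_of_continuousOn_of_le_of_exists_lt ha
      continuousOn_const huc.continuousOn
      (fun x hx => huge x ⟨hx.1.le, hx.2⟩) ⟨a, ⟨ha.le, le_rfl⟩, hugt a ⟨ha, le_rfl⟩⟩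
    simpa using h
  have hupper : u₀ < Real.cos γ / (a * κ) := by
    rw [lt_div_iff₀ (by positivity), hkey]
    calc u₀ * (a * κ) = κ * (a * u₀) := by ring
    _ < κ * ∫ r in (0:ℝ)..a, u r := mul_lt_mul_of_pos_left hintlt hκ
  -- strict convexity of f
  have hconv : ∀ s ∈ Ioo (0:ℝ) a, a * f s < s * Real.cos γ := by
    intro s hs
    have hsIcc : s ∈ Icc (0:ℝ) a := ⟨hs.1.le, hs.2.le⟩
    have e1 : ∫ r in (0:ℝ)..s, u r < s * u s := by
      have h := integral_lt_integral_of_continuousOn_of_le_of_exists_lt hs.1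
        huc.continuousOn continuousOn_const
        (fun x hx => humono ⟨hx.1.le, hx.2.trans hsIcc.2⟩ hsIcc hx.2)
        ⟨0, ⟨le_rfl, hs.1.le⟩, by rw [hu0]; exact hugt s ⟨hs.1, hs.2.le⟩⟩
      simpa using h
    have e2 : (a - s) * u s < ∫ r in s..a, u r := by
      have h := integral_lt_integral_of_continuousOn_of_le_of_exists_lt hs.2
        continuousOn_const huc.continuousOn
        (fun x hx => humono hsIcc ⟨hs.1.le.trans hx.1.le, hx.2⟩ hx.1.le)
        ⟨a, ⟨hs.2.le, le_rfl⟩, husm hsIcc ⟨ha.le, le_rfl⟩ hs.2⟩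
      simpa using h
    have e3 : (∫ r in (0:ℝ)..s, u r) + ∫ r in s..a, u r = ∫ r in (0:ℝ)..a, u r :=
      integral_add_adjacent_intervals (huc.intervalIntegrable _ _) (huc.intervalIntegrable _ _)
    have e4 : f s = κ * ∫ r in (0:ℝ)..s, u r := hfint s hsIcc
    have hs2 : 0 < a - s := by linarith [hs.2]
    have q : (a - s) * (∫ r in (0:ℝ)..s, u r) - s * (∫ r in s..a, u r) < 0 := by
      nlinarith [mul_lt_mul_of_pos_left e1 hs2, mul_lt_mul_of_pos_left e2 hs.1]
    have q2 : κ * ((a - s) * (∫ r in (0:ℝ)..s, u r) - s * (∫ r in s..a, u r)) < 0 :=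
      mul_neg_of_pos_of_neg hκ q
    have q3 : a * f s - s * Real.cos γ =
        κ * ((a - s) * (∫ r in (0:ℝ)..s, u r) - s * (∫ r in s..a, u r)) := by
      rw [e4, hkey, ← e3]; ring
    linarith [q3 ▸ q2]
  -- cos γ < 1, sin γ > 0
  have hc1 : Real.cos γ < 1 := by rw [← hangle]; exact q_lt_one _
  have hγpos : 0 < γ := by
    rcases eq_or_lt_of_le hγ0 with h | h
    · exfalso; rw [← h, Real.cos_zero] at hc1; exact lt_irrefl _ hc1
    · exact h
  have hsγ : 0 < Real.sin γ := Real.sin_pos_of_pos_of_lt_pi hγpos (by linarith)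
  -- the comparison function g
  set g : ℝ → ℝ := fun s => (s * Real.cos γ / a) / Real.sqrt (1 - (s * Real.cos γ / a) ^ 2)
    with hgdef
  have hm_mem : ∀ s ∈ Icc (0:ℝ) a, 0 ≤ s * Real.cos γ / a ∧ s * Real.cos γ / a < 1 := by
    intro s hs
    constructor
    · have := hs.1; positivity
    · have h1 : s * Real.cos γ / a ≤ Real.cos γ := by
        rw [div_le_iff₀ ha]; nlinarith [hs.2, hc0]
      linarith
  have hfs_le : ∀ s ∈ Icc (0:ℝ) a, f s ≤ s * Real.cos γ / a := by
    intro s hs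
    rcases eq_or_lt_of_le hs.1 with h0 | h0
    · have hf0 : f 0 = 0 := by simp [hfdef, hdu0]
      rw [← h0, hf0]
      norm_num
    rcases eq_or_lt_of_le hs.2 with h1 | h1
    · rw [h1, hfa, mul_comm, mul_div_assoc, div_self ha.ne', mul_one]
    · have h := hconv s ⟨h0, h1⟩
      rw [le_div_iff₀ ha]
      nlinarith
  have hvg : ∀ s ∈ Icc (0:ℝ) a, deriv u s ≤ g s := fun s hs =>
    aux_le (hvnn s hs) (hm_mem s hs).2 (hfs_le s hs)
  have hmidIcc : a / 2 ∈ Icc (0:ℝ) a := ⟨by linarith, by linarith⟩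
  have hvg_mid : deriv u (a/2) < g (a/2) := by
    apply aux_lt (hvnn _ hmidIcc) (hm_mem _ hmidIcc).2
    have h := hconv (a/2) ⟨by linarith, by linarith⟩
    show f (a/2) < a / 2 * Real.cos γ / a
    rw [lt_div_iff₀ ha]
    nlinarith
  have hgcont : ContinuousOn g (Icc (0:ℝ) a) := by
    apply ContinuousOn.div
    · fun_prop
    · fun_prop
    · intro s hs
      exact (sqrt1sub_pos (hm_mem s hs).1 (hm_mem s hs).2).ne'
  -- G = antiderivative of g
  set G : ℝ → ℝ := fun r => a / Real.cos γ * (1 - Real.sqrt (1 - (r * Real.cos γ / a) ^ 2))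
    with hGdef
  have hGder : ∀ r ∈ Icc (0:ℝ) a, HasDerivAt G (g r) r := fun r hr =>
    hasDerivAt_Gfun ha hc0 (hm_mem r hr).1 (hm_mem r hr).2
  have hG0 : G 0 = 0 := by simp [hGdef]
  have hGcont : Continuous G := by
    apply continuous_const.mul
    apply continuous_const.sub
    apply Real.continuous_sqrt.comp
    fun_prop
  have hGeq : ∀ r ∈ Icc (0:ℝ) a, G r = ∫ s in (0:ℝ)..r, g s := by
    intro r hr
    have h := integral_eq_sub_of_hasDerivAt (f := G) (f' := g)
      (fun x hx => hGder x (by rw [uIcc_of_le hr.1] at hx; exact ⟨hx.1, hx.2.trans hr.2⟩))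
      ((hgcont.mono (by rw [uIcc_of_le hr.1]; exact Icc_subset_Icc le_rfl hr.2)).intervalIntegrable)
    rw [h, hG0, sub_zero]
  have hule : ∀ r ∈ Icc (0:ℝ) a, u r - u₀ ≤ G r := by
    intro r hr
    have hur : ∫ s in (0:ℝ)..r, deriv u s = u r - u 0 :=
      integral_eq_sub_of_hasDerivAt (fun x _ => (hu x).hasDerivAt)
        (hvc.intervalIntegrable _ _)
    rw [hu0] at hur
    rw [hGeq r hr, ← hur]
    apply intervalIntegral.integral_mono_on hr.1 (hvc.intervalIntegrable _ _)
      ((hgcont.mono (Icc_subset_Icc le_rfl hr.2)).intervalIntegrable_of_Icc hr.1)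
    intro x hx
    exact hvg x ⟨hx.1, hx.2.trans hr.2⟩
  have hult : u a - u₀ < G a := by
    have hur : ∫ s in (0:ℝ)..a, deriv u s = u a - u 0 :=
      integral_eq_sub_of_hasDerivAt (fun x _ => (hu x).hasDerivAt)
        (hvc.intervalIntegrable _ _)
    rw [hu0] at hur
    rw [hGeq a ⟨ha.le, le_rfl⟩, ← hur]
    exact integral_lt_integral_of_continuousOn_of_le_of_exists_lt ha
      hvc.continuousOn hgcont (fun x hx => hvg x ⟨hx.1.le, hx.2⟩)
      ⟨a/2, hmidIcc, hvg_mid⟩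
  have hfinal : (∫ r in (0:ℝ)..a, (u r - u₀)) < ∫ r in (0:ℝ)..a, G r :=
    integral_lt_integral_of_continuousOn_of_le_of_exists_lt ha
      (huc.sub continuous_const).continuousOn hGcont.continuousOn
      (fun x hx => hule x ⟨hx.1.le, hx.2⟩) ⟨a, ⟨ha.le, le_rfl⟩, hult⟩
  -- evaluate LHS
  have hintu : (∫ r in (0:ℝ)..a, u r) = Real.cos γ / κ := by
    rw [eq_div_iff hκ.ne']; linarith [hkey]
  have lhs_eq : (∫ r in (0:ℝ)..a, (u r - u₀)) = Real.cos γ / κ - a * u₀ := by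
    rw [intervalIntegral.integral_sub (huc.intervalIntegrable _ _)
      intervalIntegrable_const, hintu]
    simp
  -- evaluate RHS via the antiderivative Ψ
  set Ψ : ℝ → ℝ := fun r => a / Real.cos γ * r -
      (a / Real.cos γ) ^ 2 * ((r * Real.cos γ / a * Real.sqrt (1 - (r * Real.cos γ / a) ^ 2)
        + Real.arcsin (r * Real.cos γ / a)) / 2) with hΨdef
  have hΨder : ∀ r ∈ Icc (0:ℝ) a, HasDerivAt Ψ (G r) r := fun r hr =>
    hasDerivAt_Psifun ha hc0 (hm_mem r hr).1 (hm_mem r hr).2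
  have rhs_int : (∫ r in (0:ℝ)..a, G r) = Ψ a - Ψ 0 :=
    integral_eq_sub_of_hasDerivAt
      (fun x hx => hΨder x (by rwa [uIcc_of_le ha.le] at hx))
      (hGcont.intervalIntegrable _ _)
  have hsin_eq : Real.sqrt (1 - Real.cos γ ^ 2) = Real.sin γ := by
    rw [show (1:ℝ) - Real.cos γ ^ 2 = Real.sin γ ^ 2 by
      have := Real.sin_sq_add_cos_sq γ; linarith]
    exact Real.sqrt_sq hsγ.le
  have harcsin : Real.arcsin (Real.cos γ) = Real.pi / 2 - γ := by
    rw [← Real.sin_pi_div_two_sub]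
    exact Real.arcsin_sin (by linarith) (by linarith)
  have hΨ0 : Ψ 0 = 0 := by simp [hΨdef]
  have hac : a * Real.cos γ / a = Real.cos γ := mul_div_cancel_left₀ _ ha.ne'
  have hΨa : Ψ a = a ^ 2 / Real.cos γ -
      (a / Real.cos γ) ^ 2 * ((Real.cos γ * Real.sin γ + (Real.pi / 2 - γ)) / 2) := by
    rw [hΨdef]
    simp only [hac, hsin_eq, harcsin]
    ring
  have rhs_eq : (∫ r in (0:ℝ)..a, G r) =
      a ^ 2 / Real.cos γ - a ^ 2 * Real.sin γ / (2 * Real.cos γ)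
        - a ^ 2 / (2 * Real.cos γ ^ 2) * (Real.pi / 2 - γ) := by
    rw [rhs_int, hΨa, hΨ0, sub_zero]
    field_simp
    ring
  -- conclude
  have key2 : Real.cos γ / κ - a * u₀ <
      a ^ 2 / Real.cos γ - a ^ 2 * Real.sin γ / (2 * Real.cos γ)
        - a ^ 2 / (2 * Real.cos γ ^ 2) * (Real.pi / 2 - γ) := by
    rw [← rhs_eq, ← lhs_eq]; exact hfinal
  refine ⟨?_, hupper⟩
  have hL : Real.cos γ / (a * κ) - a / Real.cos γ + a * Real.tan γ / 2 +
      (a / (2 * (Real.cos γ) ^ 2)) * (Real.pi / 2 - γ) =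
      (Real.cos γ / κ - (a ^ 2 / Real.cos γ - a ^ 2 * Real.sin γ / (2 * Real.cos γ)
        - a ^ 2 / (2 * Real.cos γ ^ 2) * (Real.pi / 2 - γ))) / a := by
    rw [Real.tan_eq_sin_div_cos]
    field_simp
    ring
  rw [hL, div_lt_iff₀ ha]
  nlinarith [key2]
end

section
/- (Meniscus estimates) Let u be a solution of the capillary equation on [0, a] with u(0) = u₀ > 0, u'(0) = 0 and contact angle condition sin ψ(a) = cos γ for some γ ∈ [0, π/2). Then for every r ∈ (0, a): (i) r² κ u₀ / (1 + √(1 − r² κ² u₀²)) < u(r) − u₀ < a/cos γ − √(a²/cos² γ − r²), and (ii) u(a) + a (sin γ/cos γ) − √(a²/cos² γ − r²) < u(r). -/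
lemma phi_mono {x y : ℝ} (hx : 0 ≤ x) (hxy : x ≤ y) :
    x / Real.sqrt (1 + x ^ 2) ≤ y / Real.sqrt (1 + y ^ 2) := by
  have hy : 0 ≤ y := hx.trans hxy
  have h1 : (0:ℝ) < Real.sqrt (1 + x ^ 2) := Real.sqrt_pos.2 (by positivity)
  have h2 : (0:ℝ) < Real.sqrt (1 + y ^ 2) := Real.sqrt_pos.2 (by positivity)
  rw [div_le_div_iff₀ h1 h2]
  have e1 : x * Real.sqrt (1 + y ^ 2) = Real.sqrt (x ^ 2 * (1 + y ^ 2)) := by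
    rw [Real.sqrt_mul (sq_nonneg x), Real.sqrt_sq hx]
  have e2 : y * Real.sqrt (1 + x ^ 2) = Real.sqrt (y ^ 2 * (1 + x ^ 2)) := by
    rw [Real.sqrt_mul (sq_nonneg y), Real.sqrt_sq hy]
  rw [e1, e2]
  apply Real.sqrt_le_sqrt
  nlinarith

lemma phi_reflect {x y : ℝ} (hx : 0 ≤ x) (hy : 0 ≤ y)
    (h : x / Real.sqrt (1 + x ^ 2) < y / Real.sqrt (1 + y ^ 2)) : x < y := by
  by_contra hle
  push_neg at hle
  exact absurd (phi_mono hy hle) (not_le.2 h)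

lemma phi_param {s : ℝ} (h0 : 0 ≤ s) (h1 : s < 1) :
    (s / Real.sqrt (1 - s ^ 2)) /
      Real.sqrt (1 + (s / Real.sqrt (1 - s ^ 2)) ^ 2) = s := by
  have hw : (0:ℝ) < Real.sqrt (1 - s ^ 2) := Real.sqrt_pos.2 (by nlinarith)
  have hw2 : Real.sqrt (1 - s ^ 2) ^ 2 = 1 - s ^ 2 := Real.sq_sqrt (by nlinarith)
  have key : 1 + (s / Real.sqrt (1 - s ^ 2)) ^ 2 = (1 / Real.sqrt (1 - s ^ 2)) ^ 2 := by
    field_simp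
    nlinarith
  rw [key, Real.sqrt_sq (by positivity)]
  field_simp

set_option maxHeartbeats 1000000 in
/-- Meniscus estimates: for every r ∈ (0, a):
(i) r²κu₀/(1 + √(1 − r²κ²u₀²)) < u(r) − u₀ < a/cos γ − √(a²/cos²γ − r²), and
(ii) u(a) + a sin γ/cos γ − √(a²/cos²γ − r²) < u(r). -/
theorem stmt_15 (κ a u₀ γ : ℝ) (hκ : 0 < κ) (ha : 0 < a) (u : ℝ → ℝ)
    (hu : Differentiable ℝ u) (hu' : Differentiable ℝ (deriv u))
    (hode : ∀ r ∈ Set.Icc (0 : ℝ) a,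
      deriv (deriv u) r = κ * u r * (1 + (deriv u r) ^ 2) ^ ((3 : ℝ) / 2))
    (hu0 : u 0 = u₀) (hu₀pos : 0 < u₀) (hdu0 : deriv u 0 = 0)
    (hγ0 : 0 ≤ γ) (hγ1 : γ < Real.pi / 2)
    (hangle : deriv u a / Real.sqrt (1 + (deriv u a) ^ 2) = Real.cos γ) :
    ∀ r ∈ Set.Ioo (0 : ℝ) a,
      (r ^ 2 * κ * u₀ / (1 + Real.sqrt (1 - r ^ 2 * κ ^ 2 * u₀ ^ 2)) < u r - u₀ ∧
       u r - u₀ < a / Real.cos γ -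
         Real.sqrt (a ^ 2 / (Real.cos γ) ^ 2 - r ^ 2)) ∧
      u a + a * (Real.sin γ / Real.cos γ) -
        Real.sqrt (a ^ 2 / (Real.cos γ) ^ 2 - r ^ 2) < u r := by
  have hπ : 0 < Real.pi := Real.pi_pos
  have hcos : 0 < Real.cos γ := Real.cos_pos_of_mem_Ioo ⟨by linarith, hγ1⟩
  have hcos1 : Real.cos γ ≤ 1 := Real.cos_le_one γ
  have hsin : 0 ≤ Real.sin γ := Real.sin_nonneg_of_nonneg_of_le_pi hγ0 (by linarith)
  have hcontu : Continuous u := hu.continuous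
  have hcontv : Continuous (deriv u) := hu'.continuous
  have hwpos : ∀ t : ℝ, (0:ℝ) < 1 + (deriv u t) ^ 2 := fun t => by positivity
  -- u is positive on [0,a]
  have hupos : ∀ t ∈ Set.Icc (0:ℝ) a, 0 < u t := by
    by_contra h
    push_neg at h
    obtain ⟨t', ht'mem, ht'⟩ := h
    set Z := {t : ℝ | t ∈ Set.Icc (0:ℝ) a ∧ u t ≤ 0} with hZdef
    have hZne : Z.Nonempty := ⟨t', ht'mem, ht'⟩
    have hZclosed : IsClosed Z := by
      have : Z = Set.Icc (0:ℝ) a ∩ {t | u t ≤ 0} := rfl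
      rw [this]
      exact isClosed_Icc.inter (isClosed_le hcontu continuous_const)
    have hZbdd : BddBelow Z := ⟨0, fun t ht => ht.1.1⟩
    set t₀ := sInf Z with ht₀def
    have ht₀Z : t₀ ∈ Z := hZclosed.csInf_mem hZne hZbdd
    have ht₀0 : 0 < t₀ := by
      rcases lt_or_eq_of_le ht₀Z.1.1 with h | h
      · exact h
      · exfalso
        rw [← h] at ht₀Z
        have h2 : u 0 ≤ 0 := ht₀Z.2
        rw [hu0] at h2
        linarith
    have hlt : ∀ t ∈ Set.Ico (0:ℝ) t₀, 0 < u t := by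
      intro t ht
      by_contra hle
      push_neg at hle
      have htZ : t ∈ Z := ⟨⟨ht.1, le_trans ht.2.le ht₀Z.1.2⟩, hle⟩
      have := csInf_le hZbdd htZ
      linarith [ht.2]
    have hvmono : StrictMonoOn (deriv u) (Set.Icc 0 t₀) := by
      apply strictMonoOn_of_deriv_pos (convex_Icc _ _) hcontv.continuousOn
      intro t ht
      rw [interior_Icc] at ht
      rw [hode t ⟨ht.1.le, le_trans ht.2.le ht₀Z.1.2⟩]
      have h1 := hlt t ⟨ht.1.le, ht.2⟩
      have h2 := hwpos t
      positivity
    have hvpos : ∀ t ∈ Set.Ioc (0:ℝ) t₀, 0 < deriv u t := by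
      intro t ht
      have := hvmono (Set.left_mem_Icc.2 ht₀0.le) ⟨ht.1.le, ht.2⟩ ht.1
      rwa [hdu0] at this
    have humono : StrictMonoOn u (Set.Icc 0 t₀) := by
      apply strictMonoOn_of_deriv_pos (convex_Icc _ _) hcontu.continuousOn
      intro t ht
      rw [interior_Icc] at ht
      exact hvpos t ⟨ht.1, ht.2.le⟩
    have : u₀ < u t₀ := by
      have := humono (Set.left_mem_Icc.2 ht₀0.le) (Set.right_mem_Icc.2 ht₀0.le) ht₀0
      rwa [hu0] at this
    linarith [ht₀Z.2]
  -- deriv u is strictly increasing, positive on (0,a]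
  have hvmono : StrictMonoOn (deriv u) (Set.Icc 0 a) := by
    apply strictMonoOn_of_deriv_pos (convex_Icc _ _) hcontv.continuousOn
    intro t ht
    rw [interior_Icc] at ht
    rw [hode t ⟨ht.1.le, ht.2.le⟩]
    have h1 := hupos t ⟨ht.1.le, ht.2.le⟩
    have h2 := hwpos t
    positivity
  have hvpos : ∀ t ∈ Set.Ioc (0:ℝ) a, 0 < deriv u t := by
    intro t ht
    have := hvmono (Set.left_mem_Icc.2 ha.le) ⟨ht.1.le, ht.2⟩ ht.1
    rwa [hdu0] at this
  have hvnn : ∀ t ∈ Set.Icc (0:ℝ) a, 0 ≤ deriv u t := by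
    intro t ht
    rcases eq_or_lt_of_le ht.1 with h | h
    · rw [← h, hdu0]
    · exact (hvpos t ⟨h, ht.2⟩).le
  have humono : StrictMonoOn u (Set.Icc 0 a) := by
    apply strictMonoOn_of_deriv_pos (convex_Icc _ _) hcontu.continuousOn
    intro t ht
    rw [interior_Icc] at ht
    exact hvpos t ⟨ht.1, ht.2.le⟩
  have hugt : ∀ t ∈ Set.Ioc (0:ℝ) a, u₀ < u t := by
    intro t ht
    have := humono (Set.left_mem_Icc.2 ha.le) ⟨ht.1.le, ht.2⟩ ht.1
    rwa [hu0] at this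
  -- the inclination function
  set φ : ℝ → ℝ := fun t => deriv u t / Real.sqrt (1 + (deriv u t) ^ 2) with hφdef
  have hsqrtpos : ∀ t : ℝ, (0:ℝ) < Real.sqrt (1 + (deriv u t) ^ 2) :=
    fun t => Real.sqrt_pos.2 (hwpos t)
  have hφcont : Continuous φ :=
    hcontv.div (((continuous_const.add (hcontv.pow 2))).sqrt)
      (fun t => (hsqrtpos t).ne')
  have hφderiv : ∀ t ∈ Set.Icc (0:ℝ) a, HasDerivAt φ (κ * u t) t := by
    intro t ht
    have hv' : HasDerivAt (deriv u) (deriv (deriv u) t) t :=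
      (hu' t).hasDerivAt
    have hsq := (hasDerivAt_const t (1:ℝ)).fun_add (hv'.fun_pow 2)
    have hsqrt := hsq.sqrt (hwpos t).ne'
    have hdiv := hv'.fun_div hsqrt (hsqrtpos t).ne'
    refine hdiv.congr_deriv ?_
    symm
    rw [hode t ht]
    have hsw : Real.sqrt (1 + (deriv u t) ^ 2) ^ 2 = 1 + (deriv u t) ^ 2 :=
      Real.sq_sqrt (hwpos t).le
    have hrpow : (1 + (deriv u t) ^ 2) ^ ((3:ℝ)/2)
        = (1 + (deriv u t) ^ 2) * Real.sqrt (1 + (deriv u t) ^ 2) := by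
      rw [show (3:ℝ)/2 = 1 + 1/2 by norm_num, Real.rpow_add (hwpos t),
        Real.rpow_one, ← Real.sqrt_eq_rpow]
    rw [hrpow]
    have h2 := hsqrtpos t
    have h3 : Real.sqrt (1 + deriv u t ^ 2) ^ 3
        = (1 + deriv u t ^ 2) * Real.sqrt (1 + deriv u t ^ 2) := by
      rw [pow_succ, hsw]
    field_simp
    linear_combination (-(2*κ*u t*deriv u t^2)) * h3
  have hφ0 : φ 0 = 0 := by simp [hφdef, hdu0]
  have hφa : φ a = Real.cos γ := hangle
  -- strict convexity of φ
  have hφconv : StrictConvexOn ℝ (Set.Icc (0:ℝ) a) φ := by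
    apply StrictMonoOn.strictConvexOn_of_deriv (convex_Icc _ _) hφcont.continuousOn
    rw [interior_Icc]
    intro x hx y hy hxy
    rw [(hφderiv x ⟨hx.1.le, hx.2.le⟩).deriv, (hφderiv y ⟨hy.1.le, hy.2.le⟩).deriv]
    exact mul_lt_mul_of_pos_left (humono ⟨hx.1.le, hx.2.le⟩ ⟨hy.1.le, hy.2.le⟩ hxy) hκ
  have hφup : ∀ t ∈ Set.Ioo (0:ℝ) a, φ t < t * Real.cos γ / a := by
    intro t ht
    have hta : 0 < t / a := div_pos ht.1 ha
    have hta1 : 0 < 1 - t / a := by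
      rw [sub_pos, div_lt_one ha]; exact ht.2
    have key := hφconv.2 (Set.left_mem_Icc.2 ha.le) (Set.right_mem_Icc.2 ha.le)
      (ne_of_lt ha) hta1 hta (by ring)
    have e1 : (1 - t / a) • (0:ℝ) + (t / a) • a = t := by
      simp only [smul_eq_mul]
      field_simp
      ring
    rw [e1, hφ0, hφa] at key
    calc φ t < (1 - t/a) • (0:ℝ) + (t/a) • Real.cos γ := key
      _ = t * Real.cos γ / a := by
        rw [smul_eq_mul, smul_eq_mul, mul_zero, zero_add]; ring
  have hφlow : ∀ t ∈ Set.Ioc (0:ℝ) a, κ * u₀ * t < φ t := by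
    intro t ht
    have hmono : StrictMonoOn (fun t => φ t - κ * u₀ * t) (Set.Icc (0:ℝ) a) := by
      have hcont2 : Continuous (fun t : ℝ => φ t - κ * u₀ * t) := by fun_prop
      apply strictMonoOn_of_deriv_pos (convex_Icc _ _) hcont2.continuousOn
      intro x hx
      rw [interior_Icc] at hx
      have hd : HasDerivAt (fun t => φ t - κ * u₀ * t) (κ * u x - κ * u₀) x := by
        have h1 := hφderiv x ⟨hx.1.le, hx.2.le⟩
        have h2 : HasDerivAt (fun t : ℝ => κ * u₀ * t) (κ * u₀) x := by
          simpa using (hasDerivAt_id x).const_mul (κ * u₀)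
        simpa using h1.fun_sub h2
      rw [hd.deriv]
      have := hugt x ⟨hx.1, hx.2.le⟩
      nlinarith
    have := hmono (Set.left_mem_Icc.2 ha.le) ⟨ht.1.le, ht.2⟩ ht.1
    simp only [hφ0] at this
    simp at this
    linarith
  have hca : κ * u₀ * a < 1 := by
    have h := hφlow a (Set.mem_Ioc.2 ⟨ha, le_refl a⟩)
    rw [hφa] at h
    linarith
  intro r hr
  obtain ⟨hr0, hra⟩ := hr
  set c := κ * u₀ with hc
  have hcpos : 0 < c := mul_pos hκ hu₀pos
  -- Lower bound
  have hlow : (1 - Real.sqrt (1 - c ^ 2 * r ^ 2)) / c < u r - u₀ := by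
    have hcontF : Continuous (fun t : ℝ =>
        u t - (1 - Real.sqrt (1 - c ^ 2 * t ^ 2)) / c) := by
      apply hcontu.sub
      apply Continuous.div_const
      exact continuous_const.sub ((continuous_const.sub
        (continuous_const.mul (continuous_pow 2))).sqrt)
    have hFmono : StrictMonoOn (fun t : ℝ =>
        u t - (1 - Real.sqrt (1 - c ^ 2 * t ^ 2)) / c) (Set.Icc 0 r) := by
      apply strictMonoOn_of_deriv_pos (convex_Icc _ _) hcontF.continuousOn
      intro t ht
      rw [interior_Icc] at ht
      have hct1 : c * t < 1 := by nlinarith [ht.1, ht.2, hca, hcpos, hra]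
      have hctnn : 0 ≤ c * t := mul_nonneg hcpos.le ht.1.le
      have h1cm : 0 < 1 - c ^ 2 * t ^ 2 := by nlinarith [hct1, hctnn]
      have hspos : 0 < Real.sqrt (1 - c ^ 2 * t ^ 2) := Real.sqrt_pos.2 h1cm
      have hin : HasDerivAt (fun s : ℝ => 1 - c ^ 2 * s ^ 2) (-(c ^ 2 * (2 * t))) t := by
        simpa using (hasDerivAt_const t (1:ℝ)).fun_sub ((hasDerivAt_pow 2 t).const_mul (c ^ 2))
      have hsb := hin.sqrt h1cm.ne'
      have hF : HasDerivAt (fun t : ℝ =>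
          u t - (1 - Real.sqrt (1 - c ^ 2 * t ^ 2)) / c)
          (deriv u t - (0 - -(c ^ 2 * (2 * t)) / (2 * Real.sqrt (1 - c ^ 2 * t ^ 2))) / c) t :=
        (hu t).hasDerivAt.sub (((hasDerivAt_const t (1:ℝ)).sub hsb).div_const c)
      rw [hF.deriv]
      have e1 : (0 - -(c ^ 2 * (2 * t)) / (2 * Real.sqrt (1 - c ^ 2 * t ^ 2))) / c
          = c * t / Real.sqrt (1 - c ^ 2 * t ^ 2) := by
        field_simp
        ring
      rw [e1]
      have hmnn : 0 ≤ c * t / Real.sqrt (1 - c ^ 2 * t ^ 2) :=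
        div_nonneg hctnn (Real.sqrt_nonneg _)
      have hΦm : (c * t / Real.sqrt (1 - c ^ 2 * t ^ 2)) /
          Real.sqrt (1 + (c * t / Real.sqrt (1 - c ^ 2 * t ^ 2)) ^ 2) = c * t := by
        have e2 : (1 : ℝ) - c ^ 2 * t ^ 2 = 1 - (c * t) ^ 2 := by ring
        rw [e2]
        exact phi_param hctnn hct1
      have hφt : c * t < φ t := by
        have := hφlow t ⟨ht.1, (ht.2.trans hra).le⟩
        linarith
      have hvt : c * t / Real.sqrt (1 - c ^ 2 * t ^ 2) < deriv u t := by
        apply phi_reflect hmnn (hvnn t ⟨ht.1.le, (ht.2.trans hra).le⟩)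
        rw [hΦm]
        exact hφt
      linarith
    have h0mem : (0:ℝ) ∈ Set.Icc (0:ℝ) r := Set.left_mem_Icc.2 hr0.le
    have hrmem : r ∈ Set.Icc (0:ℝ) r := Set.right_mem_Icc.2 hr0.le
    have := hFmono h0mem hrmem hr0
    simp only [hu0] at this
    have hF0 : u₀ - (1 - Real.sqrt (1 - c ^ 2 * 0 ^ 2)) / c = u₀ := by
      norm_num
    rw [hF0] at this
    linarith
  have hcr1 : c * r < 1 := by nlinarith [hca, hcpos, hra, hr0]
  have hcrnn : 0 ≤ c * r := mul_nonneg hcpos.le hr0.le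
  have h1cr : (0:ℝ) ≤ 1 - c ^ 2 * r ^ 2 := by nlinarith [hcr1, hcrnn]
  have hsr := Real.sq_sqrt h1cr
  have hsrnn := Real.sqrt_nonneg (1 - c ^ 2 * r ^ 2)
  have hargeq : 1 - r ^ 2 * κ ^ 2 * u₀ ^ 2 = 1 - c ^ 2 * r ^ 2 := by rw [hc]; ring
  have hlow' : r ^ 2 * κ * u₀ / (1 + Real.sqrt (1 - r ^ 2 * κ ^ 2 * u₀ ^ 2)) < u r - u₀ := by
    rw [hargeq]
    have heq : r ^ 2 * κ * u₀ / (1 + Real.sqrt (1 - c ^ 2 * r ^ 2))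
        = (1 - Real.sqrt (1 - c ^ 2 * r ^ 2)) / c := by
      rw [div_eq_div_iff (by positivity) hcpos.ne']
      linear_combination hsr - r ^ 2 * c * hc
    rw [heq]
    exact hlow
  -- Upper bounds via circle comparison
  set b := a / Real.cos γ with hbdef
  have hb : 0 < b := div_pos ha hcos
  have hab : a ≤ b := by
    rw [hbdef, le_div_iff₀ hcos]
    exact mul_le_of_le_one_right ha.le hcos1
  have hGcont : Continuous (fun t : ℝ => u t + Real.sqrt (b ^ 2 - t ^ 2)) :=
    hcontu.add ((continuous_const.sub (continuous_pow 2)).sqrt)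
  have hGanti : StrictAntiOn (fun t : ℝ => u t + Real.sqrt (b ^ 2 - t ^ 2))
      (Set.Icc 0 a) := by
    apply strictAntiOn_of_deriv_neg (convex_Icc _ _) hGcont.continuousOn
    intro t ht
    rw [interior_Icc] at ht
    have hb2 : 0 < b ^ 2 - t ^ 2 := by nlinarith [ht.1, ht.2]
    have hspos : 0 < Real.sqrt (b ^ 2 - t ^ 2) := Real.sqrt_pos.2 hb2
    have hin : HasDerivAt (fun s : ℝ => b ^ 2 - s ^ 2) (-(2 * t)) t := by
      simpa using (hasDerivAt_const t (b ^ 2)).fun_sub (hasDerivAt_pow 2 t)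
    have hsb := hin.sqrt hb2.ne'
    have hG : HasDerivAt (fun t : ℝ => u t + Real.sqrt (b ^ 2 - t ^ 2))
        (deriv u t + -(2 * t) / (2 * Real.sqrt (b ^ 2 - t ^ 2))) t :=
      (hu t).hasDerivAt.add hsb
    rw [hG.deriv]
    have e1 : -(2 * t) / (2 * Real.sqrt (b ^ 2 - t ^ 2))
        = -(t / Real.sqrt (b ^ 2 - t ^ 2)) := by
      ring
    rw [e1]
    have htb : t / b < 1 := by rw [div_lt_one hb]; linarith [ht.2]
    have hΦm : (t / Real.sqrt (b ^ 2 - t ^ 2)) /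
        Real.sqrt (1 + (t / Real.sqrt (b ^ 2 - t ^ 2)) ^ 2) = t / b := by
      have e2 : t / Real.sqrt (b ^ 2 - t ^ 2)
          = (t / b) / Real.sqrt (1 - (t / b) ^ 2) := by
        have e3 : (1 : ℝ) - (t / b) ^ 2 = (b ^ 2 - t ^ 2) / b ^ 2 := by
          field_simp
        rw [e3, Real.sqrt_div hb2.le, Real.sqrt_sq hb.le]
        field_simp
      rw [e2]
      exact phi_param (div_nonneg ht.1.le hb.le) htb
    have hφt : φ t < t / b := by
      have h1 := hφup t ht
      have e4 : t * Real.cos γ / a = t / b := by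
        rw [hbdef]; field_simp
      linarith [e4 ▸ h1]
    have hvt : deriv u t < t / Real.sqrt (b ^ 2 - t ^ 2) := by
      apply phi_reflect (hvnn t ⟨ht.1.le, ht.2.le⟩)
        (div_nonneg ht.1.le (Real.sqrt_nonneg _))
      rw [hΦm]
      exact hφt
    linarith
  have hsqarg : a ^ 2 / (Real.cos γ) ^ 2 - r ^ 2 = b ^ 2 - r ^ 2 := by
    rw [hbdef, div_pow]
  have h0mem : (0:ℝ) ∈ Set.Icc (0:ℝ) a := Set.left_mem_Icc.2 ha.le
  have hrmem : r ∈ Set.Icc (0:ℝ) a := ⟨hr0.le, hra.le⟩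
  have hamem : a ∈ Set.Icc (0:ℝ) a := Set.right_mem_Icc.2 ha.le
  have hG0r : u r + Real.sqrt (b ^ 2 - r ^ 2) < u 0 + Real.sqrt (b ^ 2 - 0 ^ 2) :=
    hGanti h0mem hrmem hr0
  have hGra : u a + Real.sqrt (b ^ 2 - a ^ 2) < u r + Real.sqrt (b ^ 2 - r ^ 2) :=
    hGanti hrmem hamem hra
  have hsqb : Real.sqrt (b ^ 2 - 0 ^ 2) = b := by
    norm_num [Real.sqrt_sq hb.le]
  have hsqba : Real.sqrt (b ^ 2 - a ^ 2) = a * (Real.sin γ / Real.cos γ) := by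
    have e5 : b ^ 2 - a ^ 2 = (a * (Real.sin γ / Real.cos γ)) ^ 2 := by
      rw [hbdef]
      field_simp
      nlinarith [Real.sin_sq_add_cos_sq γ]
    rw [e5, Real.sqrt_sq (by positivity)]
  refine ⟨⟨hlow', ?_⟩, ?_⟩
  · rw [hsqarg]
    rw [hsqb, hu0] at hG0r
    have : a / Real.cos γ = b := hbdef.symm
    linarith
  · rw [hsqarg]
    rw [hsqba] at hGra
    linarith
end
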